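/- arXiv:0802.3036 — 11 statements merged into one kernel-verified Lean document; each statement's English description precedes it below -/
import Mathlib

section
/- Let γ¹,γ²,γ³ > 0, l¹,l²,l³ > 0 and h¹_*,h²_*,h³_* ∈ ℝ. The quadratic form I_* is positive definite on E, i.e. I_*[φ] > 0 for every φ ∈ E with φ ≠ 0, if and only if one of the following conditions holds: (a) h¹_*, h²_* and h³_* are all positive; or (b) at most one of h¹_*, h²_*, h³_* is non-positive and γ¹(1 + l¹h¹_*) h²_* h³_* + γ²(1 + l²h²_*) h¹_* h³_* + γ³(1 + l³h³_*) h¹_* h²_* > 0. -/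
open MeasureTheory

section Aux

private lemma cs_aux (g : ℝ → ℝ) (t : ℝ) (ht : 0 < t)
    (h1 : IntervalIntegrable g volume 0 t)
    (h2 : IntervalIntegrable (fun s => (g s) ^ 2) volume 0 t) :
    (∫ s in (0:ℝ)..t, g s) ^ 2 ≤ t * ∫ s in (0:ℝ)..t, (g s)^2 := by
  set c : ℝ := (∫ s in (0:ℝ)..t, g s) / t with hc
  have key : 0 ≤ ∫ s in (0:ℝ)..t, (g s - c)^2 :=
    intervalIntegral.integral_nonneg ht.le (fun s _ => sq_nonneg _)
  have expand : (∫ s in (0:ℝ)..t, (g s - c)^2)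
      = (∫ s in (0:ℝ)..t, (g s)^2) - 2*c*(∫ s in (0:ℝ)..t, g s) + c^2 * t := by
    have e : ∀ s : ℝ, (g s - c)^2 = (g s)^2 - (2*c) * g s + c^2 := by intro s; ring
    simp_rw [e]
    rw [intervalIntegral.integral_add ((h2.sub (h1.const_mul (2*c)))) intervalIntegrable_const,
      intervalIntegral.integral_sub h2 (h1.const_mul (2*c)),
      intervalIntegral.integral_const_mul, intervalIntegral.integral_const]
    rw [smul_eq_mul, sub_zero]; ring
  have hc2 : c * t = ∫ s in (0:ℝ)..t, g s := by rw [hc]; field_simp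
  nlinarith [key, expand, sq_nonneg c, mul_pos ht ht]

private lemma quad_aux (g0 g1 g2 k0 k1 k2 a0 a1 a2 : ℝ)
    (hg0 : 0 < g0) (hg1 : 0 < g1) (hg2 : 0 < g2)
    (hk0 : 0 < k0) (hk1 : 0 < k1)
    (hD : 0 < g0*k1*k2 + g1*k0*k2 + g2*k0*k1)
    (he : g0*a0 + g1*a1 + g2*a2 = 0)
    (hne : a0 ≠ 0 ∨ a1 ≠ 0 ∨ a2 ≠ 0) :
    0 < g0*k0*a0^2 + g1*k1*a1^2 + g2*k2*a2^2 := by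
  have hA : 0 < g2*k0 + g0*k2 := by
    rcases le_or_gt k2 0 with hk2 | hk2
    · nlinarith [mul_nonneg (mul_nonneg hg1.le hk0.le) (neg_nonneg.mpr hk2)]
    · positivity
  have hC : 0 < g2*k1 + g1*k2 := by
    rcases le_or_gt k2 0 with hk2 | hk2
    · nlinarith [mul_nonneg (mul_nonneg hg0.le hk1.le) (neg_nonneg.mpr hk2)]
    · positivity
  have ha2 : g2*a2 = -(g0*a0 + g1*a1) := by linarith
  have key : g2^2 * (g0*k0*a0^2 + g1*k1*a1^2 + g2*k2*a2^2)
      = g2*(g0*(g2*k0+g0*k2)*a0^2 + 2*g0*g1*k2*a0*a1 + g1*(g2*k1+g1*k2)*a1^2) := by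
    have : a2 = -(g0*a0 + g1*a1)/g2 := by field_simp; linarith
    rw [this]; field_simp; ring
  by_cases ha1 : a1 = 0
  · have ha0 : a0 ≠ 0 := by
      rcases hne with h | h | h
      · exact h
      · exact absurd ha1 h
      · intro h0; apply h; have : g2*a2 = 0 := by rw [ha2, h0, ha1]; ring
        exact (mul_eq_zero.mp this).resolve_left (ne_of_gt hg2)
    have ha0sq : 0 < a0^2 := by positivity
    subst ha1
    nlinarith [key, mul_pos (mul_pos hg2 (mul_pos hg0 hA)) ha0sq, mul_pos hg2 hg2]
  · have ha1sq : 0 < a1^2 := by positivity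
    have h1 : 0 < g0*(g2*k0+g0*k2) * (g0*(g2*k0+g0*k2)*a0^2 + 2*g0*g1*k2*a0*a1 + g1*(g2*k1+g1*k2)*a1^2) := by
      nlinarith [sq_nonneg (g0*(g2*k0+g0*k2)*a0 + g0*g1*k2*a1),
        mul_pos (mul_pos (mul_pos (mul_pos hg0 hg1) hg2) hD) ha1sq]
    have h2 : 0 < g0*(g2*k0+g0*k2)*a0^2 + 2*g0*g1*k2*a0*a1 + g1*(g2*k1+g1*k2)*a1^2 := by
      nlinarith [h1, mul_pos hg0 hA]
    nlinarith [key, mul_pos hg2 h2, mul_pos hg2 hg2]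

private lemma quadform_pos (g0 g1 g2 k0 k1 k2 a0 a1 a2 : ℝ)
    (hg0 : 0 < g0) (hg1 : 0 < g1) (hg2 : 0 < g2)
    (hp01 : 0 < k0 ∨ 0 < k1) (hp02 : 0 < k0 ∨ 0 < k2) (hp12 : 0 < k1 ∨ 0 < k2)
    (hD : 0 < g0*k1*k2 + g1*k0*k2 + g2*k0*k1)
    (he : g0*a0 + g1*a1 + g2*a2 = 0)
    (hne : a0 ≠ 0 ∨ a1 ≠ 0 ∨ a2 ≠ 0) :
    0 < g0*k0*a0^2 + g1*k1*a1^2 + g2*k2*a2^2 := by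
  rcases le_or_gt k0 0 with hk0 | hk0
  · have hk1 : 0 < k1 := hp01.resolve_left (not_lt.mpr hk0)
    have hk2 : 0 < k2 := hp02.resolve_left (not_lt.mpr hk0)
    have := quad_aux g1 g2 g0 k1 k2 k0 a1 a2 a0 hg1 hg2 hg0 hk1 hk2
      (by nlinarith [hD]) (by linarith) (by tauto)
    linarith
  · rcases le_or_gt k1 0 with hk1 | hk1
    · have hk2 : 0 < k2 := hp12.resolve_left (not_lt.mpr hk1)
      have := quad_aux g2 g0 g1 k2 k0 k1 a2 a0 a1 hg2 hg0 hg1 hk2 hk0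
        (by nlinarith [hD]) (by linarith) (by tauto)
      linarith
    · exact quad_aux g0 g1 g2 k0 k1 k2 a0 a1 a2 hg0 hg1 hg2 hk0 hk1 hD he hne

private lemma Ppos_aux (g0 g1 g2 l0 l1 l2 h0 h1 h2 : ℝ)
    (hg0 : 0 < g0) (hg1 : 0 < g1) (hg2 : 0 < g2)
    (hl1 : 0 < l1) (hl2 : 0 < l2)
    (hh0 : h0 ≤ 0) (hh1 : 0 < h1) (hh2 : 0 < h2)
    (hcubic : 0 < g0*(1+l0*h0)*h1*h2 + g1*(1+l1*h1)*h0*h2 + g2*(1+l2*h2)*h0*h1) :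
    0 < 1 + l0*h0 := by
  by_contra hP
  push_neg at hP
  have e1 : 0 < 1 + l1*h1 := by nlinarith [mul_pos hl1 hh1]
  have e2 : 0 < 1 + l2*h2 := by nlinarith [mul_pos hl2 hh2]
  have t0 : g0*(1+l0*h0)*h1*h2 ≤ 0 := by nlinarith [mul_pos (mul_pos hg0 hh1) hh2]
  have t1 : g1*(1+l1*h1)*h0*h2 ≤ 0 := by nlinarith [mul_pos (mul_pos hg1 e1) hh2]
  have t2 : g2*(1+l2*h2)*h0*h1 ≤ 0 := by nlinarith [mul_pos (mul_pos hg2 e2) hh1]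
  linarith

private lemma arc_bound (lv hv a b T : ℝ) (hlv : 0 < lv) (hP : 0 < 1 + lv*hv)
    (hcs : (b - a)^2 ≤ lv * T) :
    hv/(1+lv*hv)*a^2 ≤ T + hv*b^2 := by
  rw [div_mul_eq_mul_div, div_le_iff₀ hP]
  nlinarith [sq_nonneg ((1+lv*hv)*b - a),
    mul_nonneg hP.le (by linarith : (0:ℝ) ≤ lv*T - (b-a)^2), hlv]

end Aux

/-- Membership in the space `E`: each `φⁱ` is an `H¹(0,lⁱ)` function with weak derivative
`gⁱ ∈ L²(0,lⁱ)`, and the triple satisfies the junction constraint `Σ γⁱ φⁱ(0) = 0`. -/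
def MemE (γ l : Fin 3 → ℝ) (φ g : Fin 3 → ℝ → ℝ) : Prop :=
  (∀ i, IntervalIntegrable (g i) volume 0 (l i)) ∧
  (∀ i, IntervalIntegrable (fun s => (g i s) ^ 2) volume 0 (l i)) ∧
  (∀ i, ∀ s ∈ Set.Icc (0 : ℝ) (l i), φ i s = φ i 0 + ∫ u in (0 : ℝ)..s, g i u) ∧
  (∑ i, γ i * φ i 0 = 0)

/-- The quadratic form `I_*[φ] = Σ γⁱ ( ∫ (∂ₛφⁱ)² + hⁱ_* φⁱ(lⁱ)² )`,
where `gⁱ` denotes the derivative of `φⁱ`. -/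
noncomputable def Istar (γ l h : Fin 3 → ℝ) (φ g : Fin 3 → ℝ → ℝ) : ℝ :=
  ∑ i, γ i * ((∫ s in (0 : ℝ)..(l i), (g i s) ^ 2) + h i * (φ i (l i)) ^ 2)

set_option maxHeartbeats 1000000 in
theorem stmt5 (γ l h : Fin 3 → ℝ) (hγ : ∀ i, 0 < γ i) (hl : ∀ i, 0 < l i) :
    (∀ φ g : Fin 3 → ℝ → ℝ, MemE γ l φ g →
        (∃ i, ∃ s ∈ Set.Icc (0 : ℝ) (l i), φ i s ≠ 0) → 0 < Istar γ l h φ g)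
    ↔ ((∀ i, 0 < h i) ∨
        ((∀ i j : Fin 3, i ≠ j → 0 < h i ∨ 0 < h j) ∧
          0 < γ 0 * (1 + l 0 * h 0) * h 1 * h 2 + γ 1 * (1 + l 1 * h 1) * h 0 * h 2
            + γ 2 * (1 + l 2 * h 2) * h 0 * h 1)) := by
  constructor
  · -- forward direction
    intro H
    have key : ∀ a c : Fin 3 → ℝ, (∑ i, γ i * a i = 0) →
        (∃ i, ∃ s ∈ Set.Icc (0:ℝ) (l i), a i + c i * s ≠ 0) →
        0 < ∑ i, γ i * (l i * (c i)^2 + h i * (a i + c i * l i)^2) := by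
      intro a c hsum hex
      have hm : MemE γ l (fun i s => a i + c i * s) (fun i _ => c i) := by
        refine ⟨fun i => intervalIntegrable_const, fun i => intervalIntegrable_const, ?_, ?_⟩
        · intro i s hs
          simp [intervalIntegral.integral_const]
          ring
        · simpa using hsum
      have h1 := H _ _ hm hex
      have e : Istar γ l h (fun i s => a i + c i * s) (fun i _ => c i)
          = ∑ i, γ i * (l i * (c i)^2 + h i * (a i + c i * l i)^2) := by
        unfold Istar
        refine Finset.sum_congr rfl fun i _ => ?_
        simp [intervalIntegral.integral_const]
      rw [e] at h1
      exact h1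
    have hP0 : 0 < 1 + l 0 * h 0 := by
      have hk := key (fun _ => 0) ![1,0,0] (by simp)
        ⟨0, l 0, ⟨(hl 0).le, le_rfl⟩, by simpa using (hl 0).ne'⟩
      rw [Fin.sum_univ_three] at hk
      norm_num [Matrix.cons_val_two, Matrix.tail_cons] at hk
      nlinarith [hk, mul_pos (hγ 0) (hl 0)]
    have hP1 : 0 < 1 + l 1 * h 1 := by
      have hk := key (fun _ => 0) ![0,1,0] (by simp)
        ⟨1, l 1, ⟨(hl 1).le, le_rfl⟩, by simpa using (hl 1).ne'⟩
      rw [Fin.sum_univ_three] at hk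
      norm_num [Matrix.cons_val_two, Matrix.tail_cons] at hk
      nlinarith [hk, mul_pos (hγ 1) (hl 1)]
    have hP2 : 0 < 1 + l 2 * h 2 := by
      have hk := key (fun _ => 0) ![0,0,1] (by simp)
        ⟨2, l 2, ⟨(hl 2).le, le_rfl⟩, by simpa using (hl 2).ne'⟩
      rw [Fin.sum_univ_three] at hk
      norm_num [Matrix.cons_val_two, Matrix.tail_cons] at hk
      nlinarith [hk, mul_pos (hγ 2) (hl 2)]
    have hP : ∀ i, 0 < 1 + l i * h i := by
      intro i; fin_cases i <;> assumption
    have key2 : ∀ a : Fin 3 → ℝ, (∑ i, γ i * a i = 0) → (∃ i, a i ≠ 0) →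
        0 < ∑ i, γ i * (h i/(1 + l i * h i)) * (a i)^2 := by
      rintro a hsum ⟨i, hai⟩
      have hk := key a (fun j => -(a j * h j)/(1 + l j * h j)) hsum
        ⟨i, 0, ⟨le_rfl, (hl i).le⟩, by simpa using hai⟩
      refine lt_of_lt_of_eq hk (Finset.sum_congr rfl fun j _ => ?_)
      have hPj := (hP j).ne'
      field_simp
      ring
    have key3 : ∀ a0 a1 a2 : ℝ, γ 0*a0 + γ 1*a1 + γ 2*a2 = 0 →
        (a0 ≠ 0 ∨ a1 ≠ 0 ∨ a2 ≠ 0) →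
        0 < γ 0*(h 0/(1+l 0*h 0))*a0^2 + γ 1*(h 1/(1+l 1*h 1))*a1^2
            + γ 2*(h 2/(1+l 2*h 2))*a2^2 := by
      intro a0 a1 a2 hs hne
      have hex : ∃ i, ![a0,a1,a2] i ≠ 0 := by
        rcases hne with hx|hx|hx
        exacts [⟨0, by simpa using hx⟩, ⟨1, by simpa using hx⟩, ⟨2, by simpa using hx⟩]
      have := key2 ![a0,a1,a2] (by simpa [Fin.sum_univ_three] using hs) hex
      simpa [Fin.sum_univ_three] using this
    have p01 : 0 < h 0 ∨ 0 < h 1 := by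
      by_contra hc
      push_neg at hc
      obtain ⟨h0n, h1n⟩ := hc
      have hq := key3 (γ 1) (-(γ 0)) 0 (by ring) (Or.inl (hγ 1).ne')
      have k0n : h 0/(1+l 0*h 0) ≤ 0 := div_nonpos_iff.mpr (Or.inr ⟨h0n, (hP 0).le⟩)
      have k1n : h 1/(1+l 1*h 1) ≤ 0 := div_nonpos_iff.mpr (Or.inr ⟨h1n, (hP 1).le⟩)
      nlinarith [hq, mul_nonneg (mul_nonneg (hγ 0).le (sq_nonneg (γ 1))) (neg_nonneg.mpr k0n),
        mul_nonneg (mul_nonneg (hγ 1).le (sq_nonneg (γ 0))) (neg_nonneg.mpr k1n)]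
    have p02 : 0 < h 0 ∨ 0 < h 2 := by
      by_contra hc
      push_neg at hc
      obtain ⟨h0n, h2n⟩ := hc
      have hq := key3 (γ 2) 0 (-(γ 0)) (by ring) (Or.inl (hγ 2).ne')
      have k0n : h 0/(1+l 0*h 0) ≤ 0 := div_nonpos_iff.mpr (Or.inr ⟨h0n, (hP 0).le⟩)
      have k2n : h 2/(1+l 2*h 2) ≤ 0 := div_nonpos_iff.mpr (Or.inr ⟨h2n, (hP 2).le⟩)
      nlinarith [hq, mul_nonneg (mul_nonneg (hγ 0).le (sq_nonneg (γ 2))) (neg_nonneg.mpr k0n),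
        mul_nonneg (mul_nonneg (hγ 2).le (sq_nonneg (γ 0))) (neg_nonneg.mpr k2n)]
    have p12 : 0 < h 1 ∨ 0 < h 2 := by
      by_contra hc
      push_neg at hc
      obtain ⟨h1n, h2n⟩ := hc
      have hq := key3 0 (γ 2) (-(γ 1)) (by ring) (Or.inr (Or.inl (hγ 2).ne'))
      have k1n : h 1/(1+l 1*h 1) ≤ 0 := div_nonpos_iff.mpr (Or.inr ⟨h1n, (hP 1).le⟩)
      have k2n : h 2/(1+l 2*h 2) ≤ 0 := div_nonpos_iff.mpr (Or.inr ⟨h2n, (hP 2).le⟩)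
      nlinarith [hq, mul_nonneg (mul_nonneg (hγ 1).le (sq_nonneg (γ 2))) (neg_nonneg.mpr k1n),
        mul_nonneg (mul_nonneg (hγ 2).le (sq_nonneg (γ 1))) (neg_nonneg.mpr k2n)]
    -- determinant positivity
    have hA : 0 < γ 2*(h 0/(1+l 0*h 0)) + γ 0*(h 2/(1+l 2*h 2)) := by
      have hq := key3 (γ 2) 0 (-(γ 0)) (by ring) (Or.inl (hγ 2).ne')
      nlinarith [hq, mul_pos (hγ 0) (hγ 2)]
    have hD : 0 < γ 0*(h 1/(1+l 1*h 1))*(h 2/(1+l 2*h 2))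
        + γ 1*(h 0/(1+l 0*h 0))*(h 2/(1+l 2*h 2))
        + γ 2*(h 0/(1+l 0*h 0))*(h 1/(1+l 1*h 1)) := by
      have hq := key3 (γ 1*(h 2/(1+l 2*h 2)))
        (-(γ 2*(h 0/(1+l 0*h 0)) + γ 0*(h 2/(1+l 2*h 2))))
        (γ 1*(h 0/(1+l 0*h 0)))
        (by ring) (Or.inr (Or.inl (by nlinarith [hA] : -(γ 2*(h 0/(1+l 0*h 0)) + γ 0*(h 2/(1+l 2*h 2))) ≠ 0)))
      nlinarith [hq, mul_pos (hγ 1) hA]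
    refine Or.inr ⟨?_, ?_⟩
    · intro i j hij
      fin_cases i <;> fin_cases j <;>
        first
          | exact absurd rfl hij
          | exact p01 | exact p01.symm | exact p02 | exact p02.symm
          | exact p12 | exact p12.symm
    · have hid : γ 0 * (1 + l 0 * h 0) * h 1 * h 2 + γ 1 * (1 + l 1 * h 1) * h 0 * h 2
          + γ 2 * (1 + l 2 * h 2) * h 0 * h 1
          = (γ 0*(h 1/(1+l 1*h 1))*(h 2/(1+l 2*h 2))
            + γ 1*(h 0/(1+l 0*h 0))*(h 2/(1+l 2*h 2))
            + γ 2*(h 0/(1+l 0*h 0))*(h 1/(1+l 1*h 1)))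
            * ((1+l 0*h 0)*((1+l 1*h 1)*(1+l 2*h 2))) := by
        have : 1 + h 0 * l 0 ≠ 0 := by rw [mul_comm]; exact (hP 0).ne'
        have : 1 + h 1 * l 1 ≠ 0 := by rw [mul_comm]; exact (hP 1).ne'
        have : 1 + h 2 * l 2 ≠ 0 := by rw [mul_comm]; exact (hP 2).ne'
        field_simp
      rw [hid]
      exact mul_pos hD (mul_pos (hP 0) (mul_pos (hP 1) (hP 2)))
  · -- backward direction
    intro hRHS φ g hmem hex
    have fin3cases : ∀ (iw : Fin 3) (p : Fin 3 → Prop), p iw → p 0 ∨ p 1 ∨ p 2 := by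
      intro iw p hp
      fin_cases iw
      exacts [Or.inl hp, Or.inr (Or.inl hp), Or.inr (Or.inr hp)]
    obtain ⟨hgint, hg2int, hφ, hsum0⟩ := hmem
    have hP : ∀ i, 0 < 1 + l i * h i := by
      intro i
      rcases lt_or_ge 0 (h i) with hi | hi
      · nlinarith [mul_pos (hl i) hi]
      · rcases hRHS with hall | ⟨hpair, hcub⟩
        · exact absurd (hall i) (not_lt.mpr hi)
        · fin_cases i
          · have h1 : 0 < h 1 := (hpair 0 1 (by decide)).resolve_left (not_lt.mpr hi)
            have h2 : 0 < h 2 := (hpair 0 2 (by decide)).resolve_left (not_lt.mpr hi)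
            exact Ppos_aux (γ 0) (γ 1) (γ 2) (l 0) (l 1) (l 2) (h 0) (h 1) (h 2)
              (hγ 0) (hγ 1) (hγ 2) (hl 1) (hl 2) hi h1 h2 hcub
          · have h0 : 0 < h 0 := (hpair 1 0 (by decide)).resolve_left (not_lt.mpr hi)
            have h2 : 0 < h 2 := (hpair 1 2 (by decide)).resolve_left (not_lt.mpr hi)
            exact Ppos_aux (γ 1) (γ 2) (γ 0) (l 1) (l 2) (l 0) (h 1) (h 2) (h 0)
              (hγ 1) (hγ 2) (hγ 0) (hl 2) (hl 0) hi h2 h0 (by linarith [hcub])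
          · have h0 : 0 < h 0 := (hpair 2 0 (by decide)).resolve_left (not_lt.mpr hi)
            have h1 : 0 < h 1 := (hpair 2 1 (by decide)).resolve_left (not_lt.mpr hi)
            exact Ppos_aux (γ 2) (γ 0) (γ 1) (l 2) (l 0) (l 1) (h 2) (h 0) (h 1)
              (hγ 2) (hγ 0) (hγ 1) (hl 0) (hl 1) hi h0 h1 (by linarith [hcub])
    have p01 : 0 < h 0/(1+l 0*h 0) ∨ 0 < h 1/(1+l 1*h 1) := by
      rcases hRHS with hall | ⟨hpair, _⟩
      · exact Or.inl (div_pos (hall 0) (hP 0))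
      · exact (hpair 0 1 (by decide)).imp (fun hx => div_pos hx (hP 0)) (fun hx => div_pos hx (hP 1))
    have p02 : 0 < h 0/(1+l 0*h 0) ∨ 0 < h 2/(1+l 2*h 2) := by
      rcases hRHS with hall | ⟨hpair, _⟩
      · exact Or.inl (div_pos (hall 0) (hP 0))
      · exact (hpair 0 2 (by decide)).imp (fun hx => div_pos hx (hP 0)) (fun hx => div_pos hx (hP 2))
    have p12 : 0 < h 1/(1+l 1*h 1) ∨ 0 < h 2/(1+l 2*h 2) := by
      rcases hRHS with hall | ⟨hpair, _⟩
      · exact Or.inl (div_pos (hall 1) (hP 1))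
      · exact (hpair 1 2 (by decide)).imp (fun hx => div_pos hx (hP 1)) (fun hx => div_pos hx (hP 2))
    have hD : 0 < γ 0*(h 1/(1+l 1*h 1))*(h 2/(1+l 2*h 2))
        + γ 1*(h 0/(1+l 0*h 0))*(h 2/(1+l 2*h 2))
        + γ 2*(h 0/(1+l 0*h 0))*(h 1/(1+l 1*h 1)) := by
      rcases hRHS with hall | ⟨_, hcub⟩
      · have k0 := div_pos (hall 0) (hP 0)
        have k1 := div_pos (hall 1) (hP 1)
        have k2 := div_pos (hall 2) (hP 2)
        nlinarith [mul_pos (mul_pos (hγ 0) k1) k2, mul_pos (mul_pos (hγ 1) k0) k2,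
          mul_pos (mul_pos (hγ 2) k0) k1]
      · have hid : γ 0 * (1 + l 0 * h 0) * h 1 * h 2 + γ 1 * (1 + l 1 * h 1) * h 0 * h 2
            + γ 2 * (1 + l 2 * h 2) * h 0 * h 1
            = (γ 0*(h 1/(1+l 1*h 1))*(h 2/(1+l 2*h 2))
              + γ 1*(h 0/(1+l 0*h 0))*(h 2/(1+l 2*h 2))
              + γ 2*(h 0/(1+l 0*h 0))*(h 1/(1+l 1*h 1)))
              * ((1+l 0*h 0)*((1+l 1*h 1)*(1+l 2*h 2))) := by
          have := (hP 0).ne'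
          have := (hP 1).ne'
          have := (hP 2).ne'
          have : 1 + h 0 * l 0 ≠ 0 := by rw [mul_comm]; exact (hP 0).ne'
          have : 1 + h 1 * l 1 ≠ 0 := by rw [mul_comm]; exact (hP 1).ne'
          have : 1 + h 2 * l 2 ≠ 0 := by rw [mul_comm]; exact (hP 2).ne'
          field_simp
        rw [hid] at hcub
        have hPP : 0 < (1+l 0*h 0)*((1+l 1*h 1)*(1+l 2*h 2)) :=
          mul_pos (hP 0) (mul_pos (hP 1) (hP 2))
        nlinarith [hcub, hPP]
    have key3 : ∀ a0 a1 a2 : ℝ, γ 0*a0 + γ 1*a1 + γ 2*a2 = 0 →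
        (a0 ≠ 0 ∨ a1 ≠ 0 ∨ a2 ≠ 0) →
        0 < γ 0*(h 0/(1+l 0*h 0))*a0^2 + γ 1*(h 1/(1+l 1*h 1))*a1^2
            + γ 2*(h 2/(1+l 2*h 2))*a2^2 :=
      fun a0 a1 a2 he hne => quadform_pos (γ 0) (γ 1) (γ 2) _ _ _ a0 a1 a2
        (hγ 0) (hγ 1) (hγ 2) p01 p02 p12 hD he hne
    -- analysis
    have hb : ∀ i, φ i (l i) - φ i 0 = ∫ u in (0:ℝ)..(l i), g i u := by
      intro i
      have := hφ i (l i) ⟨(hl i).le, le_rfl⟩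
      linarith [this]
    have hcs : ∀ i, (φ i (l i) - φ i 0)^2 ≤ l i * ∫ s in (0:ℝ)..(l i), (g i s)^2 := by
      intro i
      rw [hb i]
      exact cs_aux (g i) (l i) (hl i) (hgint i) (hg2int i)
    have hTnn : ∀ i, 0 ≤ ∫ s in (0:ℝ)..(l i), (g i s)^2 :=
      fun i => intervalIntegral.integral_nonneg (hl i).le (fun s _ => sq_nonneg _)
    have hsum3 : γ 0 * φ 0 0 + γ 1 * φ 1 0 + γ 2 * φ 2 0 = 0 := by
      rw [Fin.sum_univ_three] at hsum0; exact hsum0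
    unfold Istar
    rw [Fin.sum_univ_three]
    by_cases hA : ∃ i, φ i 0 ≠ 0
    · obtain ⟨iw, hiw⟩ := hA
      have bound : ∀ i, γ i * ((h i/(1 + l i * h i)) * (φ i 0)^2)
          ≤ γ i * ((∫ s in (0:ℝ)..(l i), (g i s)^2) + h i * (φ i (l i))^2) :=
        fun i => mul_le_mul_of_nonneg_left
          (arc_bound (l i) (h i) (φ i 0) (φ i (l i)) _ (hl i) (hP i) (hcs i)) (hγ i).le
      have hne : φ 0 0 ≠ 0 ∨ φ 1 0 ≠ 0 ∨ φ 2 0 ≠ 0 :=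
        fin3cases iw (fun i => φ i 0 ≠ 0) hiw
      have hq := key3 (φ 0 0) (φ 1 0) (φ 2 0) hsum3 hne
      linarith [hq, bound 0, bound 1, bound 2]
    · push_neg at hA
      by_cases hB : ∃ i, φ i (l i) ≠ 0
      · obtain ⟨iw, hiw⟩ := hB
        have bnn : ∀ i, 0 ≤ γ i * ((∫ s in (0:ℝ)..(l i), (g i s)^2) + h i * (φ i (l i))^2) := by
          intro i
          have hc := hcs i
          rw [hA i] at hc
          refine mul_nonneg (hγ i).le ?_
          nlinarith [hc, mul_pos (hl i) (hP i), hP i, hl i, sq_nonneg (φ i (l i))]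
        have bpos : 0 < γ iw * ((∫ s in (0:ℝ)..(l iw), (g iw s)^2) + h iw * (φ iw (l iw))^2) := by
          have hc := hcs iw
          rw [hA iw] at hc
          have hbsq : 0 < (φ iw (l iw))^2 := by positivity
          refine mul_pos (hγ iw) ?_
          nlinarith [hc, mul_pos (hP iw) hbsq, hl iw, hP iw]
        have bpos3 := fin3cases iw
          (fun i => 0 < γ i * ((∫ s in (0:ℝ)..(l i), (g i s)^2) + h i * (φ i (l i))^2)) bpos
        rcases bpos3 with hx | hx | hx <;> linarith [hx, bnn 0, bnn 1, bnn 2]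
      · push_neg at hB
        obtain ⟨i0, s0, hs0, hφ0⟩ := hex
        have hs0pos : 0 < s0 := by
          rcases (lt_or_eq_of_le hs0.1) with hx | hx
          · exact hx
          · exact absurd (hx ▸ hA i0) hφ0
        have hsub1 : IntervalIntegrable (g i0) volume 0 s0 :=
          (hgint i0).mono_set (by
            rw [Set.uIcc_of_le hs0.1, Set.uIcc_of_le (hl i0).le]
            exact Set.Icc_subset_Icc le_rfl hs0.2)
        have hsub2 : IntervalIntegrable (fun s => (g i0 s)^2) volume 0 s0 :=
          (hg2int i0).mono_set (by
            rw [Set.uIcc_of_le hs0.1, Set.uIcc_of_le (hl i0).le]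
            exact Set.Icc_subset_Icc le_rfl hs0.2)
        have hsub3 : IntervalIntegrable (fun s => (g i0 s)^2) volume s0 (l i0) :=
          (hg2int i0).mono_set (by
            rw [Set.uIcc_of_le hs0.2, Set.uIcc_of_le (hl i0).le]
            exact Set.Icc_subset_Icc hs0.1 le_rfl)
        have hval : φ i0 s0 = ∫ u in (0:ℝ)..s0, g i0 u := by
          have := hφ i0 s0 hs0
          rw [hA i0] at this
          linarith [this]
        have hcs2 : (φ i0 s0)^2 ≤ s0 * ∫ s in (0:ℝ)..s0, (g i0 s)^2 := by
          rw [hval]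
          exact cs_aux (g i0) s0 hs0pos hsub1 hsub2
        have hsplit : (∫ s in (0:ℝ)..s0, (g i0 s)^2) + (∫ s in s0..(l i0), (g i0 s)^2)
            = ∫ s in (0:ℝ)..(l i0), (g i0 s)^2 :=
          intervalIntegral.integral_add_adjacent_intervals hsub2 hsub3
        have htail : 0 ≤ ∫ s in s0..(l i0), (g i0 s)^2 :=
          intervalIntegral.integral_nonneg hs0.2 (fun s _ => sq_nonneg _)
        have hfsq : 0 < (φ i0 s0)^2 := by positivity
        have hTpos : 0 < ∫ s in (0:ℝ)..(l i0), (g i0 s)^2 := by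
          have h1 : 0 < ∫ s in (0:ℝ)..s0, (g i0 s)^2 := by nlinarith [hcs2, hs0pos]
          linarith
        have tnn : ∀ i, 0 ≤ γ i * ((∫ s in (0:ℝ)..(l i), (g i s)^2) + h i * (φ i (l i))^2) := by
          intro i
          rw [hB i]
          refine mul_nonneg (hγ i).le ?_
          simpa using hTnn i
        have tpos : 0 < γ i0 * ((∫ s in (0:ℝ)..(l i0), (g i0 s)^2) + h i0 * (φ i0 (l i0))^2) := by
          rw [hB i0]
          refine mul_pos (hγ i0) ?_
          simpa using hTpos
        have tpos3 := fin3cases i0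
          (fun i => 0 < γ i * ((∫ s in (0:ℝ)..(l i), (g i s)^2) + h i * (φ i (l i))^2)) tpos
        rcases tpos3 with hx | hx | hx <;> linarith [hx, tnn 0, tnn 1, tnn 2]
end

section
/- Let γ¹,γ²,γ³ > 0, l¹,l²,l³ > 0, h¹_*,h²_*,h³_* ∈ ℝ, and let c₀ ∈ ℝ be such that I_*[φ] ≥ c₀ Σᵢ₌₁³ γⁱ ∫₀^{lⁱ} (φⁱ)² ds for all φ ∈ E. Then for every ε > 0 there exists δ > 0 with the following property: whenever h¹,h²,h³ ∈ ℝ and L¹,L²,L³ > 0 satisfy |hⁱ − hⁱ_*| < δ and |Lⁱ − lⁱ| < δ for i = 1,2,3, the perturbed form I[φ] = Σᵢ₌₁³ γⁱ ( ∫₀^{Lⁱ} (∂_s φⁱ)² ds + hⁱ φⁱ(Lⁱ)² ) satisfies I[φ] ≥ (c₀ − ε) Σᵢ₌₁³ γⁱ ∫₀^{Lⁱ} (φⁱ)² ds for all φ = (φ¹,φ²,φ³) ∈ H¹(0,L¹)×H¹(0,L²)×H¹(0,L³) with Σᵢ₌₁³ γⁱ φⁱ(0) = 0. -/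
open MeasureTheory

/-- The quadratic form `I[φ] = Σ γⁱ ( ∫ (∂ₛφⁱ)² + hⁱ φⁱ(Lⁱ)² )`,
where `gⁱ` denotes the derivative of `φⁱ`. -/
noncomputable def Iform (γ L h : Fin 3 → ℝ) (φ g : Fin 3 → ℝ → ℝ) : ℝ :=
  ∑ i, γ i * ((∫ s in (0 : ℝ)..(L i), (g i s) ^ 2) + h i * (φ i (L i)) ^ 2)

section helpers
open intervalIntegral Set
-- A1: difference representation
lemma diff_rep (L : ℝ) (g φ : ℝ → ℝ)
    (hg : IntervalIntegrable g volume 0 L)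
    (hrep : ∀ s ∈ Set.Icc (0:ℝ) L, φ s = φ 0 + ∫ u in (0:ℝ)..s, g u)
    {a b : ℝ} (ha : 0 ≤ a) (hab : a ≤ b) (hbL : b ≤ L) :
    φ b - φ a = ∫ u in a..b, g u := by
  have h0L : (0:ℝ) ≤ L := le_trans ha (le_trans hab hbL)
  have hsub : ∀ c d : ℝ, 0 ≤ c → c ≤ d → d ≤ L → IntervalIntegrable g volume c d := by
    intro c d hc hcd hdL
    refine hg.mono_set ?_
    rw [Set.uIcc_of_le hcd, Set.uIcc_of_le h0L]
    exact Set.Icc_subset_Icc hc hdL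
  have h1 := hrep a ⟨ha, le_trans hab hbL⟩
  have h2 := hrep b ⟨le_trans ha hab, hbL⟩
  have h3 : (∫ u in (0:ℝ)..a, g u) + ∫ u in a..b, g u = ∫ u in (0:ℝ)..b, g u :=
    intervalIntegral.integral_add_adjacent_intervals (hsub 0 a le_rfl ha (le_trans hab hbL))
      (hsub a b ha hab hbL)
  rw [h1, h2]; linarith

-- A3: Cauchy-Schwarz
lemma cs_ineq (a b : ℝ) (g : ℝ → ℝ) (hab : a ≤ b)
    (hg : IntervalIntegrable g volume a b)
    (hg2 : IntervalIntegrable (fun s => (g s)^2) volume a b) :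
    (∫ u in a..b, g u)^2 ≤ (b - a) * ∫ u in a..b, (g u)^2 := by
  rcases eq_or_lt_of_le hab with rfl | hlt
  · simp
  · obtain ⟨c, hc⟩ : ∃ c : ℝ, c = (∫ u in a..b, g u) / (b - a) := ⟨_, rfl⟩
    have hba : (0:ℝ) < b - a := by linarith
    have hnn : 0 ≤ ∫ u in a..b, (g u - c)^2 :=
      intervalIntegral.integral_nonneg hab (fun u _ => sq_nonneg _)
    have hexp : (∫ u in a..b, (g u - c)^2)
        = (∫ u in a..b, (g u)^2) - 2*c*(∫ u in a..b, g u) + c^2*(b-a) := by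
      have : (fun u => (g u - c)^2) = fun u => (g u)^2 - (2*c)*(g u) + c^2 := by
        funext u; ring
      rw [this]
      rw [intervalIntegral.integral_add ((hg2.sub (hg.const_mul (2*c)))) intervalIntegrable_const,
        intervalIntegral.integral_sub hg2 (hg.const_mul (2*c)),
        intervalIntegral.integral_const_mul, intervalIntegral.integral_const, smul_eq_mul]
      ring
    rw [hexp] at hnn
    have : c * (b - a) = ∫ u in a..b, g u := by
      rw [hc]; field_simp
    nlinarith [sq_nonneg c]

-- integrability of φ² on subintervals of [0,L]
lemma phisq_int (L : ℝ) (g φ : ℝ → ℝ) (hL : 0 ≤ L)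
    (hg : IntervalIntegrable g volume 0 L)
    (hrep : ∀ s ∈ Set.Icc (0:ℝ) L, φ s = φ 0 + ∫ u in (0:ℝ)..s, g u)
    {a b : ℝ} (ha : 0 ≤ a) (hab : a ≤ b) (hbL : b ≤ L) :
    IntervalIntegrable (fun s => (φ s)^2) volume a b := by
  have hcont : ContinuousOn (fun s => (φ 0 + ∫ u in (0:ℝ)..s, g u)^2) (Set.Icc 0 L) := by
    have h1 : ContinuousOn (fun s => ∫ u in (0:ℝ)..s, g u) (Set.uIcc 0 L) :=
      intervalIntegral.continuousOn_primitive_interval' hg Set.left_mem_uIcc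
    rw [Set.uIcc_of_le hL] at h1
    exact ((continuousOn_const.add h1).pow 2)
  have hci : IntervalIntegrable (fun s => (φ 0 + ∫ u in (0:ℝ)..s, g u)^2) volume a b := by
    apply ContinuousOn.intervalIntegrable
    apply hcont.mono
    rw [Set.uIcc_of_le hab]
    exact Set.Icc_subset_Icc ha hbL
  rw [intervalIntegrable_iff] at hci ⊢
  apply hci.congr_fun _ measurableSet_uIoc
  intro s hs
  rw [Set.uIoc_of_le hab] at hs
  have : φ s = φ 0 + ∫ u in (0:ℝ)..s, g u := hrep s ⟨le_trans ha hs.1.le, le_trans hs.2 hbL⟩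
  simp [this]

-- g² subinterval integrable + monotone
lemma gsq_mono (L : ℝ) (g : ℝ → ℝ)
    (hg2 : IntervalIntegrable (fun s => (g s)^2) volume 0 L)
    {a b : ℝ} (ha : 0 ≤ a) (hab : a ≤ b) (hbL : b ≤ L) :
    IntervalIntegrable (fun s => (g s)^2) volume a b := by
  refine hg2.mono_set ?_
  rw [Set.uIcc_of_le hab, Set.uIcc_of_le (le_trans ha (le_trans hab hbL))]
  exact Set.Icc_subset_Icc ha hbL

lemma gsq_piece_le (L : ℝ) (g : ℝ → ℝ)
    (hg2 : IntervalIntegrable (fun s => (g s)^2) volume 0 L)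
    {a b : ℝ} (ha : 0 ≤ a) (hab : a ≤ b) (hbL : b ≤ L) :
    (∫ u in a..b, (g u)^2) ≤ ∫ u in (0:ℝ)..L, (g u)^2 := by
  have h0L : (0:ℝ) ≤ L := le_trans ha (le_trans hab hbL)
  have h1 : (∫ u in (0:ℝ)..a, (g u)^2) + ∫ u in a..b, (g u)^2 = ∫ u in (0:ℝ)..b, (g u)^2 :=
    intervalIntegral.integral_add_adjacent_intervals
      (gsq_mono L g hg2 le_rfl ha (le_trans hab hbL)) (gsq_mono L g hg2 ha hab hbL)
  have h2 : (∫ u in (0:ℝ)..b, (g u)^2) + ∫ u in b..L, (g u)^2 = ∫ u in (0:ℝ)..L, (g u)^2 :=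
    intervalIntegral.integral_add_adjacent_intervals
      (gsq_mono L g hg2 le_rfl (le_trans ha hab) hbL) (gsq_mono L g hg2 (le_trans ha hab) hbL le_rfl)
  have h3 : 0 ≤ ∫ u in (0:ℝ)..a, (g u)^2 :=
    intervalIntegral.integral_nonneg ha (fun u _ => sq_nonneg _)
  have h4 : 0 ≤ ∫ u in b..L, (g u)^2 :=
    intervalIntegral.integral_nonneg hbL (fun u _ => sq_nonneg _)
  linarith

-- trace lemma : φ(L)² ≤ 2r G + (2/r) B
lemma trace_ineq (L : ℝ) (g φ : ℝ → ℝ) (hL : 0 ≤ L)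
    (hg : IntervalIntegrable g volume 0 L)
    (hg2 : IntervalIntegrable (fun s => (g s)^2) volume 0 L)
    (hrep : ∀ s ∈ Set.Icc (0:ℝ) L, φ s = φ 0 + ∫ u in (0:ℝ)..s, g u)
    {r : ℝ} (hr : 0 < r) (hrL : r ≤ L) :
    (φ L)^2 ≤ 2*r*(∫ u in (0:ℝ)..L, (g u)^2) + (2/r)*(∫ u in (0:ℝ)..L, (φ u)^2) := by
  set G := ∫ u in (0:ℝ)..L, (g u)^2 with hG
  set B := ∫ u in (0:ℝ)..L, (φ u)^2 with hB
  have hGnn : 0 ≤ G := intervalIntegral.integral_nonneg hL (fun u _ => sq_nonneg _)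
  have hpt : ∀ s ∈ Set.Icc (L - r) L, (φ L)^2 ≤ 2*(φ s)^2 + 2*r*G := by
    intro s hs
    have hs0 : 0 ≤ s := by linarith [hs.1, hrL]
    have hd : φ L - φ s = ∫ u in s..L, g u := diff_rep L g φ hg hrep hs0 hs.2 le_rfl
    have hcs : (∫ u in s..L, g u)^2 ≤ (L - s) * ∫ u in s..L, (g u)^2 :=
      cs_ineq s L g hs.2 (hg.mono_set (by rw [Set.uIcc_of_le hs.2, Set.uIcc_of_le hL]; exact Set.Icc_subset_Icc hs0 le_rfl))
        (gsq_mono L g hg2 hs0 hs.2 le_rfl)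
    have hle : (∫ u in s..L, (g u)^2) ≤ G := gsq_piece_le L g hg2 hs0 hs.2 le_rfl
    have hLs : L - s ≤ r := by linarith [hs.1]
    have h2 : (∫ u in s..L, (g u)^2) ≥ 0 :=
      intervalIntegral.integral_nonneg hs.2 (fun u _ => sq_nonneg _)
    have hd2 : (φ L - φ s)^2 ≤ r * G := by
      rw [hd]
      nlinarith [mul_le_mul_of_nonneg_left hle hr.le,
        mul_nonneg (show (0:ℝ) ≤ r - (L-s) by linarith) h2]
    nlinarith [sq_nonneg (φ s - (φ L - φ s))]
  have hint1 : IntervalIntegrable (fun s => 2*(φ s)^2 + 2*r*G) volume (L-r) L := by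
    exact ((phisq_int L g φ hL hg hrep (by linarith) (by linarith) le_rfl).const_mul 2).add
      intervalIntegrable_const
  have hmono : (∫ s in (L-r)..L, (φ L)^2) ≤ ∫ s in (L-r)..L, (2*(φ s)^2 + 2*r*G) :=
    intervalIntegral.integral_mono_on (by linarith) intervalIntegrable_const hint1 hpt
  rw [intervalIntegral.integral_const] at hmono
  have hsplit : (∫ s in (L-r)..L, (2*(φ s)^2 + 2*r*G))
      = 2*(∫ s in (L-r)..L, (φ s)^2) + (2*r*G)*(L - (L-r)) := by
    rw [intervalIntegral.integral_add ((phisq_int L g φ hL hg hrep (by linarith) (by linarith) le_rfl).const_mul 2) intervalIntegrable_const,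
      intervalIntegral.integral_const_mul, intervalIntegral.integral_const, smul_eq_mul]
    ring
  have hBpiece : (∫ s in (L-r)..L, (φ s)^2) ≤ B := by
    have h1 : (∫ u in (0:ℝ)..(L-r), (φ u)^2) + ∫ u in (L-r)..L, (φ u)^2 = B :=
      intervalIntegral.integral_add_adjacent_intervals
        (phisq_int L g φ hL hg hrep le_rfl (by linarith) (by linarith))
        (phisq_int L g φ hL hg hrep (by linarith) (by linarith) le_rfl)
    have h3 : 0 ≤ ∫ u in (0:ℝ)..(L-r), (φ u)^2 :=
      intervalIntegral.integral_nonneg (by linarith) (fun u _ => sq_nonneg _)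
    linarith
  have : r * (φ L)^2 ≤ 2*B + 2*r^2*G := by
    have hsm : (L - (L - r)) • (φ L)^2 = r * (φ L)^2 := by rw [smul_eq_mul]; ring_nf
    rw [hsm] at hmono
    nlinarith
  calc (φ L)^2 = (r * (φ L)^2) / r := by field_simp
    _ ≤ (2*B + 2*r^2*G)/r := by exact (div_le_div_iff_of_pos_right hr).mpr this
    _ = 2*r*G + (2/r)*B := by field_simp; ring

-- diff at m : (φ L - φ m)² ≤ (L-m) G ≤ δ G
lemma diff_sq (L : ℝ) (g φ : ℝ → ℝ)
    (hg : IntervalIntegrable g volume 0 L)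
    (hg2 : IntervalIntegrable (fun s => (g s)^2) volume 0 L)
    (hrep : ∀ s ∈ Set.Icc (0:ℝ) L, φ s = φ 0 + ∫ u in (0:ℝ)..s, g u)
    {m : ℝ} (hm : 0 ≤ m) (hmL : m ≤ L) :
    (φ L - φ m)^2 ≤ (L - m) * ∫ u in (0:ℝ)..L, (g u)^2 := by
  have hd : φ L - φ m = ∫ u in m..L, g u := diff_rep L g φ hg hrep hm hmL le_rfl
  rw [hd]
  have hcs : (∫ u in m..L, g u)^2 ≤ (L - m) * ∫ u in m..L, (g u)^2 :=
    cs_ineq m L g hmL (hg.mono_set (by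
      rw [Set.uIcc_of_le hmL, Set.uIcc_of_le (le_trans hm hmL)]
      exact Set.Icc_subset_Icc hm le_rfl)) (gsq_mono L g hg2 hm hmL le_rfl)
  have hle : (∫ u in m..L, (g u)^2) ≤ ∫ u in (0:ℝ)..L, (g u)^2 :=
    gsq_piece_le L g hg2 hm hmL le_rfl
  nlinarith [mul_le_mul_of_nonneg_left hle (show (0:ℝ) ≤ L - m by linarith)]

-- tail : ∫_m^L φ² ≤ (L-m)(2 φL² + 2 (L-m) G)
lemma tail_ineq (L : ℝ) (g φ : ℝ → ℝ) (hL : 0 ≤ L)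
    (hg : IntervalIntegrable g volume 0 L)
    (hg2 : IntervalIntegrable (fun s => (g s)^2) volume 0 L)
    (hrep : ∀ s ∈ Set.Icc (0:ℝ) L, φ s = φ 0 + ∫ u in (0:ℝ)..s, g u)
    {m : ℝ} (hm : 0 ≤ m) (hmL : m ≤ L) :
    (∫ u in m..L, (φ u)^2)
      ≤ (L - m) * (2*(φ L)^2 + 2*(L-m)*(∫ u in (0:ℝ)..L, (g u)^2)) := by
  set G := ∫ u in (0:ℝ)..L, (g u)^2 with hG
  have hGnn : 0 ≤ G := intervalIntegral.integral_nonneg hL (fun u _ => sq_nonneg _)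
  have hpt : ∀ s ∈ Set.Icc m L, (φ s)^2 ≤ 2*(φ L)^2 + 2*(L-m)*G := by
    intro s hs
    have hs0 : 0 ≤ s := le_trans hm hs.1
    have hd : φ L - φ s = ∫ u in s..L, g u := diff_rep L g φ hg hrep hs0 hs.2 le_rfl
    have hd2 : (φ L - φ s)^2 ≤ (L - m) * G := by
      rw [hd]
      have hcs : (∫ u in s..L, g u)^2 ≤ (L - s) * ∫ u in s..L, (g u)^2 :=
        cs_ineq s L g hs.2 (hg.mono_set (by
          rw [Set.uIcc_of_le hs.2, Set.uIcc_of_le hL]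
          exact Set.Icc_subset_Icc hs0 le_rfl)) (gsq_mono L g hg2 hs0 hs.2 le_rfl)
      have hle : (∫ u in s..L, (g u)^2) ≤ G := gsq_piece_le L g hg2 hs0 hs.2 le_rfl
      have h2 : 0 ≤ ∫ u in s..L, (g u)^2 :=
        intervalIntegral.integral_nonneg hs.2 (fun u _ => sq_nonneg _)
      nlinarith [mul_le_mul_of_nonneg_left hle (show (0:ℝ) ≤ L - m by linarith),
        mul_nonneg (show (0:ℝ) ≤ (L-m) - (L-s) by linarith [hs.1]) h2]
    nlinarith [sq_nonneg (φ L + (φ L - φ s))]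
  have hmono : (∫ s in m..L, (φ s)^2) ≤ ∫ s in m..L, (2*(φ L)^2 + 2*(L-m)*G) :=
    intervalIntegral.integral_mono_on hmL (phisq_int L g φ hL hg hrep hm hmL le_rfl)
      intervalIntegrable_const hpt
  rw [intervalIntegral.integral_const, smul_eq_mul] at hmono
  linarith

-- decomposition of ∫₀^L φ² at m, with nonneg pieces
lemma phisq_split (L : ℝ) (g φ : ℝ → ℝ) (hL : 0 ≤ L)
    (hg : IntervalIntegrable g volume 0 L)
    (hrep : ∀ s ∈ Set.Icc (0:ℝ) L, φ s = φ 0 + ∫ u in (0:ℝ)..s, g u)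
    {m : ℝ} (hm : 0 ≤ m) (hmL : m ≤ L) :
    (∫ u in (0:ℝ)..m, (φ u)^2) + (∫ u in m..L, (φ u)^2) = ∫ u in (0:ℝ)..L, (φ u)^2 :=
  intervalIntegral.integral_add_adjacent_intervals
    (phisq_int L g φ hL hg hrep le_rfl hm hmL)
    (phisq_int L g φ hL hg hrep hm hmL le_rfl)


section tilde

/-- truncated derivative -/
noncomputable def gt' (L : ℝ) (g : ℝ → ℝ) : ℝ → ℝ := fun s => if s ≤ L then g s else 0

lemma gt_notle {L b : ℝ} (g : ℝ → ℝ) {u : ℝ} (hu : u ∈ Set.Ioc (min b L) b) :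
    gt' L g u = 0 := by
  have : ¬ u ≤ L := fun huL => absurd (le_min hu.2 huL) (not_le.mpr hu.1)
  simp [gt', this]

lemma gt_int (L : ℝ) (g : ℝ → ℝ) (hg : IntervalIntegrable g volume 0 L) (hL : 0 ≤ L)
    {b : ℝ} (hb : 0 ≤ b) : IntervalIntegrable (gt' L g) volume 0 b := by
  have hc0 : 0 ≤ min b L := le_min hb hL
  have hcb : min b L ≤ b := min_le_left _ _
  have h1 : IntervalIntegrable (gt' L g) volume 0 (min b L) := by
    have hgc : IntervalIntegrable g volume 0 (min b L) := hg.mono_set (by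
      rw [Set.uIcc_of_le hc0, Set.uIcc_of_le hL]
      exact Set.Icc_subset_Icc le_rfl (min_le_right _ _))
    rw [intervalIntegrable_iff] at hgc ⊢
    apply hgc.congr_fun _ measurableSet_uIoc
    intro u hu
    rw [Set.uIoc_of_le hc0] at hu
    simp only [gt', if_pos (le_trans hu.2 (min_le_right b L))]
  have h2 : IntervalIntegrable (gt' L g) volume (min b L) b := by
    rw [intervalIntegrable_iff]
    apply (integrableOn_zero).congr_fun _ measurableSet_uIoc
    intro u hu
    rw [Set.uIoc_of_le hcb] at hu
    exact (gt_notle g hu).symm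
  exact h1.trans h2

lemma gtsq_int (L : ℝ) (g : ℝ → ℝ)
    (hg2 : IntervalIntegrable (fun s => (g s)^2) volume 0 L) (hL : 0 ≤ L)
    {b : ℝ} (hb : 0 ≤ b) : IntervalIntegrable (fun s => (gt' L g s)^2) volume 0 b := by
  have hc0 : 0 ≤ min b L := le_min hb hL
  have hcb : min b L ≤ b := min_le_left _ _
  have h1 : IntervalIntegrable (fun s => (gt' L g s)^2) volume 0 (min b L) := by
    have hgc : IntervalIntegrable (fun s => (g s)^2) volume 0 (min b L) :=
      gsq_mono L g hg2 le_rfl hc0 (min_le_right _ _)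
    rw [intervalIntegrable_iff] at hgc ⊢
    apply hgc.congr_fun _ measurableSet_uIoc
    intro u hu
    rw [Set.uIoc_of_le hc0] at hu
    simp only [gt', if_pos (le_trans hu.2 (min_le_right b L))]
  have h2 : IntervalIntegrable (fun s => (gt' L g s)^2) volume (min b L) b := by
    rw [intervalIntegrable_iff]
    apply (integrableOn_zero).congr_fun _ measurableSet_uIoc
    intro u hu
    rw [Set.uIoc_of_le hcb] at hu
    simp only []
    rw [gt_notle g hu]
    norm_num
  exact h1.trans h2

-- ∫₀^d gt = ∫₀^d g for d ≤ L
lemma gt_integral_eq (L : ℝ) (g : ℝ → ℝ) {d : ℝ} (hd : 0 ≤ d) (hdL : d ≤ L) :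
    (∫ u in (0:ℝ)..d, gt' L g u) = ∫ u in (0:ℝ)..d, g u := by
  apply intervalIntegral.integral_congr
  intro u hu
  rw [Set.uIcc_of_le hd] at hu
  simp only [gt', if_pos (le_trans hu.2 hdL)]

lemma gtsq_integral_eq (L : ℝ) (g : ℝ → ℝ) {d : ℝ} (hd : 0 ≤ d) (hdL : d ≤ L) :
    (∫ u in (0:ℝ)..d, (gt' L g u)^2) = ∫ u in (0:ℝ)..d, (g u)^2 := by
  apply intervalIntegral.integral_congr
  intro u hu
  rw [Set.uIcc_of_le hd] at hu
  simp only [gt', if_pos (le_trans hu.2 hdL)]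

-- ∫_{min b L}^b gt = 0
lemma gt_integral_tail (L : ℝ) (g : ℝ → ℝ) {b : ℝ} (hb : min b L ≤ b) :
    (∫ u in (min b L)..b, gt' L g u) = 0 := by
  rw [intervalIntegral.integral_of_le hb]
  exact setIntegral_eq_zero_of_forall_eq_zero (fun u hu => gt_notle g hu)

lemma gtsq_integral_tail (L : ℝ) (g : ℝ → ℝ) {b : ℝ} (hb : min b L ≤ b) :
    (∫ u in (min b L)..b, (gt' L g u)^2) = 0 := by
  rw [intervalIntegral.integral_of_le hb]
  apply setIntegral_eq_zero_of_forall_eq_zero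
  intro u hu
  rw [gt_notle g hu]
  norm_num

end tilde

section tildefacts
variable {l L : ℝ} {g φ : ℝ → ℝ}

lemma tilde_rep (hL : 0 < L) (hg : IntervalIntegrable g volume 0 L)
    (hrep : ∀ s ∈ Set.Icc (0:ℝ) L, φ s = φ 0 + ∫ u in (0:ℝ)..s, g u)
    {s : ℝ} (hs : 0 ≤ s) :
    φ (min s L) = φ (min 0 L) + ∫ u in (0:ℝ)..s, gt' L g u := by
  have h0 : min 0 L = 0 := min_eq_left hL.le
  have hd0 : 0 ≤ min s L := le_min hs hL.le
  have hdL : min s L ≤ L := min_le_right _ _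
  have hds : min s L ≤ s := min_le_left _ _
  have hadd : (∫ u in (0:ℝ)..(min s L), gt' L g u) + (∫ u in (min s L)..s, gt' L g u)
      = ∫ u in (0:ℝ)..s, gt' L g u :=
    intervalIntegral.integral_add_adjacent_intervals (gt_int L g hg hL.le hd0)
      (((gt_int L g hg hL.le hd0).symm).trans (gt_int L g hg hL.le hs))
  rw [h0, hrep (min s L) ⟨hd0, hdL⟩, ← hadd, gt_integral_eq L g hd0 hdL,
    gt_integral_tail L g hds, add_zero]

lemma tilde_gsq (hl : 0 < l) (hL : 0 < L)
    (hg2 : IntervalIntegrable (fun s => (g s)^2) volume 0 L) :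
    (∫ u in (0:ℝ)..l, (gt' L g u)^2) = ∫ u in (0:ℝ)..(min l L), (g u)^2 := by
  have hm0 : 0 ≤ min l L := le_min hl.le hL.le
  have hml : min l L ≤ l := min_le_left _ _
  have hadd : (∫ u in (0:ℝ)..(min l L), (gt' L g u)^2) + (∫ u in (min l L)..l, (gt' L g u)^2)
      = ∫ u in (0:ℝ)..l, (gt' L g u)^2 :=
    intervalIntegral.integral_add_adjacent_intervals (gtsq_int L g hg2 hL.le hm0)
      (((gtsq_int L g hg2 hL.le hm0).symm).trans (gtsq_int L g hg2 hL.le hl.le))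
  rw [← hadd, gtsq_integral_eq L g hm0 (min_le_right _ _), gtsq_integral_tail L g hml, add_zero]

lemma tilde_min_eq (hl : 0 < l) {s : ℝ} (hs : s ∈ Set.Icc (min l L) l) :
    min s L = min l L := by
  rcases le_or_gt s L with h | h
  · have h1 : s ≤ min l L := le_min (hs.2) h
    have : s = min l L := le_antisymm h1 hs.1
    rw [this, min_eq_left (min_le_right _ _)]
  · have hLl : L ≤ l := le_trans h.le hs.2
    rw [min_eq_right h.le, min_eq_right hLl]

lemma tilde_phisq (hl : 0 < l) (hL : 0 < L)
    (hg : IntervalIntegrable g volume 0 L)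
    (hrep : ∀ s ∈ Set.Icc (0:ℝ) L, φ s = φ 0 + ∫ u in (0:ℝ)..s, g u) :
    (∫ u in (0:ℝ)..l, (φ (min u L))^2)
      = (∫ u in (0:ℝ)..(min l L), (φ u)^2) + (l - min l L) * (φ (min l L))^2 := by
  have hm0 : 0 ≤ min l L := le_min hl.le hL.le
  have hml : min l L ≤ l := min_le_left _ _
  have heq1 : (∫ u in (0:ℝ)..(min l L), (φ (min u L))^2) = ∫ u in (0:ℝ)..(min l L), (φ u)^2 := by
    apply intervalIntegral.integral_congr
    intro u hu
    rw [Set.uIcc_of_le hm0] at hu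
    simp only []
    rw [min_eq_left (le_trans hu.2 (min_le_right _ _))]
  have heq2 : (∫ u in (min l L)..l, (φ (min u L))^2) = (l - min l L) * (φ (min l L))^2 := by
    have : (∫ u in (min l L)..l, (φ (min u L))^2) = ∫ u in (min l L)..l, (φ (min l L))^2 := by
      apply intervalIntegral.integral_congr
      intro u hu
      rw [Set.uIcc_of_le hml] at hu
      simp only []
      rw [tilde_min_eq hl hu]
    rw [this, intervalIntegral.integral_const, smul_eq_mul]
  have hint1 : IntervalIntegrable (fun u => (φ (min u L))^2) volume 0 (min l L) := by
    have := phisq_int L g φ hL.le hg hrep le_rfl hm0 (min_le_right _ _)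
    rw [intervalIntegrable_iff] at this ⊢
    apply this.congr_fun _ measurableSet_uIoc
    intro u hu
    rw [Set.uIoc_of_le hm0] at hu
    simp only []
    rw [min_eq_left (le_trans hu.2 (min_le_right _ _))]
  have hint2 : IntervalIntegrable (fun u => (φ (min u L))^2) volume (min l L) l := by
    have hc : IntervalIntegrable (fun _ : ℝ => (φ (min l L))^2) volume (min l L) l :=
      intervalIntegrable_const
    rw [intervalIntegrable_iff] at hc ⊢
    apply hc.congr_fun _ measurableSet_uIoc
    intro u hu
    rw [Set.uIoc_of_le hml] at hu
    simp only []
    rw [tilde_min_eq hl (Set.mem_Icc.mpr ⟨hu.1.le, hu.2⟩)]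
  rw [← intervalIntegral.integral_add_adjacent_intervals hint1 hint2, heq1, heq2]

end tildefacts

set_option maxHeartbeats 1000000 in
/-- The key scalar inequality per component. -/
lemma scalar_key (ε a H r μ ρ w δ c₀ hs h G B u v Ig Iφ e : ℝ)
    (hε : 0 < ε) (hr : 0 < r) (hμ0 : 0 < μ) (hμ1 : μ ≤ 1/2)
    (hρ0 : 0 < ρ) (hw0 : 0 ≤ w) (hwρ : ρ*w = H) (hδ0 : 0 < δ)
    (hH : 0 ≤ H) (hsH : |hs| ≤ H) (hhd : |h - hs| ≤ δ)
    (ha0 : 0 ≤ a) (hac1 : -a ≤ c₀) (hac2 : c₀ ≤ a)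
    (hG : 0 ≤ G) (hB : 0 ≤ B) (hIg0 : 0 ≤ Ig) (hIgG : Ig ≤ G)
    (hIφ0 : 0 ≤ Iφ) (hIφB : Iφ ≤ B)
    (hIφlow : B - Iφ ≤ δ*(2*u^2 + 2*δ*G))
    (hD : (u - v)^2 ≤ δ*G)
    (htr : r*u^2 ≤ 2*r^2*G + 2*B)
    (he0 : 0 ≤ e) (heδ : e ≤ δ)
    (CondB : μ*a*r + 2*(4*a*δ + δ + 3*w + 2*μ*H) ≤ ε*r)
    (CondG : 4*a*δ^2 + ρ*H*δ/2 + 2*δ*w + 2*δ*μ*H + 2*r*(4*a*δ + δ + 3*w + 2*μ*H) ≤ μ) :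
    (c₀ - ε)*B ≤ G + h*u^2 - (1-μ)*((Ig + hs*v^2) - c₀*(Iφ + e*v^2)) := by
  obtain ⟨hs1, hs2⟩ := abs_le.mp hsH
  obtain ⟨hh1, hh2⟩ := abs_le.mp hhd
  have hμ2 : (0:ℝ) ≤ 1 - μ := by linarith
  have hu2 : (0:ℝ) ≤ u^2 := sq_nonneg u
  have hv2 : (0:ℝ) ≤ v^2 := sq_nonneg v
  -- Step 1
  have A1 : μ*G ≤ G - (1-μ)*Ig := by
    linarith [mul_le_mul_of_nonneg_left hIgG hμ2]
  -- Step 2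
  have A2 : c₀*B - μ*a*B - 2*a*δ*u^2 - 2*a*δ^2*G ≤ (1-μ)*c₀*Iφ := by
    rcases le_or_gt 0 c₀ with hc | hc
    · have k1 : (1-μ)*c₀*(B - (2*δ*u^2 + 2*δ^2*G)) ≤ (1-μ)*c₀*Iφ :=
        mul_le_mul_of_nonneg_left (by linarith) (mul_nonneg hμ2 hc)
      have k2 : μ*B*c₀ ≤ μ*B*a :=
        mul_le_mul_of_nonneg_left hac2 (mul_nonneg hμ0.le hB)
      have k3 : (1-μ)*c₀*(2*δ*u^2 + 2*δ^2*G) ≤ a*(2*δ*u^2 + 2*δ^2*G) := by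
        apply mul_le_mul_of_nonneg_right _ (by linarith [mul_nonneg (mul_nonneg hδ0.le hδ0.le) hG, mul_nonneg hδ0.le hu2])
        linarith [mul_nonneg hμ0.le hc]
      linarith [k1, k2, k3]
    · have k1 : (1-μ)*(-c₀)*Iφ ≤ (1-μ)*(-c₀)*B :=
        mul_le_mul_of_nonneg_left hIφB (mul_nonneg hμ2 (by linarith))
      have k2 : μ*B*c₀ ≤ μ*B*a :=
        mul_le_mul_of_nonneg_left hac2 (mul_nonneg hμ0.le hB)
      have k4 : 0 ≤ a*δ*u^2 := mul_nonneg (mul_nonneg ha0 hδ0.le) hu2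
      have k5 : 0 ≤ a*δ^2*G := mul_nonneg (mul_nonneg ha0 (sq_nonneg δ)) hG
      linarith [k1, k2, k4, k5]
  -- Step 3 pieces
  have B1 : -((ρ*H/2)*(u-v)^2 + (w/2)*(u+v)^2) ≤ hs*(u^2-v^2) := by
    have e1 : 0 ≤ (H + hs)*(ρ*(u-v) + (u+v))^2 :=
      mul_nonneg (by linarith) (sq_nonneg _)
    have e2 : 0 ≤ (H - hs)*(ρ*(u-v) - (u+v))^2 :=
      mul_nonneg (by linarith) (sq_nonneg _)
    have hq : ρ*(w*(u+v)^2) = H*(u+v)^2 := by rw [← mul_assoc, hwρ]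
    have key : 0 ≤ (2*ρ)*(hs*(u^2-v^2) + ((ρ*H/2)*(u-v)^2 + (w/2)*(u+v)^2)) := by
      linarith [e1, e2, hq]
    have := (mul_nonneg_iff_of_pos_left (by linarith : (0:ℝ) < 2*ρ)).mp key
    linarith
  have B2 : (ρ*H/2)*(u-v)^2 ≤ (ρ*H/2)*(δ*G) :=
    mul_le_mul_of_nonneg_left hD (by linarith [mul_nonneg hρ0.le hH])
  have B3 : (w/2)*(u+v)^2 ≤ (w/2)*(2*u^2+2*v^2) :=
    mul_le_mul_of_nonneg_left (by linarith [sq_nonneg (u-v)]) (by linarith)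
  have B4 : -(δ*u^2) ≤ (h-hs)*u^2 := by linarith [mul_le_mul_of_nonneg_right hh1 hu2]
  have B5 : -((μ*H)*v^2) ≤ μ*hs*v^2 := by
    linarith [mul_le_mul_of_nonneg_right (mul_le_mul_of_nonneg_left hs1 hμ0.le) hv2]
  have B6 : -((a*δ)*v^2) ≤ (1-μ)*c₀*e*v^2 := by
    have hX : -(a*δ) ≤ (1-μ)*c₀*e := by
      rcases le_or_gt 0 c₀ with hc | hc
      · have : 0 ≤ (1-μ)*c₀*e := mul_nonneg (mul_nonneg hμ2 hc) he0
        linarith [mul_nonneg ha0 hδ0.le]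
      · have k1 : (-c₀)*e ≤ a*δ :=
          mul_le_mul (by linarith) heδ he0 ha0
        have k2 : (1-μ)*((-c₀)*e) ≤ (-c₀)*e := by
          have hne : 0 ≤ (-c₀)*e := mul_nonneg (by linarith) he0
          linarith [mul_nonneg hμ0.le hne]
        linarith [k1, k2]
    calc -((a*δ)*v^2) = (-(a*δ))*v^2 := by ring
      _ ≤ ((1-μ)*c₀*e)*v^2 := mul_le_mul_of_nonneg_right hX hv2
      _ = (1-μ)*c₀*e*v^2 := by ring
  have B8 : (w + μ*H + a*δ)*v^2 ≤ (w + μ*H + a*δ)*(2*u^2 + 2*δ*G) := by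
    apply mul_le_mul_of_nonneg_left _ (by linarith [mul_nonneg hμ0.le hH, mul_nonneg ha0 hδ0.le])
    linarith [sq_nonneg (2*u - v), hD]
  -- combine step 3
  have A3 : -((ρ*H*δ/2 + 2*δ*w + 2*δ*μ*H + 2*a*δ^2)*G)
      - ((4*a*δ - 2*a*δ) + δ + 3*w + 2*μ*H)*u^2
      ≤ h*u^2 - (1-μ)*hs*v^2 + (1-μ)*c₀*e*v^2 := by
    linarith [B1, B2, B3, B4, B5, B6, B8]
  -- final assembly
  have hCu : (0:ℝ) ≤ 4*a*δ + δ + 3*w + 2*μ*H := by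
    linarith [mul_nonneg ha0 hδ0.le, mul_nonneg hμ0.le hH]
  have htr2 : (4*a*δ + δ + 3*w + 2*μ*H)*(r*u^2)
      ≤ (4*a*δ + δ + 3*w + 2*μ*H)*(2*r^2*G + 2*B) :=
    mul_le_mul_of_nonneg_left htr hCu
  have C1 : 0 ≤ μ - (4*a*δ^2 + ρ*H*δ/2 + 2*δ*w + 2*δ*μ*H) - 2*r*(4*a*δ + δ + 3*w + 2*μ*H) := by
    linarith
  have C2 : 0 ≤ ε*r - μ*a*r - 2*(4*a*δ + δ + 3*w + 2*μ*H) := by linarith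
  have C3 := mul_nonneg C1 (mul_nonneg hr.le hG)
  have C4 := mul_nonneg C2 hB
  -- Z := reduced lower bound expression; show 0 ≤ r*Z
  have hZ : 0 ≤ r*(μ*G - μ*a*B - 2*a*δ*u^2 - 2*a*δ^2*G
      - (ρ*H*δ/2 + 2*δ*w + 2*δ*μ*H + 2*a*δ^2)*G
      - ((4*a*δ - 2*a*δ) + δ + 3*w + 2*μ*H)*u^2 + ε*B) := by
    linarith [htr2, C3, C4]
  have hZ' := (mul_nonneg_iff_of_pos_left hr).mp hZ
  linarith [A1, A2, A3, hZ']

end helpers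

set_option maxHeartbeats 2000000 in
theorem stmt7 (γ l hst : Fin 3 → ℝ) (hγ : ∀ i, 0 < γ i) (hl : ∀ i, 0 < l i)
    (c₀ : ℝ)
    (hcoer : ∀ φ g : Fin 3 → ℝ → ℝ, MemE γ l φ g →
      c₀ * ∑ i, γ i * ∫ s in (0 : ℝ)..(l i), (φ i s) ^ 2 ≤ Iform γ l hst φ g) :
    ∀ ε > (0 : ℝ), ∃ δ > (0 : ℝ), ∀ h L : Fin 3 → ℝ, (∀ i, 0 < L i) →
      (∀ i, |h i - hst i| < δ) → (∀ i, |L i - l i| < δ) →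
      ∀ φ g : Fin 3 → ℝ → ℝ, MemE γ L φ g →
        (c₀ - ε) * ∑ i, γ i * ∫ s in (0 : ℝ)..(L i), (φ i s) ^ 2 ≤ Iform γ L h φ g := by
  intro ε hε
  -- constants
  obtain ⟨a, ha_def⟩ : ∃ x : ℝ, x = |c₀| := ⟨_, rfl⟩
  have ha0 : 0 ≤ a := ha_def ▸ abs_nonneg _
  have hac1 : -a ≤ c₀ := ha_def ▸ neg_abs_le _
  have hac2 : c₀ ≤ a := ha_def ▸ le_abs_self _
  obtain ⟨H, hH_def⟩ : ∃ x : ℝ, x = max (|hst 0|) (max (|hst 1|) (|hst 2|)) := ⟨_, rfl⟩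
  have hH0 : 0 ≤ H := hH_def ▸ le_trans (abs_nonneg _) (le_max_left _ _)
  have hHb : ∀ i, |hst i| ≤ H := by
    intro i
    rw [hH_def]
    fin_cases i
    · exact le_max_left _ _
    · exact le_trans (le_max_left _ _) (le_max_right _ _)
    · exact le_trans (le_max_right _ _) (le_max_right _ _)
  obtain ⟨lmin, hlmin_def⟩ : ∃ x : ℝ, x = min (l 0) (min (l 1) (l 2)) := ⟨_, rfl⟩
  have hlmin0 : 0 < lmin := hlmin_def ▸ lt_min (hl 0) (lt_min (hl 1) (hl 2))
  have hlminb : ∀ i, lmin ≤ l i := by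
    intro i
    rw [hlmin_def]
    fin_cases i
    · exact min_le_left _ _
    · exact le_trans (min_le_right _ _) (min_le_left _ _)
    · exact le_trans (min_le_right _ _) (min_le_right _ _)
  obtain ⟨r, hr_def⟩ : ∃ x : ℝ, x = min (lmin/2) (1/(32*(H+1))) := ⟨_, rfl⟩
  have hr0 : 0 < r := hr_def ▸ lt_min (by linarith) (by positivity)
  have hr1 : r ≤ lmin/2 := hr_def ▸ min_le_left _ _
  have hr2 : r ≤ 1/(32*(H+1)) := hr_def ▸ min_le_right _ _
  obtain ⟨μ, hμ_def⟩ : ∃ x : ℝ, x = min (min (1/2) (ε/(4*(a+1)))) (ε*r/(64*(H+1))) := ⟨_, rfl⟩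
  have hμ0 : 0 < μ := hμ_def ▸ lt_min (lt_min (by norm_num) (by positivity)) (by positivity)
  have hμa : μ ≤ 1/2 := hμ_def ▸ le_trans (min_le_left _ _) (min_le_left _ _)
  have hμb : μ ≤ ε/(4*(a+1)) := hμ_def ▸ le_trans (min_le_left _ _) (min_le_right _ _)
  have hμc : μ ≤ ε*r/(64*(H+1)) := hμ_def ▸ min_le_right _ _
  obtain ⟨ρ, hρ_def⟩ : ∃ x : ℝ, x = 48*(H+1)*(r + 1/r)/μ + 48*(H+1)/(r*ε) + 1 := ⟨_, rfl⟩
  have hρ1 : 1 ≤ ρ := by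
    rw [hρ_def]
    have t1 : 0 ≤ 48*(H+1)*(r + 1/r)/μ := by positivity
    have t2 : 0 ≤ 48*(H+1)/(r*ε) := by positivity
    linarith
  have hρ0 : 0 < ρ := by linarith
  have hρa : 48*(H+1)*r ≤ μ*ρ := by
    have t1 : 48*(H+1)*(r + 1/r)/μ ≤ ρ := by
      rw [hρ_def]
      have t2 : 0 ≤ 48*(H+1)/(r*ε) := by positivity
      linarith
    rw [div_le_iff₀ hμ0] at t1
    have t4 : 0 ≤ 48*(H+1)*(1/r) := by positivity
    nlinarith [t1, t4]
  have hρb : 48*(H+1) ≤ r*ε*ρ := by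
    have t1 : 48*(H+1)/(r*ε) ≤ ρ := by
      rw [hρ_def]
      have t2 : 0 ≤ 48*(H+1)*(r + 1/r)/μ := by positivity
      linarith
    rw [div_le_iff₀ (by positivity)] at t1
    nlinarith [t1]
  obtain ⟨w, hw_def⟩ : ∃ x : ℝ, x = H/ρ := ⟨_, rfl⟩
  have hw0 : 0 ≤ w := by rw [hw_def]; positivity
  have hwρ : ρ*w = H := by
    rw [hw_def]; field_simp
  have hwH : w ≤ H := by
    rw [hw_def, div_le_iff₀ hρ0]
    nlinarith
  obtain ⟨K, hK_def⟩ : ∃ x : ℝ, x = 4*a + ρ*H + 3*H + 8*r*a + 2*r + 1 := ⟨_, rfl⟩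
  have hK0 : 0 < K := by
    rw [hK_def]
    have : 0 ≤ ρ*H := mul_nonneg hρ0.le hH0
    have : 0 ≤ r*a := mul_nonneg hr0.le ha0
    linarith
  obtain ⟨δ, hδ_def⟩ : ∃ x : ℝ,
      x = min (min (lmin/2) (1/(32*(H+1)))) (min (ε*r/(16*(4*a+1))) (μ/(2*K))) := ⟨_, rfl⟩
  have hδ0 : 0 < δ := hδ_def ▸
    lt_min (lt_min (by linarith) (by positivity)) (lt_min (by positivity) (by positivity))
  have hδ1 : δ ≤ lmin/2 := hδ_def ▸ le_trans (min_le_left _ _) (min_le_left _ _)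
  have hδ2 : δ ≤ 1/(32*(H+1)) := hδ_def ▸ le_trans (min_le_left _ _) (min_le_right _ _)
  have hδ3 : δ ≤ ε*r/(16*(4*a+1)) := hδ_def ▸ le_trans (min_le_right _ _) (min_le_left _ _)
  have hδ4 : δ ≤ μ/(2*K) := hδ_def ▸ le_trans (min_le_right _ _) (min_le_right _ _)
  have hδle1 : δ ≤ 1 := by
    have : (1:ℝ)/(32*(H+1)) ≤ 1 := by
      rw [div_le_iff₀ (by positivity)]; nlinarith
    linarith
  -- the two conditions of scalar_key
  have condB : μ*a*r + 2*(4*a*δ + δ + 3*w + 2*μ*H) ≤ ε*r := by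
    have k1 : μ*(4*(a+1)) ≤ ε := by
      rw [← le_div_iff₀ (by positivity)]; exact hμb
    have k1' : μ*a*r ≤ ε*r/4 := by
      nlinarith [mul_le_mul_of_nonneg_right k1 hr0.le, mul_nonneg hμ0.le hr0.le]
    have k2 : μ*(64*(H+1)) ≤ ε*r := by
      rw [← le_div_iff₀ (by positivity)]; exact hμc
    have k2' : 4*μ*H ≤ ε*r/16 := by nlinarith [hμ0.le]
    have k3 : (6*H)/ρ ≤ ε*r/8 := by
      rw [div_le_div_iff₀ hρ0 (by norm_num : (0:ℝ) < 8)]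
      nlinarith [hρb]
    have k3' : 6*w ≤ ε*r/8 := by
      rw [hw_def, show (6:ℝ)*(H/ρ) = 6*H/ρ from by ring]; exact k3
    have k4 : δ*(16*(4*a+1)) ≤ ε*r := by
      rw [← le_div_iff₀ (by positivity)]; exact hδ3
    have k4' : 2*(4*a*δ + δ) ≤ ε*r/8 := by nlinarith
    linarith
  have condG : 4*a*δ^2 + ρ*H*δ/2 + 2*δ*w + 2*δ*μ*H + 2*r*(4*a*δ + δ + 3*w + 2*μ*H) ≤ μ := by
    have k5 : (6*r*H)/ρ ≤ μ/8 := by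
      rw [div_le_div_iff₀ hρ0 (by norm_num : (0:ℝ) < 8)]
      nlinarith [hρa, hr0.le]
    have k5' : 6*r*w ≤ μ/8 := by
      rw [hw_def, show (6:ℝ)*r*(H/ρ) = 6*r*H/ρ from by ring]; exact k5
    have k6 : r*(32*(H+1)) ≤ 1 := by
      rw [← le_div_iff₀ (by positivity)]; exact hr2
    have k6' : 4*r*μ*H ≤ μ/8 := by nlinarith [hμ0.le, mul_nonneg hμ0.le hH0]
    have k7 : δ*(2*K) ≤ μ := by
      rw [← le_div_iff₀ (by positivity)]; exact hδ4
    have k8 : 4*a*δ + ρ*H/2 + 2*w + 2*μ*H + 8*r*a + 2*r ≤ K := by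
      have t1 : 4*a*δ ≤ 4*a := by nlinarith
      have t2 : ρ*H/2 ≤ ρ*H := by linarith [mul_nonneg hρ0.le hH0]
      have t3 : 2*μ*H ≤ H := by nlinarith
      rw [hK_def]
      linarith [hwH]
    have k8' : δ*(4*a*δ + ρ*H/2 + 2*w + 2*μ*H + 8*r*a + 2*r) ≤ δ*K :=
      mul_le_mul_of_nonneg_left k8 hδ0.le
    nlinarith [k8']
  refine ⟨δ, hδ0, ?_⟩
  intro h L hLpos hh hLl φ g hmem
  obtain ⟨hgint, hg2int, hrep, hconstr⟩ := hmem
  have hhδ : ∀ i, |h i - hst i| ≤ δ := fun i => (hh i).le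
  have hLlδ : ∀ i, |L i - l i| ≤ δ := fun i => (hLl i).le
  -- tilde test function
  have hmemt : MemE γ l (fun i s => φ i (min s (L i))) (fun i => gt' (L i) (g i)) := by
    refine ⟨fun i => gt_int _ _ (hgint i) (hLpos i).le (hl i).le,
            fun i => gtsq_int _ _ (hg2int i) (hLpos i).le (hl i).le,
            fun i s hs => tilde_rep (hLpos i) (hgint i) (hrep i) hs.1, ?_⟩
    have hz : ∀ i : Fin 3, φ i (min 0 (L i)) = φ i 0 := fun i => by
      rw [min_eq_left (hLpos i).le]
    simp only []
    rw [Fin.sum_univ_three] at hconstr ⊢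
    rw [hz 0, hz 1, hz 2]
    exact hconstr
  have hKey := hcoer _ _ hmemt
  simp only [Iform, Fin.sum_univ_three] at hKey
  rw [tilde_phisq (hl 0) (hLpos 0) (hgint 0) (hrep 0),
    tilde_phisq (hl 1) (hLpos 1) (hgint 1) (hrep 1),
    tilde_phisq (hl 2) (hLpos 2) (hgint 2) (hrep 2),
    tilde_gsq (hl 0) (hLpos 0) (hg2int 0),
    tilde_gsq (hl 1) (hLpos 1) (hg2int 1),
    tilde_gsq (hl 2) (hLpos 2) (hg2int 2)] at hKey
  -- key scalar inequality per component
  have key : ∀ i, (c₀ - ε) * (∫ s in (0:ℝ)..(L i), (φ i s)^2)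
      ≤ (∫ s in (0:ℝ)..(L i), (g i s)^2) + h i * (φ i (L i))^2
        - (1-μ)*(((∫ s in (0:ℝ)..(min (l i) (L i)), (g i s)^2)
            + hst i * (φ i (min (l i) (L i)))^2)
          - c₀*((∫ s in (0:ℝ)..(min (l i) (L i)), (φ i s)^2)
            + (l i - min (l i) (L i)) * (φ i (min (l i) (L i)))^2)) := by
    intro i
    have hLi := hLpos i
    obtain ⟨habs1, habs2⟩ := abs_le.mp (hLlδ i)
    have hm0 : 0 ≤ min (l i) (L i) := le_min (hl i).le hLi.le
    have hmL : min (l i) (L i) ≤ L i := min_le_right _ _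
    have hml : min (l i) (L i) ≤ l i := min_le_left _ _
    have hLm0 : 0 ≤ L i - min (l i) (L i) := by linarith
    have hLm : L i - min (l i) (L i) ≤ δ := by
      rcases le_total (l i) (L i) with hc | hc
      · rw [min_eq_left hc]; linarith
      · rw [min_eq_right hc]; linarith
    have hel : l i - min (l i) (L i) ≤ δ := by
      rcases le_total (l i) (L i) with hc | hc
      · rw [min_eq_left hc]; linarith
      · rw [min_eq_right hc]; linarith
    have he0 : 0 ≤ l i - min (l i) (L i) := by linarith
    have hrL : r ≤ L i := by
      have := hlminb i
      linarith
    have hG0 : 0 ≤ ∫ s in (0:ℝ)..(L i), (g i s)^2 :=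
      intervalIntegral.integral_nonneg hLi.le (fun u _ => sq_nonneg _)
    have hB0 : 0 ≤ ∫ s in (0:ℝ)..(L i), (φ i s)^2 :=
      intervalIntegral.integral_nonneg hLi.le (fun u _ => sq_nonneg _)
    have hIg0 : 0 ≤ ∫ s in (0:ℝ)..(min (l i) (L i)), (g i s)^2 :=
      intervalIntegral.integral_nonneg hm0 (fun u _ => sq_nonneg _)
    have hIgG : (∫ s in (0:ℝ)..(min (l i) (L i)), (g i s)^2)
        ≤ ∫ s in (0:ℝ)..(L i), (g i s)^2 :=
      gsq_piece_le (L i) (g i) (hg2int i) le_rfl hm0 hmL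
    have hsplit := phisq_split (L i) (g i) (φ i) hLi.le (hgint i) (hrep i) hm0 hmL
    have htail0 : 0 ≤ ∫ s in (min (l i) (L i))..(L i), (φ i s)^2 :=
      intervalIntegral.integral_nonneg hmL (fun u _ => sq_nonneg _)
    have hIφ0 : 0 ≤ ∫ s in (0:ℝ)..(min (l i) (L i)), (φ i s)^2 :=
      intervalIntegral.integral_nonneg hm0 (fun u _ => sq_nonneg _)
    have hIφB : (∫ s in (0:ℝ)..(min (l i) (L i)), (φ i s)^2)
        ≤ ∫ s in (0:ℝ)..(L i), (φ i s)^2 := by linarith only [hsplit, htail0]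
    have htail := tail_ineq (L i) (g i) (φ i) hLi.le (hgint i) (hg2int i) (hrep i) hm0 hmL
    have hIφlow : (∫ s in (0:ℝ)..(L i), (φ i s)^2)
        - (∫ s in (0:ℝ)..(min (l i) (L i)), (φ i s)^2)
        ≤ δ*(2*(φ i (L i))^2 + 2*δ*(∫ s in (0:ℝ)..(L i), (g i s)^2)) := by
      have hq1 : (L i - min (l i) (L i))*(2*(φ i (L i))^2) ≤ δ*(2*(φ i (L i))^2) :=
        mul_le_mul_of_nonneg_right hLm (by positivity)
      have hq2' : (L i - min (l i) (L i))*(L i - min (l i) (L i)) ≤ δ*δ :=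
        mul_self_le_mul_self hLm0 hLm
      have hq2 : (L i - min (l i) (L i))*(L i - min (l i) (L i))
            *(2*(∫ s in (0:ℝ)..(L i), (g i s)^2))
          ≤ δ*δ*(2*(∫ s in (0:ℝ)..(L i), (g i s)^2)) :=
        mul_le_mul_of_nonneg_right hq2' (by linarith)
      linarith only [htail, hq1, hq2, hsplit]
    have hDm := diff_sq (L i) (g i) (φ i) (hgint i) (hg2int i) (hrep i) hm0 hmL
    have hD : (φ i (L i) - φ i (min (l i) (L i)))^2
        ≤ δ*(∫ s in (0:ℝ)..(L i), (g i s)^2) :=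
      le_trans hDm (mul_le_mul_of_nonneg_right hLm hG0)
    have htru := trace_ineq (L i) (g i) (φ i) hLi.le (hgint i) (hg2int i) (hrep i) hr0 hrL
    have htr : r*(φ i (L i))^2 ≤ 2*r^2*(∫ s in (0:ℝ)..(L i), (g i s)^2)
        + 2*(∫ s in (0:ℝ)..(L i), (φ i s)^2) := by
      have h1 := mul_le_mul_of_nonneg_left htru hr0.le
      have hq : r*((2/r)*(∫ s in (0:ℝ)..(L i), (φ i s)^2))
          = 2*(∫ s in (0:ℝ)..(L i), (φ i s)^2) := by
        field_simp
      linarith only [h1, hq]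
    exact scalar_key ε a H r μ ρ w δ c₀ (hst i) (h i) _ _ _ _ _ _ _
      hε hr0 hμ0 hμa hρ0 hw0 hwρ hδ0 hH0 (hHb i) (hhδ i) ha0 hac1 hac2
      hG0 hB0 hIg0 hIgG hIφ0 hIφB hIφlow hD htr he0 hel condB condG
  -- assemble
  have hμ2 : (0:ℝ) ≤ 1 - μ := by linarith
  have kk0 := mul_le_mul_of_nonneg_left (key 0) (hγ 0).le
  have kk1 := mul_le_mul_of_nonneg_left (key 1) (hγ 1).le
  have kk2 := mul_le_mul_of_nonneg_left (key 2) (hγ 2).le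
  have hJK : 0 ≤ (1-μ) *
      ((γ 0 * ((∫ s in (0:ℝ)..(min (l 0) (L 0)), (g 0 s)^2)
          + hst 0 * (φ 0 (min (l 0) (L 0)))^2)
        + γ 1 * ((∫ s in (0:ℝ)..(min (l 1) (L 1)), (g 1 s)^2)
          + hst 1 * (φ 1 (min (l 1) (L 1)))^2)
        + γ 2 * ((∫ s in (0:ℝ)..(min (l 2) (L 2)), (g 2 s)^2)
          + hst 2 * (φ 2 (min (l 2) (L 2)))^2))
      - c₀ * (γ 0 * ((∫ s in (0:ℝ)..(min (l 0) (L 0)), (φ 0 s)^2)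
          + (l 0 - min (l 0) (L 0)) * (φ 0 (min (l 0) (L 0)))^2)
        + γ 1 * ((∫ s in (0:ℝ)..(min (l 1) (L 1)), (φ 1 s)^2)
          + (l 1 - min (l 1) (L 1)) * (φ 1 (min (l 1) (L 1)))^2)
        + γ 2 * ((∫ s in (0:ℝ)..(min (l 2) (L 2)), (φ 2 s)^2)
          + (l 2 - min (l 2) (L 2)) * (φ 2 (min (l 2) (L 2)))^2))) :=
    mul_nonneg hμ2 (by linarith only [hKey])
  simp only [Iform, Fin.sum_univ_three]
  linarith only [kk0, kk1, kk2, hJK]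
end

section
/- Let γ¹,γ²,γ³ > 0, l¹,l²,l³ > 0 and h¹_*,h²_*,h³_* ∈ ℝ, and assume the quadratic form I_* is positive definite on E (I_*[φ] > 0 for every nonzero φ ∈ E). Suppose ρⁱ : [0,lⁱ] → ℝ (i = 1,2,3) are C² functions such that: ∂_s²ρⁱ ≡ 0 on [0,lⁱ] for i = 1,2,3; ∂_sρⁱ(lⁱ) + hⁱ_* ρⁱ(lⁱ) = 0 for i = 1,2,3; ∂_sρ¹(0) = ∂_sρ²(0) = ∂_sρ³(0); and Σᵢ₌₁³ γⁱ ρⁱ(0) = 0. Then ρⁱ ≡ 0 for i = 1,2,3. -/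
open MeasureTheory

private lemma stmt8_const_of_deriv_zero {f : ℝ → ℝ} {b : ℝ}
    (hf : ∀ s ∈ Set.Icc (0:ℝ) b, HasDerivWithinAt f 0 (Set.Icc 0 b) s) :
    ∀ s ∈ Set.Icc (0:ℝ) b, f s = f 0 := by
  apply constant_of_has_deriv_right_zero
  · exact fun s hs => (hf s hs).continuousWithinAt
  · intro x hx
    exact (hf x ⟨hx.1, hx.2.le⟩).mono_of_mem_nhdsWithin
      (Filter.mem_of_superset (Ico_mem_nhdsGE_of_mem ⟨le_rfl, hx.2⟩)
        (fun y hy => ⟨hx.1.trans hy.1, hy.2.le⟩))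

theorem stmt8 (γ l h : Fin 3 → ℝ) (hγ : ∀ i, 0 < γ i) (hl : ∀ i, 0 < l i)
    -- `I_*` is positive definite on `E`
    (hpos : ∀ φ g : Fin 3 → ℝ → ℝ, MemE γ l φ g →
      (∃ i, ∃ s ∈ Set.Icc (0 : ℝ) (l i), φ i s ≠ 0) → 0 < Istar γ l h φ g)
    -- ρⁱ is C² on [0, lⁱ] with first derivative ρ'ⁱ and second derivative ρ''ⁱ
    (ρ ρ' ρ'' : Fin 3 → ℝ → ℝ)
    (hρd : ∀ i, ∀ s ∈ Set.Icc (0 : ℝ) (l i),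
      HasDerivWithinAt (ρ i) (ρ' i s) (Set.Icc 0 (l i)) s)
    (hρd2 : ∀ i, ∀ s ∈ Set.Icc (0 : ℝ) (l i),
      HasDerivWithinAt (ρ' i) (ρ'' i s) (Set.Icc 0 (l i)) s)
    (hρc : ∀ i, ContinuousOn (ρ'' i) (Set.Icc 0 (l i)))
    -- ∂ₛ²ρⁱ ≡ 0
    (hlin : ∀ i, ∀ s ∈ Set.Icc (0 : ℝ) (l i), ρ'' i s = 0)
    -- ∂ₛρⁱ(lⁱ) + hⁱ_* ρⁱ(lⁱ) = 0
    (hbc : ∀ i, ρ' i (l i) + h i * ρ i (l i) = 0)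
    -- ∂ₛρ¹(0) = ∂ₛρ²(0) = ∂ₛρ³(0)
    (hjder : ρ' 0 0 = ρ' 1 0 ∧ ρ' 1 0 = ρ' 2 0)
    -- Σ γⁱ ρⁱ(0) = 0
    (hjsum : ∑ i, γ i * ρ i 0 = 0) :
    ∀ i, ∀ s ∈ Set.Icc (0 : ℝ) (l i), ρ i s = 0 := by
  classical
  -- ρ' is constant on each edge
  have hconst : ∀ i, ∀ s ∈ Set.Icc (0:ℝ) (l i), ρ' i s = ρ' i 0 := by
    intro i
    apply stmt8_const_of_deriv_zero
    intro s hs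
    have := hρd2 i s hs
    rwa [hlin i s hs] at this
  set c : Fin 3 → ℝ := fun i => ρ' i 0 with hc
  -- ρ is affine on each edge
  have haff : ∀ i, ∀ s ∈ Set.Icc (0:ℝ) (l i), ρ i s = ρ i 0 + c i * s := by
    intro i
    have key : ∀ s ∈ Set.Icc (0:ℝ) (l i),
        (fun u => ρ i u - c i * u) s = (fun u => ρ i u - c i * u) 0 := by
      apply stmt8_const_of_deriv_zero
      intro s hs
      have h1 := (hρd i s hs).sub ((hasDerivWithinAt_id s _).const_mul (c i))
      exact h1.congr_deriv (by simp [hconst i s hs, hc])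
    intro s hs
    have := key s hs
    simp only [mul_zero, sub_zero] at this
    linarith
  -- membership of (ρ, const c) in E
  have hmem : MemE γ l ρ (fun i _ => c i) := by
    refine ⟨fun i => intervalIntegrable_const, fun i => intervalIntegrable_const,
      fun i s hs => ?_, hjsum⟩
    rw [haff i s hs, intervalIntegral.integral_const, smul_eq_mul]
    ring
  -- value of the quadratic form is zero
  have hIval : Istar γ l h ρ (fun i _ => c i) = 0 := by
    have hterm : ∀ i, γ i * ((∫ s in (0:ℝ)..(l i), (c i) ^ 2)
        + h i * (ρ i (l i)) ^ 2) = -(c 0 * (γ i * ρ i 0)) := by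
      intro i
      have hli : (l i) ∈ Set.Icc (0:ℝ) (l i) := ⟨(hl i).le, le_rfl⟩
      have hρl : ρ i (l i) = ρ i 0 + c i * l i := haff i (l i) hli
      have hbci : c i + h i * ρ i (l i) = 0 := by
        have := hbc i
        rwa [hconst i (l i) hli] at this
      have hci : c i = c 0 := by
        fin_cases i
        · rfl
        · exact hjder.1.symm
        · exact (hjder.1.trans hjder.2).symm
      have hint : (∫ s in (0:ℝ)..(l i), (c i) ^ 2) = l i * (c i) ^ 2 := by
        rw [intervalIntegral.integral_const, smul_eq_mul]; ring
      rw [hint]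
      have hh : h i * (ρ i (l i)) ^ 2 = -(c i) * ρ i (l i) := by
        rw [pow_two, ← mul_assoc]
        have : h i * ρ i (l i) = -(c i) := by linarith
        rw [this]
      rw [hh, hρl, ← hci]
      ring
    calc Istar γ l h ρ (fun i _ => c i)
        = ∑ i, -(c 0 * (γ i * ρ i 0)) := Finset.sum_congr rfl (fun i _ => hterm i)
      _ = -(c 0 * ∑ i, γ i * ρ i 0) := by rw [Finset.mul_sum, Finset.sum_neg_distrib]
      _ = 0 := by rw [hjsum]; ring
  -- conclude
  by_contra hcon
  push_neg at hcon
  obtain ⟨i, s, hs, hne⟩ := hcon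
  have := hpos ρ (fun i _ => c i) hmem ⟨i, s, hs, hne⟩
  rw [hIval] at this
  exact lt_irrefl 0 this
end

section
/- Let X : [0,S] × [0,T] → ℝ² be a C³ map with ‖∂_s X(s,t)‖ = 1 for all (s,t), and define T = ∂_s X, N = R T, κ = ⟨∂_s T, N⟩, V = ⟨∂_t X, N⟩, v = ⟨∂_t X, T⟩. Then the curvature satisfies the evolution equation ∂_t κ = ∂_s²V + κ² V + v ∂_s κ for all (s,t). -/
/-- The anticlockwise rotation of `ℝ²` by `π/2`. -/
def rot2 (u : ℝ × ℝ) : ℝ × ℝ := (-u.2, u.1)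

/-- The Euclidean inner product on `ℝ²`. -/
def dot2 (u w : ℝ × ℝ) : ℝ := u.1 * w.1 + u.2 * w.2

section CurveAux

variable {F : Type*} [NormedAddCommGroup F] [NormedSpace ℝ F]

/-- Directional partial derivative. -/
noncomputable def pd (u : ℝ × ℝ) (g : ℝ × ℝ → F) : ℝ × ℝ → F :=
  fun q => fderiv ℝ g q u

lemma pd_contDiff {n : ℕ} {g : ℝ × ℝ → F} (hg : ContDiff ℝ (n + 1) g) (u : ℝ × ℝ) :
    ContDiff ℝ n (pd u g) := by
  have h : ContDiff ℝ n (fderiv ℝ g) := hg.fderiv_right (by exact_mod_cast le_refl _)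
  exact h.clm_apply contDiff_const

lemma deriv_fix2 {g : ℝ × ℝ → F} (hg : Differentiable ℝ g) (s t : ℝ) :
    deriv (fun σ => g (σ, t)) s = pd (1, 0) g (s, t) := by
  have h : HasDerivAt (fun σ : ℝ => (σ, t)) ((1 : ℝ), (0 : ℝ)) s :=
    (hasDerivAt_id s).prodMk (hasDerivAt_const s t)
  exact ((hg (s, t)).hasFDerivAt.comp_hasDerivAt s h).deriv

lemma deriv_fix1 {g : ℝ × ℝ → F} (hg : Differentiable ℝ g) (s t : ℝ) :
    deriv (fun τ => g (s, τ)) t = pd (0, 1) g (s, t) := by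
  have h : HasDerivAt (fun τ : ℝ => (s, τ)) ((0 : ℝ), (1 : ℝ)) t :=
    (hasDerivAt_const t s).prodMk (hasDerivAt_id t)
  exact ((hg (s, t)).hasFDerivAt.comp_hasDerivAt t h).deriv

lemma pd_comm {g : ℝ × ℝ → F} (hg : ContDiff ℝ 2 g) (u w q : ℝ × ℝ) :
    pd u (pd w g) q = pd w (pd u g) q := by
  have hd : DifferentiableAt ℝ (fderiv ℝ g) q := by
    have h : ContDiff ℝ 1 (fderiv ℝ g) := hg.fderiv_right (by norm_num)
    exact h.differentiable one_ne_zero q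
  have h1 : pd u (pd w g) q = fderiv ℝ (fderiv ℝ g) q u w := by
    show fderiv ℝ (fun p => fderiv ℝ g p w) q u = _
    rw [fderiv_clm_apply hd (differentiableAt_const w)]
    simp
  have h2 : pd w (pd u g) q = fderiv ℝ (fderiv ℝ g) q w u := by
    show fderiv ℝ (fun p => fderiv ℝ g p u) q w = _
    rw [fderiv_clm_apply hd (differentiableAt_const u)]
    simp
  rw [h1, h2]
  exact (hg.contDiffAt.isSymmSndFDerivAt (by norm_num)) u w

end CurveAux

lemma contDiff_rot2 {n : WithTop ℕ∞} {g : ℝ × ℝ → ℝ × ℝ} (hg : ContDiff ℝ n g) :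
    ContDiff ℝ n (fun p => rot2 (g p)) :=
  (hg.snd.neg).prodMk hg.fst

lemma contDiff_dot2 {n : WithTop ℕ∞} {g h : ℝ × ℝ → ℝ × ℝ}
    (hg : ContDiff ℝ n g) (hh : ContDiff ℝ n h) :
    ContDiff ℝ n (fun p => dot2 (g p) (h p)) :=
  (hg.fst.mul hh.fst).add (hg.snd.mul hh.snd)

lemma pd_rot2 {g : ℝ × ℝ → ℝ × ℝ} (hg : Differentiable ℝ g) (u q : ℝ × ℝ) :
    pd u (fun p => rot2 (g p)) q = rot2 (pd u g q) := by
  have Hg := (hg q).hasFDerivAt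
  have H : HasFDerivAt (fun p => rot2 (g p))
      (((-((ContinuousLinearMap.snd ℝ ℝ ℝ).comp (fderiv ℝ g q))).prod
        ((ContinuousLinearMap.fst ℝ ℝ ℝ).comp (fderiv ℝ g q)))) q :=
    (Hg.snd.neg).prodMk Hg.fst
  show fderiv ℝ (fun p => rot2 (g p)) q u = _
  simp only [rot2] at H ⊢
  rw [H.fderiv]
  simp [rot2, pd]

lemma pd_dot2 {g h : ℝ × ℝ → ℝ × ℝ} (hg : Differentiable ℝ g) (hh : Differentiable ℝ h)
    (u q : ℝ × ℝ) :
    pd u (fun p => dot2 (g p) (h p)) q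
      = dot2 (pd u g q) (h q) + dot2 (g q) (pd u h q) := by
  have Hg := (hg q).hasFDerivAt
  have Hh := (hh q).hasFDerivAt
  have H := ((Hg.fst.fun_mul Hh.fst).fun_add (Hg.snd.fun_mul Hh.snd))
  show fderiv ℝ (fun p => dot2 (g p) (h p)) q u = _
  simp only [dot2] at H ⊢
  rw [H.fderiv]
  simp [dot2, pd]
  ring

lemma fderiv_zero_of_const_on {S T : ℝ} (hS : 0 < S) (hT : 0 < T)
    {g : ℝ × ℝ → ℝ} (hg : Differentiable ℝ g) {c : ℝ}
    (hc : ∀ q ∈ (Set.Icc (0:ℝ) S) ×ˢ (Set.Icc (0:ℝ) T), g q = c)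
    {q : ℝ × ℝ} (hq : q ∈ (Set.Icc (0:ℝ) S) ×ˢ (Set.Icc (0:ℝ) T)) (u : ℝ × ℝ) :
    pd u g q = 0 := by
  have hUD : UniqueDiffOn ℝ ((Set.Icc (0:ℝ) S) ×ˢ (Set.Icc (0:ℝ) T)) :=
    (uniqueDiffOn_Icc hS).prod (uniqueDiffOn_Icc hT)
  have h1 : HasFDerivWithinAt g (fderiv ℝ g q) ((Set.Icc (0:ℝ) S) ×ˢ (Set.Icc (0:ℝ) T)) q :=
    (hg q).hasFDerivAt.hasFDerivWithinAt
  have h2 : HasFDerivWithinAt g (0 : ℝ × ℝ →L[ℝ] ℝ)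
      ((Set.Icc (0:ℝ) S) ×ˢ (Set.Icc (0:ℝ) T)) q :=
    (hasFDerivWithinAt_const c q _).congr hc (hc q hq)
  have : fderiv ℝ g q = 0 := (hUD q hq).eq h1 h2
  simp [pd, this]

lemma key_algebra (e w1 b w f2 : ℝ × ℝ)
    (hU : dot2 e e = 1) (hG : dot2 w1 e = 0) (hB : dot2 b e = 0)
    (hW : dot2 w e = -(dot2 w1 w1)) :
    dot2 w1 (rot2 b) - 2 * dot2 b (rot2 w1)
      = dot2 f2 (rot2 w) + (dot2 w1 (rot2 e)) ^ 2 * dot2 f2 (rot2 e)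
        + dot2 f2 e * dot2 w (rot2 e) := by
  obtain ⟨e1, e2⟩ := e
  obtain ⟨p1, p2⟩ := w1
  obtain ⟨b1, b2⟩ := b
  obtain ⟨c1, c2⟩ := w
  obtain ⟨f1, f2'⟩ := f2
  simp only [dot2, rot2] at *
  linear_combination
    (-(3*(p2*b1 - p1*b2)) - (-f1*e2 + f2'*e1)*(p1^2 + p2^2) - (f1*c2 - f2'*c1)) * hU
    + (3*(e2*b1 - e1*b2) + (-f1*e2 + f2'*e1)*(p1*e1 + p2*e2)) * hG
    + (3*(e1*p2 - e2*p1)) * hB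
    + (-(-f1*e2 + f2'*e1)) * hW

lemma dot2_comm (u w : ℝ × ℝ) : dot2 u w = dot2 w u := by
  unfold dot2; ring

lemma dot2_rot2_self (u : ℝ × ℝ) : dot2 u (rot2 u) = 0 := by
  unfold dot2 rot2; ring

section CurveAux2
variable {F : Type*} [NormedAddCommGroup F] [NormedSpace ℝ F]

lemma pd_add {g h : ℝ × ℝ → F} (hg : Differentiable ℝ g) (hh : Differentiable ℝ h)
    (u q : ℝ × ℝ) :
    pd u (fun p => g p + h p) q = pd u g q + pd u h q := by
  simp [pd, fderiv_fun_add (hg q) (hh q)]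

lemma cd_down {n : ℕ} {g : ℝ × ℝ → F} (hg : ContDiff ℝ (n + 1) g) : ContDiff ℝ n g :=
  hg.of_le (by exact_mod_cast Nat.le_succ n)

lemma cd_diff {n : ℕ} {g : ℝ × ℝ → F} (hg : ContDiff ℝ (n + 1) g) : Differentiable ℝ g :=
  hg.differentiable (by exact_mod_cast Nat.succ_ne_zero n)

end CurveAux2

theorem stmt10 (S T : ℝ) (hS : 0 < S) (hT : 0 < T)
    (X : ℝ → ℝ → ℝ × ℝ)
    (hX : ContDiff ℝ 3 (fun q : ℝ × ℝ => X q.1 q.2))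
    (Tg Nv : ℝ → ℝ → ℝ × ℝ) (κ V v : ℝ → ℝ → ℝ)
    (hTg : ∀ s t, Tg s t = deriv (fun σ => X σ t) s)
    -- ‖∂ₛX‖ = 1 (arc-length parameterization)
    (hunit : ∀ s ∈ Set.Icc (0 : ℝ) S, ∀ t ∈ Set.Icc (0 : ℝ) T, dot2 (Tg s t) (Tg s t) = 1)
    (hNv : ∀ s t, Nv s t = rot2 (Tg s t))
    (hκ : ∀ s t, κ s t = dot2 (deriv (fun σ => Tg σ t) s) (Nv s t))
    (hV : ∀ s t, V s t = dot2 (deriv (fun τ => X s τ) t) (Nv s t))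
    (hv : ∀ s t, v s t = dot2 (deriv (fun τ => X s τ) t) (Tg s t)) :
    ∀ s ∈ Set.Icc (0 : ℝ) S, ∀ t ∈ Set.Icc (0 : ℝ) T,
      deriv (fun τ => κ s τ) t
        = deriv (fun σ => deriv (fun σ' => V σ' t) σ) s
          + (κ s t) ^ 2 * V s t + v s t * deriv (fun σ => κ σ t) s := by
  intro s hs t ht
  set f : ℝ × ℝ → ℝ × ℝ := fun q => X q.1 q.2 with hfdef
  have h3 : ContDiff ℝ ((2 : ℕ) + 1) f := by exact_mod_cast hX
  have h2 : ContDiff ℝ ((1 : ℕ) + 1) f := cd_down h3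
  set F1 : ℝ × ℝ → ℝ × ℝ := pd (1, 0) f with hF1def
  set F2 : ℝ × ℝ → ℝ × ℝ := pd (0, 1) f with hF2def
  have hF1 : ContDiff ℝ ((1 : ℕ) + 1) F1 := pd_contDiff h3 _
  have hF2 : ContDiff ℝ ((1 : ℕ) + 1) F2 := pd_contDiff h3 _
  set A : ℝ × ℝ → ℝ × ℝ := pd (1, 0) F2 with hAdef
  set W1 : ℝ × ℝ → ℝ × ℝ := pd (1, 0) F1 with hW1def
  set Wf : ℝ × ℝ → ℝ × ℝ := pd (1, 0) W1 with hWfdef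
  have hA : ContDiff ℝ ((0 : ℕ) + 1) A := pd_contDiff hF2 _
  have hW1 : ContDiff ℝ ((0 : ℕ) + 1) W1 := pd_contDiff hF1 _
  have dF1 : Differentiable ℝ F1 := cd_diff hF1
  have dF2 : Differentiable ℝ F2 := cd_diff hF2
  have dA : Differentiable ℝ A := cd_diff hA
  have dW1 : Differentiable ℝ W1 := cd_diff hW1
  have df : Differentiable ℝ f := cd_diff h3
  -- Schwarz rule: ∂ₜ F1 = ∂ₛ F2 = A
  have hSch : pd (0, 1) F1 = A := by
    funext p
    exact pd_comm (by exact_mod_cast h2) _ _ p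
  -- identification of the given data with pd-expressions
  have hTgF : ∀ σ τ, Tg σ τ = F1 (σ, τ) := by
    intro σ τ
    rw [hTg]
    exact deriv_fix2 df σ τ
  have hKf : ∀ σ τ, κ σ τ = dot2 (W1 (σ, τ)) (rot2 (F1 (σ, τ))) := by
    intro σ τ
    rw [hκ, hNv, hTgF]
    congr 1
    have h : (fun σ' => Tg σ' τ) = fun σ' => F1 (σ', τ) := funext fun σ' => hTgF σ' τ
    rw [h]
    exact deriv_fix2 dF1 σ τ
  have hVf : ∀ σ τ, V σ τ = dot2 (F2 (σ, τ)) (rot2 (F1 (σ, τ))) := by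
    intro σ τ
    rw [hV, hNv, hTgF]
    congr 1
    exact deriv_fix1 df σ τ
  have hvf : ∀ σ τ, v σ τ = dot2 (F2 (σ, τ)) (F1 (σ, τ)) := by
    intro σ τ
    rw [hv, hTgF]
    congr 1
    exact deriv_fix1 df σ τ
  set Kf : ℝ × ℝ → ℝ := fun p => dot2 (W1 p) (rot2 (F1 p)) with hKfdef
  set Vf : ℝ × ℝ → ℝ := fun p => dot2 (F2 p) (rot2 (F1 p)) with hVfdef
  have hKfC : ContDiff ℝ ((0 : ℕ) + 1) Kf :=
    contDiff_dot2 hW1 (contDiff_rot2 (cd_down hF1))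
  have hVfC : ContDiff ℝ ((1 : ℕ) + 1) Vf := contDiff_dot2 hF2 (contDiff_rot2 hF1)
  have dKf : Differentiable ℝ Kf := cd_diff hKfC
  have dVf : Differentiable ℝ Vf := cd_diff hVfC
  have dRotF1 : Differentiable ℝ (fun p => rot2 (F1 p)) := cd_diff (contDiff_rot2 hF1)
  have dRotW1 : Differentiable ℝ (fun p => rot2 (W1 p)) := cd_diff (contDiff_rot2 hW1)
  have hDVf : ∀ p, pd (1, 0) Vf p
      = dot2 (A p) (rot2 (F1 p)) + dot2 (F2 p) (rot2 (W1 p)) := by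
    intro p
    rw [hVfdef]
    rw [pd_dot2 dF2 dRotF1, pd_rot2 dF1]
  have hDVfC : ContDiff ℝ ((0 : ℕ) + 1) (pd (1, 0) Vf) := pd_contDiff hVfC _
  have dDVf : Differentiable ℝ (pd (1, 0) Vf) := cd_diff hDVfC
  -- rewrite the goal in terms of pd
  have egoal1 : deriv (fun τ => κ s τ) t = pd (0, 1) Kf (s, t) := by
    have h : (fun τ => κ s τ) = fun τ => Kf (s, τ) := funext fun τ => hKf s τ
    rw [h]
    exact deriv_fix1 dKf s t
  have egoal2 : deriv (fun σ => κ σ t) s = pd (1, 0) Kf (s, t) := by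
    have h : (fun σ => κ σ t) = fun σ => Kf (σ, t) := funext fun σ => hKf σ t
    rw [h]
    exact deriv_fix2 dKf s t
  have egoal3 : deriv (fun σ => deriv (fun σ' => V σ' t) σ) s
      = pd (1, 0) (pd (1, 0) Vf) (s, t) := by
    have h1 : (fun σ => deriv (fun σ' => V σ' t) σ)
        = fun σ => pd (1, 0) Vf (σ, t) := by
      funext σ
      have h : (fun σ' => V σ' t) = fun σ' => Vf (σ', t) := funext fun σ' => hVf σ' t
      rw [h]
      exact deriv_fix2 dVf σ t
    rw [h1]
    exact deriv_fix2 dDVf s t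
  rw [egoal1, egoal2, egoal3, hKf s t, hVf s t, hvf s t]
  set q : ℝ × ℝ := (s, t) with hqdef
  -- expand the three pd-expressions
  have eL : pd (0, 1) Kf q
      = dot2 (pd (1, 0) A q) (rot2 (F1 q)) + dot2 (W1 q) (rot2 (A q)) := by
    rw [hKfdef]
    rw [pd_dot2 dW1 dRotF1, pd_rot2 dF1]
    have e1 : pd (0, 1) W1 q = pd (1, 0) A q := by
      rw [hW1def]
      rw [pd_comm (by exact_mod_cast hF1 : ContDiff ℝ 2 F1) _ _ q]
      rw [hSch]
    have e2 : pd (0, 1) F1 q = A q := by rw [hSch]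
    rw [e1, e2]
  have eR : pd (1, 0) (pd (1, 0) Vf) q
      = dot2 (pd (1, 0) A q) (rot2 (F1 q)) + 2 * dot2 (A q) (rot2 (W1 q))
        + dot2 (F2 q) (rot2 (Wf q)) := by
    have hfun : pd (1, 0) Vf
        = fun p => dot2 (A p) (rot2 (F1 p)) + dot2 (F2 p) (rot2 (W1 p)) :=
      funext hDVf
    rw [hfun]
    have d1 : Differentiable ℝ (fun p => dot2 (A p) (rot2 (F1 p))) :=
      cd_diff (contDiff_dot2 hA (contDiff_rot2 (cd_down hF1)))
    have d2 : Differentiable ℝ (fun p => dot2 (F2 p) (rot2 (W1 p))) :=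
      cd_diff (contDiff_dot2 (cd_down hF2) (contDiff_rot2 hW1))
    rw [pd_add d1 d2]
    rw [pd_dot2 dA dRotF1, pd_rot2 dF1, pd_dot2 dF2 dRotW1, pd_rot2 dW1]
    have e2 : pd (1, 0) F2 q = A q := rfl
    have e3 : pd (1, 0) F1 q = W1 q := rfl
    have e4 : pd (1, 0) W1 q = Wf q := rfl
    rw [e2, e3, e4]
    ring
  have eK : pd (1, 0) Kf q
      = dot2 (Wf q) (rot2 (F1 q)) + dot2 (W1 q) (rot2 (W1 q)) := by
    rw [hKfdef]
    rw [pd_dot2 dW1 dRotF1, pd_rot2 dF1]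
  rw [eL, eR, eK]
  -- pointwise identities coming from the unit-speed hypothesis
  have hqmem : q ∈ (Set.Icc (0:ℝ) S) ×ˢ (Set.Icc (0:ℝ) T) := ⟨hs, ht⟩
  set Uf : ℝ × ℝ → ℝ := fun p => dot2 (F1 p) (F1 p) with hUfdef
  have hUfC : ContDiff ℝ ((0 : ℕ) + 1) Uf :=
    contDiff_dot2 (cd_down hF1) (cd_down hF1)
  have dUf : Differentiable ℝ Uf := cd_diff hUfC
  have hUfrect : ∀ p ∈ (Set.Icc (0:ℝ) S) ×ˢ (Set.Icc (0:ℝ) T), Uf p = 1 := by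
    rintro ⟨a, b⟩ ⟨ha, hb⟩
    have h := hunit a ha b hb
    rwa [hTgF] at h
  have hU : dot2 (F1 q) (F1 q) = 1 := hUfrect q hqmem
  have hGrect : ∀ p ∈ (Set.Icc (0:ℝ) S) ×ˢ (Set.Icc (0:ℝ) T),
      dot2 (W1 p) (F1 p) = 0 := by
    intro p hp
    have h0 : pd (1, 0) Uf p = 0 := fderiv_zero_of_const_on hS hT dUf hUfrect hp _
    rw [hUfdef, pd_dot2 dF1 dF1] at h0
    have e3 : pd (1, 0) F1 p = W1 p := rfl
    rw [e3] at h0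
    have hc : dot2 (W1 p) (F1 p) = dot2 (F1 p) (W1 p) := dot2_comm _ _
    linarith [h0, hc]
  have hG : dot2 (W1 q) (F1 q) = 0 := hGrect q hqmem
  have hB : dot2 (A q) (F1 q) = 0 := by
    have h0 : pd (0, 1) Uf q = 0 := fderiv_zero_of_const_on hS hT dUf hUfrect hqmem _
    rw [hUfdef, pd_dot2 dF1 dF1, hSch] at h0
    have hc : dot2 (A q) (F1 q) = dot2 (F1 q) (A q) := dot2_comm _ _
    linarith [h0, hc]
  have hW : dot2 (Wf q) (F1 q) = -(dot2 (W1 q) (W1 q)) := by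
    set G1 : ℝ × ℝ → ℝ := fun p => dot2 (W1 p) (F1 p) with hG1def
    have hG1C : ContDiff ℝ ((0 : ℕ) + 1) G1 :=
      contDiff_dot2 hW1 (cd_down hF1)
    have dG1 : Differentiable ℝ G1 := cd_diff hG1C
    have h0 : pd (1, 0) G1 q = 0 := fderiv_zero_of_const_on hS hT dG1 hGrect hqmem _
    rw [hG1def, pd_dot2 dW1 dF1] at h0
    have e3 : pd (1, 0) F1 q = W1 q := rfl
    have e4 : pd (1, 0) W1 q = Wf q := rfl
    rw [e3, e4] at h0
    linarith [h0]
  have hkey := key_algebra (F1 q) (W1 q) (A q) (Wf q) (F2 q) hU hG hB hW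
  have h0 : dot2 (W1 q) (rot2 (W1 q)) = 0 := dot2_rot2_self _
  linear_combination hkey - (dot2 (F2 q) (F1 q)) * h0
end

section
/- Let X : [0,S] × [0,T] → ℝ² be a C¹ map with ‖∂_s X(s,t)‖ = 1 for all (s,t), define T = ∂_s X, N = R T, v = ⟨∂_t X, T⟩, and let ψ : ℝ² → ℝ be C¹. Let r : [0,T] → (0,S) be differentiable and suppose that for all t: ψ(X(r(t),t)) = 0, ⟨∇ψ(X(r(t),t)), N(r(t),t)⟩ = 0, and ⟨∇ψ(X(r(t),t)), T(r(t),t)⟩ ≠ 0. Then v(r(t),t) + r′(t) = 0 for all t. -/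
theorem stmt11 (S T : ℝ) (hS : 0 < S) (hT : 0 < T)
    (X : ℝ → ℝ → ℝ × ℝ)
    (hX : ContDiff ℝ 1 (fun q : ℝ × ℝ => X q.1 q.2))
    (Tg Nv : ℝ → ℝ → ℝ × ℝ) (v : ℝ → ℝ → ℝ)
    (hTg : ∀ s t, Tg s t = deriv (fun σ => X σ t) s)
    -- ‖∂ₛX‖ = 1 (arc-length parameterization)
    (hunit : ∀ s ∈ Set.Icc (0 : ℝ) S, ∀ t ∈ Set.Icc (0 : ℝ) T, dot2 (Tg s t) (Tg s t) = 1)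
    (hNv : ∀ s t, Nv s t = rot2 (Tg s t))
    (hv : ∀ s t, v s t = dot2 (deriv (fun τ => X s τ) t) (Tg s t))
    (ψ : ℝ × ℝ → ℝ) (hψ : ContDiff ℝ 1 ψ)
    (r r' : ℝ → ℝ)
    (hr : ∀ t ∈ Set.Icc (0 : ℝ) T, HasDerivAt r (r' t) t)
    (hrange : ∀ t ∈ Set.Icc (0 : ℝ) T, r t ∈ Set.Ioo 0 S)
    -- the endpoint lies on {ψ = 0}
    (hon : ∀ t ∈ Set.Icc (0 : ℝ) T, ψ (X (r t) t) = 0)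
    -- ⟨∇ψ, N⟩ = 0 and ⟨∇ψ, T⟩ ≠ 0 at the endpoint
    (hperp : ∀ t ∈ Set.Icc (0 : ℝ) T, fderiv ℝ ψ (X (r t) t) (Nv (r t) t) = 0)
    (hnond : ∀ t ∈ Set.Icc (0 : ℝ) T, fderiv ℝ ψ (X (r t) t) (Tg (r t) t) ≠ 0) :
    ∀ t ∈ Set.Icc (0 : ℝ) T, v (r t) t + r' t = 0 := by
  intro t ht
  set F : ℝ × ℝ → ℝ × ℝ := fun q : ℝ × ℝ => X q.1 q.2 with hFdef
  set p : ℝ × ℝ := (r t, t) with hpdef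
  have hF : HasFDerivAt F (fderiv ℝ F p) p :=
    (hX.differentiable one_ne_zero p).hasFDerivAt
  set DF := fderiv ℝ F p with hDF
  have hXp : X (r t) t = F p := rfl
  have hψ' : HasFDerivAt ψ (fderiv ℝ ψ (F p)) (F p) :=
    (hψ.differentiable one_ne_zero _).hasFDerivAt
  set L := fderiv ℝ ψ (F p) with hL
  -- partial derivative in s
  have hs : HasDerivAt (fun σ => X σ t) (DF (1, 0)) (r t) := by
    have h1 : HasDerivAt (fun σ : ℝ => (σ, t)) ((1 : ℝ), (0 : ℝ)) (r t) :=
      HasDerivAt.prodMk (hasDerivAt_id _) (hasDerivAt_const _ _)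
    exact (hF.comp_hasDerivAt (r t) h1 :)
  -- partial derivative in t
  have ht' : HasDerivAt (fun τ => X (r t) τ) (DF (0, 1)) t := by
    have h1 : HasDerivAt (fun τ : ℝ => ((r t : ℝ), τ)) ((0 : ℝ), (1 : ℝ)) t :=
      HasDerivAt.prodMk (hasDerivAt_const _ _) (hasDerivAt_id _)
    exact (hF.comp_hasDerivAt t h1 :)
  have hTgeq : Tg (r t) t = DF (1, 0) := by rw [hTg]; exact hs.deriv
  have hwe : deriv (fun τ => X (r t) τ) t = DF (0, 1) := ht'.deriv
  -- full chain rule along t ↦ (r t, t)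
  have hγ : HasDerivAt (fun τ => ((r τ : ℝ), τ)) ((r' t : ℝ), (1 : ℝ)) t :=
    HasDerivAt.prodMk (hr t ht) (hasDerivAt_id _)
  have hg : HasDerivAt (fun τ => ψ (X (r τ) τ)) (L (DF (r' t, 1))) t := by
    have h1 : HasDerivAt (fun τ => F (r τ, τ)) (DF (r' t, 1)) t :=
      (hF.comp_hasDerivAt_of_eq t hγ rfl :)
    exact (hψ'.comp_hasDerivAt_of_eq t h1 rfl :)
  have hu : UniqueDiffWithinAt ℝ (Set.Icc (0 : ℝ) T) t :=
    (uniqueDiffOn_Icc hT) t ht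
  have h0 : HasDerivWithinAt (fun τ => ψ (X (r τ) τ)) 0 (Set.Icc (0 : ℝ) T) t := by
    exact (hasDerivWithinAt_const t _ (0 : ℝ)).congr (fun τ hτ => hon τ hτ) (hon t ht)
  have hzero : L (DF (r' t, 1)) = 0 :=
    ((hg.hasDerivWithinAt.derivWithin hu).symm.trans (h0.derivWithin hu))
  -- decompose (r' t, 1)
  have hsplit : DF (r' t, 1) = r' t • DF (1, 0) + DF (0, 1) := by
    rw [show ((r' t : ℝ), (1 : ℝ)) = r' t • ((1 : ℝ), (0 : ℝ)) + ((0 : ℝ), (1 : ℝ)) by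
      simp [Prod.ext_iff]]
    rw [map_add, map_smul]
  have hkey : r' t * L (DF (1, 0)) + L (DF (0, 1)) = 0 := by
    rw [hsplit, map_add, map_smul] at hzero
    simpa using hzero
  -- decompose ∂ₜX in the frame (Tg, Nv)
  set a := Tg (r t) t with ha
  set w := deriv (fun τ => X (r t) τ) t with hw
  have hrt : r t ∈ Set.Icc (0 : ℝ) S := Set.Ioo_subset_Icc_self (hrange t ht)
  have hun : a.1 * a.1 + a.2 * a.2 = 1 := hunit (r t) hrt t ht
  have hdec : w = (dot2 w a) • a + (dot2 w (rot2 a)) • rot2 a := by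
    rw [Prod.ext_iff]
    constructor
    · simp only [dot2, rot2, Prod.fst_add, Prod.smul_fst, smul_eq_mul]
      linear_combination (-w.1) * hun
    · simp only [dot2, rot2, Prod.snd_add, Prod.smul_snd, smul_eq_mul]
      linear_combination (-w.2) * hun
  have hperp' : L (rot2 a) = 0 := by
    have := hperp t ht
    rw [hNv] at this
    exact this
  have hLw : L w = v (r t) t * L a := by
    rw [hv (r t) t, ← hw, ← ha]
    calc L w = L ((dot2 w a) • a + (dot2 w (rot2 a)) • rot2 a) := by rw [← hdec]
      _ = dot2 w a * L a + dot2 w (rot2 a) * L (rot2 a) := by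
          rw [map_add, map_smul, map_smul]; rfl
      _ = dot2 w a * L a := by rw [hperp']; ring
  have hLa : L a ≠ 0 := hnond t ht
  have hfinal : (v (r t) t + r' t) * L a = 0 := by
    have e1 : L (DF (1, 0)) = L a := by rw [hTgeq]
    have e2 : L (DF (0, 1)) = L w := by rw [hwe]
    rw [e1, e2] at hkey
    rw [hLw] at hkey
    linarith [hkey]
  exact (mul_eq_zero.mp hfinal).resolve_right hLa
end

section
/- Let X¹, X² : [0,S] × [0,T] → ℝ² be C² maps with ‖∂_s Xⁱ‖ ≡ 1, and define Tⁱ = ∂_s Xⁱ, Nⁱ = R Tⁱ, κⁱ = ⟨∂_s Tⁱ, Nⁱ⟩, Vⁱ = ⟨∂_t Xⁱ, Nⁱ⟩, vⁱ = ⟨∂_t Xⁱ, Tⁱ⟩. Let θ ∈ (0,π) and suppose that for all t: ⟨T¹(0,t), T²(0,t)⟩ = cos θ, ⟨T¹(0,t), N²(0,t)⟩ = −sin θ, and ⟨N¹(0,t), T²(0,t)⟩ = sin θ. Then (∂_s V¹ + κ¹ v¹)(0,t) = (∂_s V² + κ² v²)(0,t) for all t. -/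
lemma hd_fst {u : ℝ → ℝ × ℝ} {u' : ℝ × ℝ} {x : ℝ} (hu : HasDerivAt u u' x) :
    HasDerivAt (fun y => (u y).1) u'.1 x := by
  have := (ContinuousLinearMap.fst ℝ ℝ ℝ).hasFDerivAt.comp_hasDerivAt x hu
  exact this

lemma hd_snd {u : ℝ → ℝ × ℝ} {u' : ℝ × ℝ} {x : ℝ} (hu : HasDerivAt u u' x) :
    HasDerivAt (fun y => (u y).2) u'.2 x := by
  have := (ContinuousLinearMap.snd ℝ ℝ ℝ).hasFDerivAt.comp_hasDerivAt x hu
  exact this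

lemma dot2_hasDerivAt {u w : ℝ → ℝ × ℝ} {u' w' : ℝ × ℝ} {x : ℝ}
    (hu : HasDerivAt u u' x) (hw : HasDerivAt w w' x) :
    HasDerivAt (fun y => dot2 (u y) (w y)) (dot2 u' (w x) + dot2 (u x) w') x := by
  have h := ((hd_fst hu).mul (hd_fst hw)).add ((hd_snd hu).mul (hd_snd hw))
  simp only [dot2]
  convert h using 1
  all_goals first | rfl | ring

lemma rot2_hasDerivAt {u : ℝ → ℝ × ℝ} {u' : ℝ × ℝ} {x : ℝ} (hu : HasDerivAt u u' x) :
    HasDerivAt (fun y => rot2 (u y)) (rot2 u') x :=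
  ((hd_snd hu).neg).prodMk (hd_fst hu)

lemma deriv_zero_of_constOn {φ : ℝ → ℝ} {c C a b x : ℝ} (hab : a < b) (hx : x ∈ Set.Icc a b)
    (hd : HasDerivAt φ c x) (hconst : ∀ y ∈ Set.Icc a b, φ y = C) : c = 0 := by
  have h1 : HasDerivWithinAt φ c (Set.Icc a b) x := hd.hasDerivWithinAt
  have h2 : HasDerivWithinAt (fun _ : ℝ => C) c (Set.Icc a b) x :=
    h1.congr (fun y hy => (hconst y hy).symm) (hconst x hx).symm
  have hu := (uniqueDiffOn_Icc hab) x hx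
  have h3 := h2.derivWithin hu
  have h4 := (hasDerivWithinAt_const x (Set.Icc a b) C).derivWithin hu
  exact h3.symm.trans h4

lemma decomp {g w : ℝ × ℝ} (hg : dot2 g g = 1) (hw : dot2 w g = 0) :
    w = dot2 w (rot2 g) • rot2 g := by
  obtain ⟨a, b⟩ := g; obtain ⟨x, y⟩ := w
  simp only [dot2, rot2, Prod.smul_mk, smul_eq_mul, Prod.mk.injEq] at *
  constructor
  · linear_combination (-x) * hg + a * hw
  · linear_combination (-y) * hg + b * hw

lemma aux2 {g w h : ℝ × ℝ} (hgg : dot2 g g = 1) (hw : dot2 w g = 0) :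
    dot2 h (rot2 w) + dot2 w (rot2 g) * dot2 h g = 0 := by
  obtain ⟨a, b⟩ := g; obtain ⟨x, y⟩ := w; obtain ⟨p, q⟩ := h
  simp only [dot2, rot2] at *
  linear_combination (p * y - q * x) * hgg + (q * a - p * b) * hw

lemma final_alg {g h Gs Gt : ℝ × ℝ} (hgg : dot2 g g = 1) (hGsg : dot2 Gs g = 0)
    (hGtg : dot2 Gt g = 0) :
    dot2 Gt (rot2 g) + dot2 h (rot2 Gs) + dot2 Gs (rot2 g) * dot2 h g = dot2 Gt (rot2 g) := by
  have := aux2 (h := h) hgg hGsg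
  linarith

lemma dot2_smul_left (c : ℝ) (u w : ℝ × ℝ) : dot2 (c • u) w = c * dot2 u w := by
  obtain ⟨a, b⟩ := u; obtain ⟨p, q⟩ := w
  simp only [dot2, Prod.smul_mk, smul_eq_mul]; ring

lemma dot2_smul_right (c : ℝ) (u w : ℝ × ℝ) : dot2 u (c • w) = c * dot2 u w := by
  obtain ⟨a, b⟩ := u; obtain ⟨p, q⟩ := w
  simp only [dot2, Prod.smul_mk, smul_eq_mul]; ring

/-- Key single-curve lemma: `∂ₛV + κ v = ⟨∂ₜT, N⟩ =: ω` at the junction, and `∂ₜT = ω N`. -/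
lemma key (F : ℝ × ℝ → ℝ × ℝ) (hF : ContDiff ℝ 2 F) {S T t : ℝ} (hS : 0 < S) (hT : 0 < T)
    (ht : t ∈ Set.Icc 0 T)
    (hu : ∀ s ∈ Set.Icc (0 : ℝ) S, ∀ τ ∈ Set.Icc (0 : ℝ) T,
      dot2 (fderiv ℝ F (s, τ) (1, 0)) (fderiv ℝ F (s, τ) (1, 0)) = 1) :
    ∃ ω : ℝ,
      HasDerivAt (fun τ => fderiv ℝ F (0, τ) (1, 0))
        (ω • rot2 (fderiv ℝ F (0, t) (1, 0))) t ∧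
      (∀ s τ, HasDerivAt (fun τ' => F (s, τ')) (fderiv ℝ F (s, τ) (0, 1)) τ) ∧
      (∀ s τ, HasDerivAt (fun σ => F (σ, τ)) (fderiv ℝ F (s, τ) (1, 0)) s) ∧
      deriv (fun σ => dot2 (fderiv ℝ F (σ, t) (0, 1)) (rot2 (fderiv ℝ F (σ, t) (1, 0)))) 0
        + dot2 (deriv (fun σ => fderiv ℝ F (σ, t) (1, 0)) 0) (rot2 (fderiv ℝ F (0, t) (1, 0)))
          * dot2 (fderiv ℝ F (0, t) (0, 1)) (fderiv ℝ F (0, t) (1, 0)) = ω := by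
  have hF1 : ContDiff ℝ 1 F := hF.of_le (by norm_num)
  have hFd : Differentiable ℝ F := hF1.differentiable one_ne_zero
  have hDf : ContDiff ℝ 1 (fun q => fderiv ℝ F q) := hF.fderiv_right (le_refl 2)
  have hDfd : Differentiable ℝ (fun q => fderiv ℝ F q) := hDf.differentiable one_ne_zero
  set G : ℝ × ℝ → ℝ × ℝ := fun q => fderiv ℝ F q (1, 0) with hGdef
  set H : ℝ × ℝ → ℝ × ℝ := fun q => fderiv ℝ F q (0, 1) with hHdef
  have hG : ContDiff ℝ 1 G := hDf.clm_apply contDiff_const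
  have hH : ContDiff ℝ 1 H := hDf.clm_apply contDiff_const
  have hGd : Differentiable ℝ G := hG.differentiable one_ne_zero
  have hHd : Differentiable ℝ H := hH.differentiable one_ne_zero
  have hcS : ∀ (τ s : ℝ), HasDerivAt (fun σ : ℝ => (σ, τ)) ((1 : ℝ), (0 : ℝ)) s :=
    fun τ s => (hasDerivAt_id s).prodMk (hasDerivAt_const s τ)
  have hcT : ∀ (σ t : ℝ), HasDerivAt (fun τ : ℝ => (σ, τ)) ((0 : ℝ), (1 : ℝ)) t :=
    fun σ t => (hasDerivAt_const t σ).prodMk (hasDerivAt_id t)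
  have hXs : ∀ s τ, HasDerivAt (fun σ => F (σ, τ)) (G (s, τ)) s := fun s τ => by
    exact (hFd (s, τ)).hasFDerivAt.comp_hasDerivAt s (hcS τ s)
  have hXt : ∀ s τ, HasDerivAt (fun τ' => F (s, τ')) (H (s, τ)) τ := fun s τ => by
    exact (hFd (s, τ)).hasFDerivAt.comp_hasDerivAt τ (hcT s τ)
  have hGsD : ∀ s τ, HasDerivAt (fun σ => G (σ, τ)) (fderiv ℝ G (s, τ) (1, 0)) s := fun s τ => by
    exact (hGd (s, τ)).hasFDerivAt.comp_hasDerivAt s (hcS τ s)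
  have hGtD : ∀ s τ, HasDerivAt (fun τ' => G (s, τ')) (fderiv ℝ G (s, τ) (0, 1)) τ := fun s τ => by
    exact (hGd (s, τ)).hasFDerivAt.comp_hasDerivAt τ (hcT s τ)
  have hHsD : ∀ s τ, HasDerivAt (fun σ => H (σ, τ)) (fderiv ℝ H (s, τ) (1, 0)) s := fun s τ => by
    exact (hHd (s, τ)).hasFDerivAt.comp_hasDerivAt s (hcS τ s)
  -- Clairaut
  have hclair : fderiv ℝ G (0, t) (0, 1) = fderiv ℝ H (0, t) (1, 0) := by
    have eG : HasFDerivAt G ((ContinuousLinearMap.apply ℝ (ℝ × ℝ) ((1:ℝ), (0:ℝ))).comp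
        (fderiv ℝ (fun q => fderiv ℝ F q) (0, t))) (0, t) :=
      (ContinuousLinearMap.apply ℝ (ℝ × ℝ) ((1:ℝ), (0:ℝ))).hasFDerivAt.comp (0, t)
        (hDfd (0, t)).hasFDerivAt
    have eH : HasFDerivAt H ((ContinuousLinearMap.apply ℝ (ℝ × ℝ) ((0:ℝ), (1:ℝ))).comp
        (fderiv ℝ (fun q => fderiv ℝ F q) (0, t))) (0, t) :=
      (ContinuousLinearMap.apply ℝ (ℝ × ℝ) ((0:ℝ), (1:ℝ))).hasFDerivAt.comp (0, t)
        (hDfd (0, t)).hasFDerivAt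
    rw [eG.fderiv, eH.fderiv]
    exact second_derivative_symmetric (fun y => (hFd y).hasFDerivAt)
      (hDfd (0, t)).hasFDerivAt _ _
  have h0S : (0 : ℝ) ∈ Set.Icc (0 : ℝ) S := ⟨le_rfl, hS.le⟩
  have hgg : dot2 (G (0, t)) (G (0, t)) = 1 := hu 0 h0S t ht
  have hGsg : dot2 (fderiv ℝ G (0, t) (1, 0)) (G (0, t)) = 0 := by
    have hder : HasDerivAt (fun σ => dot2 (G (σ, t)) (G (σ, t)))
        (dot2 (fderiv ℝ G (0, t) (1, 0)) (G (0, t)) + dot2 (G (0, t)) (fderiv ℝ G (0, t) (1, 0))) 0 :=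
      dot2_hasDerivAt (hGsD 0 t) (hGsD 0 t)
    have h := deriv_zero_of_constOn hS h0S hder (fun y hy => hu y hy t ht)
    rw [dot2_comm (G (0, t)) (fderiv ℝ G (0, t) (1, 0))] at h
    linarith
  have hGtg : dot2 (fderiv ℝ G (0, t) (0, 1)) (G (0, t)) = 0 := by
    have hder : HasDerivAt (fun τ => dot2 (G (0, τ)) (G (0, τ)))
        (dot2 (fderiv ℝ G (0, t) (0, 1)) (G (0, t)) + dot2 (G (0, t)) (fderiv ℝ G (0, t) (0, 1))) t :=
      dot2_hasDerivAt (hGtD 0 t) (hGtD 0 t)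
    have h := deriv_zero_of_constOn hT ht hder (fun y hy => hu 0 h0S y hy)
    rw [dot2_comm (G (0, t)) (fderiv ℝ G (0, t) (0, 1))] at h
    linarith
  refine ⟨dot2 (fderiv ℝ G (0, t) (0, 1)) (rot2 (G (0, t))), ?_, hXt, hXs, ?_⟩
  · have h1 := hGtD 0 t
    have h2 : fderiv ℝ G (0, t) (0, 1)
        = dot2 (fderiv ℝ G (0, t) (0, 1)) (rot2 (G (0, t))) • rot2 (G (0, t)) :=
      decomp hgg hGtg
    rw [h2] at h1
    exact h1
  · have hVder : HasDerivAt (fun σ => dot2 (H (σ, t)) (rot2 (G (σ, t))))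
        (dot2 (fderiv ℝ H (0, t) (1, 0)) (rot2 (G (0, t)))
          + dot2 (H (0, t)) (rot2 (fderiv ℝ G (0, t) (1, 0)))) 0 :=
      dot2_hasDerivAt (hHsD 0 t) (rot2_hasDerivAt (hGsD 0 t))
    show deriv (fun σ => dot2 (H (σ, t)) (rot2 (G (σ, t)))) 0
        + dot2 (deriv (fun σ => G (σ, t)) 0) (rot2 (G (0, t))) * dot2 (H (0, t)) (G (0, t))
        = dot2 (fderiv ℝ G (0, t) (0, 1)) (rot2 (G (0, t)))
    rw [hVder.deriv, (hGsD 0 t).deriv, ← hclair]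
    exact final_alg hgg hGsg hGtg

theorem stmt12 (S T : ℝ) (hS : 0 < S) (hT : 0 < T)
    (X : Fin 2 → ℝ → ℝ → ℝ × ℝ)
    (hX : ∀ i, ContDiff ℝ 2 (fun q : ℝ × ℝ => X i q.1 q.2))
    (Tg Nv : Fin 2 → ℝ → ℝ → ℝ × ℝ) (κ V v : Fin 2 → ℝ → ℝ → ℝ)
    (hTg : ∀ i s t, Tg i s t = deriv (fun σ => X i σ t) s)
    -- ‖∂ₛXⁱ‖ ≡ 1 (arc-length parameterizations)
    (hunit : ∀ i, ∀ s ∈ Set.Icc (0 : ℝ) S, ∀ t ∈ Set.Icc (0 : ℝ) T,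
      dot2 (Tg i s t) (Tg i s t) = 1)
    (hNv : ∀ i s t, Nv i s t = rot2 (Tg i s t))
    (hκ : ∀ i s t, κ i s t = dot2 (deriv (fun σ => Tg i σ t) s) (Nv i s t))
    (hV : ∀ i s t, V i s t = dot2 (deriv (fun τ => X i s τ) t) (Nv i s t))
    (hv : ∀ i s t, v i s t = dot2 (deriv (fun τ => X i s τ) t) (Tg i s t))
    (θ : ℝ) (hθ : θ ∈ Set.Ioo 0 Real.pi)
    -- fixed angle conditions at the junction point s = 0
    (hang1 : ∀ t ∈ Set.Icc (0 : ℝ) T, dot2 (Tg 0 0 t) (Tg 1 0 t) = Real.cos θ)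
    (hang2 : ∀ t ∈ Set.Icc (0 : ℝ) T, dot2 (Tg 0 0 t) (Nv 1 0 t) = -Real.sin θ)
    (hang3 : ∀ t ∈ Set.Icc (0 : ℝ) T, dot2 (Nv 0 0 t) (Tg 1 0 t) = Real.sin θ) :
    ∀ t ∈ Set.Icc (0 : ℝ) T,
      deriv (fun σ => V 0 σ t) 0 + κ 0 0 t * v 0 0 t
        = deriv (fun σ => V 1 σ t) 0 + κ 1 0 t * v 1 0 t := by
  intro t ht
  have hXs : ∀ (i : Fin 2) (s τ : ℝ), HasDerivAt (fun σ => X i σ τ)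
      (fderiv ℝ (fun q : ℝ × ℝ => X i q.1 q.2) (s, τ) (1, 0)) s := by
    intro i s τ
    have hFd : Differentiable ℝ (fun q : ℝ × ℝ => X i q.1 q.2) :=
      (hX i).differentiable (by norm_num)
    have hc : HasDerivAt (fun σ : ℝ => (σ, τ)) ((1 : ℝ), (0 : ℝ)) s :=
      (hasDerivAt_id s).prodMk (hasDerivAt_const s τ)
    exact (hFd (s, τ)).hasFDerivAt.comp_hasDerivAt s hc
  have hXt : ∀ (i : Fin 2) (s τ : ℝ), HasDerivAt (fun τ' => X i s τ')
      (fderiv ℝ (fun q : ℝ × ℝ => X i q.1 q.2) (s, τ) (0, 1)) τ := by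
    intro i s τ
    have hFd : Differentiable ℝ (fun q : ℝ × ℝ => X i q.1 q.2) :=
      (hX i).differentiable (by norm_num)
    have hc : HasDerivAt (fun τ' : ℝ => (s, τ')) ((0 : ℝ), (1 : ℝ)) τ :=
      (hasDerivAt_const τ s).prodMk (hasDerivAt_id τ)
    exact (hFd (s, τ)).hasFDerivAt.comp_hasDerivAt τ hc
  have hTG : ∀ (i : Fin 2) (s τ : ℝ),
      Tg i s τ = fderiv ℝ (fun q : ℝ × ℝ => X i q.1 q.2) (s, τ) (1, 0) := by
    intro i s τ
    rw [hTg]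
    exact (hXs i s τ).deriv
  have hDt : ∀ (i : Fin 2) (s τ : ℝ),
      deriv (fun τ' => X i s τ') τ = fderiv ℝ (fun q : ℝ × ℝ => X i q.1 q.2) (s, τ) (0, 1) :=
    fun i s τ => (hXt i s τ).deriv
  have hu' : ∀ (i : Fin 2), ∀ s ∈ Set.Icc (0 : ℝ) S, ∀ τ ∈ Set.Icc (0 : ℝ) T,
      dot2 (fderiv ℝ (fun q : ℝ × ℝ => X i q.1 q.2) (s, τ) (1, 0))
        (fderiv ℝ (fun q : ℝ × ℝ => X i q.1 q.2) (s, τ) (1, 0)) = 1 := by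
    intro i s hs τ hτ
    rw [← hTG i s τ]
    exact hunit i s hs τ hτ
  obtain ⟨ω₀, hA₀, -, -, hB₀⟩ := key (fun q : ℝ × ℝ => X 0 q.1 q.2) (hX 0) hS hT ht (hu' 0)
  obtain ⟨ω₁, hA₁, -, -, hB₁⟩ := key (fun q : ℝ × ℝ => X 1 q.1 q.2) (hX 1) hS hT ht (hu' 1)
  -- identify the LHS/RHS with ω₀/ω₁
  have hmain : ∀ (i : Fin 2) (ω : ℝ),
      (deriv (fun σ => dot2 (fderiv ℝ (fun q : ℝ × ℝ => X i q.1 q.2) (σ, t) (0, 1))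
          (rot2 (fderiv ℝ (fun q : ℝ × ℝ => X i q.1 q.2) (σ, t) (1, 0)))) 0
        + dot2 (deriv (fun σ => fderiv ℝ (fun q : ℝ × ℝ => X i q.1 q.2) (σ, t) (1, 0)) 0)
            (rot2 (fderiv ℝ (fun q : ℝ × ℝ => X i q.1 q.2) (0, t) (1, 0)))
          * dot2 (fderiv ℝ (fun q : ℝ × ℝ => X i q.1 q.2) (0, t) (0, 1))
            (fderiv ℝ (fun q : ℝ × ℝ => X i q.1 q.2) (0, t) (1, 0)) = ω) →
      deriv (fun σ => V i σ t) 0 + κ i 0 t * v i 0 t = ω := by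
    intro i ω hB
    have e1 : (fun σ => V i σ t)
        = fun σ => dot2 (fderiv ℝ (fun q : ℝ × ℝ => X i q.1 q.2) (σ, t) (0, 1))
            (rot2 (fderiv ℝ (fun q : ℝ × ℝ => X i q.1 q.2) (σ, t) (1, 0))) := by
      funext σ
      rw [hV, hNv, hTG, hDt]
    have e2 : (fun σ => Tg i σ t)
        = fun σ => fderiv ℝ (fun q : ℝ × ℝ => X i q.1 q.2) (σ, t) (1, 0) :=
      funext fun σ => hTG i σ t
    rw [e1, hκ, hNv, hTG, e2, hv, hDt, hTG]
    exact hB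
  have hL₀ := hmain 0 ω₀ hB₀
  have hL₁ := hmain 1 ω₁ hB₁
  -- ω₀ = ω₁ from the fixed-angle condition
  have hangD := dot2_hasDerivAt hA₀ hA₁
  have hzero := deriv_zero_of_constOn hT ht hangD (fun y hy => by
    rw [← hTG 0 0 y, ← hTG 1 0 y]
    exact hang1 y hy)
  rw [dot2_smul_left, dot2_smul_right] at hzero
  have e3 : dot2 (rot2 (fderiv ℝ (fun q : ℝ × ℝ => X 0 q.1 q.2) (0, t) (1, 0)))
      (fderiv ℝ (fun q : ℝ × ℝ => X 1 q.1 q.2) (0, t) (1, 0)) = Real.sin θ := by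
    rw [← hTG 0 0 t, ← hTG 1 0 t, ← hNv 0 0 t]
    exact hang3 t ht
  have e4 : dot2 (fderiv ℝ (fun q : ℝ × ℝ => X 0 q.1 q.2) (0, t) (1, 0))
      (rot2 (fderiv ℝ (fun q : ℝ × ℝ => X 1 q.1 q.2) (0, t) (1, 0))) = -Real.sin θ := by
    rw [← hTG 0 0 t, ← hTG 1 0 t, ← hNv 1 0 t]
    exact hang2 t ht
  rw [e3, e4] at hzero
  have hsin : Real.sin θ ≠ 0 := ne_of_gt (Real.sin_pos_of_pos_of_lt_pi hθ.1 hθ.2)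
  have hωeq : ω₀ = ω₁ := by
    apply mul_right_cancel₀ hsin
    linarith
  rw [hL₀, hL₁, hωeq]
end

section
/- Let X : [0,S] × [0,T] → ℝ² be a C³ map with ‖∂_s X(s,t)‖ = 1 for all (s,t), define T = ∂_s X, N = R T, κ = ⟨∂_s T, N⟩, V = ⟨∂_t X, N⟩, v = ⟨∂_t X, T⟩, and assume the curvature flow equation V = κ holds everywhere. Let ψ : ℝ² → ℝ be C², let r : [0,T] → (0,S) be differentiable, and suppose that for all t: ψ(X(r(t),t)) = 0, ⟨∇ψ(X(r(t),t)), N(r(t),t)⟩ = 0, and ⟨∇ψ(X(r(t),t)), T(r(t),t)⟩ ≠ 0. Define h(t) = −⟨D²ψ(X(r(t),t)) N(r(t),t), N(r(t),t)⟩ / ⟨∇ψ(X(r(t),t)), T(r(t),t)⟩. Then ∂_s κ(r(t),t) + h(t) κ(r(t),t) = 0 for all t. -/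
open Set

lemma clm_pair {E : Type*} [NormedAddCommGroup E] [NormedSpace ℝ E]
    (L : ℝ × ℝ →L[ℝ] E) (a b : ℝ) : L (a, b) = a • L (1, 0) + b • L (0, 1) := by
  have h : ((a, b) : ℝ × ℝ) = a • ((1 : ℝ), (0 : ℝ)) + b • ((0 : ℝ), (1 : ℝ)) := by
    simp [Prod.ext_iff]
  rw [h, map_add, map_smul, map_smul]

lemma hasDerivAt_dot2 {u w : ℝ → ℝ × ℝ} {u' w' : ℝ × ℝ} {t : ℝ}
    (hu : HasDerivAt u u' t) (hw : HasDerivAt w w' t) :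
    HasDerivAt (fun t => dot2 (u t) (w t)) (dot2 u' (w t) + dot2 (u t) w') t := by
  have h1 : HasDerivAt (fun t => (u t).1) u'.1 t :=
    (ContinuousLinearMap.fst ℝ ℝ ℝ).hasFDerivAt.comp_hasDerivAt t hu
  have h2 : HasDerivAt (fun t => (u t).2) u'.2 t :=
    (ContinuousLinearMap.snd ℝ ℝ ℝ).hasFDerivAt.comp_hasDerivAt t hu
  have h3 : HasDerivAt (fun t => (w t).1) w'.1 t :=
    (ContinuousLinearMap.fst ℝ ℝ ℝ).hasFDerivAt.comp_hasDerivAt t hw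
  have h4 : HasDerivAt (fun t => (w t).2) w'.2 t :=
    (ContinuousLinearMap.snd ℝ ℝ ℝ).hasFDerivAt.comp_hasDerivAt t hw
  have := ((h1.mul h3).add (h2.mul h4))
  simp only [dot2]
  convert this using 1
  all_goals first | rfl | ring

lemma hasDerivAt_rot2 {u : ℝ → ℝ × ℝ} {u' : ℝ × ℝ} {t : ℝ}
    (hu : HasDerivAt u u' t) :
    HasDerivAt (fun t => rot2 (u t)) (rot2 u') t := by
  have h1 : HasDerivAt (fun t => (u t).1) u'.1 t :=
    (ContinuousLinearMap.fst ℝ ℝ ℝ).hasFDerivAt.comp_hasDerivAt t hu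
  have h2 : HasDerivAt (fun t => (u t).2) u'.2 t :=
    (ContinuousLinearMap.snd ℝ ℝ ℝ).hasFDerivAt.comp_hasDerivAt t hu
  exact (HasDerivAt.prodMk h2.neg h1)

lemma hasDerivAt_horiz {E : Type*} [NormedAddCommGroup E] [NormedSpace ℝ E]
    {G : ℝ × ℝ → E} {s t : ℝ} (hG : DifferentiableAt ℝ G (s, t)) :
    HasDerivAt (fun σ => G (σ, t)) (fderiv ℝ G (s, t) (1, 0)) s := by
  have h : HasDerivAt (fun σ : ℝ => ((σ, t) : ℝ × ℝ)) ((1 : ℝ), (0 : ℝ)) s :=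
    HasDerivAt.prodMk (hasDerivAt_id s) (hasDerivAt_const s t)
  exact hG.hasFDerivAt.comp_hasDerivAt s h

lemma hasDerivAt_vert {E : Type*} [NormedAddCommGroup E] [NormedSpace ℝ E]
    {G : ℝ × ℝ → E} {s t : ℝ} (hG : DifferentiableAt ℝ G (s, t)) :
    HasDerivAt (fun τ => G (s, τ)) (fderiv ℝ G (s, t) (0, 1)) t := by
  have h : HasDerivAt (fun τ : ℝ => ((s, τ) : ℝ × ℝ)) ((0 : ℝ), (1 : ℝ)) t :=
    HasDerivAt.prodMk (hasDerivAt_const t s) (hasDerivAt_id t)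
  exact hG.hasFDerivAt.comp_hasDerivAt t h

lemma hasDerivAt_diag {E : Type*} [NormedAddCommGroup E] [NormedSpace ℝ E]
    {G : ℝ × ℝ → E} {r : ℝ → ℝ} {r' t : ℝ} (hr : HasDerivAt r r' t)
    (hG : DifferentiableAt ℝ G (r t, t)) :
    HasDerivAt (fun τ => G (r τ, τ)) (fderiv ℝ G (r t, t) (r', 1)) t := by
  have h : HasDerivAt (fun τ : ℝ => ((r τ, τ) : ℝ × ℝ)) ((r' : ℝ), (1 : ℝ)) t :=
    HasDerivAt.prodMk hr (hasDerivAt_id t)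
  exact HasFDerivAt.comp_hasDerivAt (f := fun τ : ℝ => ((r τ, τ) : ℝ × ℝ)) t hG.hasFDerivAt h

lemma deriv_zero_of_zero_on_Icc {f : ℝ → ℝ} {d a b t : ℝ} (hab : a < b) (ht : t ∈ Icc a b)
    (hf : HasDerivAt f d t) (h0 : ∀ u ∈ Icc a b, f u = 0) : d = 0 := by
  have h1 : HasDerivWithinAt f d (Icc a b) t := hf.hasDerivWithinAt
  have h2 : HasDerivWithinAt f 0 (Icc a b) t :=
    (hasDerivWithinAt_const t (Icc a b) (0 : ℝ)).congr h0 (h0 t ht)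
  have hu := (uniqueDiffOn_Icc hab) t ht
  exact (h1.derivWithin hu).symm.trans (h2.derivWithin hu)

lemma decomp2 {u w : ℝ × ℝ} (hu : dot2 u u = 1) :
    w = dot2 w u • u + dot2 w (rot2 u) • rot2 u := by
  simp only [dot2, rot2] at *
  apply Prod.ext
  · simp only [Prod.fst_add, Prod.smul_fst, smul_eq_mul]
    linear_combination (-w.1) * hu
  · simp only [Prod.snd_add, Prod.smul_snd, smul_eq_mul]
    linear_combination (-w.2) * hu

/-- The gradient of a scalar function on `ℝ²`, as a pair. -/
noncomputable def grad2 (ψ : ℝ × ℝ → ℝ) (y : ℝ × ℝ) : ℝ × ℝ :=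
  (fderiv ℝ ψ y (1, 0), fderiv ℝ ψ y (0, 1))

lemma fderiv_eq_dot2_grad2 (ψ : ℝ × ℝ → ℝ) (y w : ℝ × ℝ) :
    fderiv ℝ ψ y w = dot2 (grad2 ψ y) w := by
  have h : w = (w.1, w.2) := rfl
  rw [h, clm_pair]
  simp [grad2, dot2]
  ring

lemma grad2_contDiff {ψ : ℝ × ℝ → ℝ} (hψ : ContDiff ℝ 2 ψ) :
    ContDiff ℝ 1 (grad2 ψ) :=
  ((hψ.fderiv_right (by norm_num)).clm_apply contDiff_const).prodMk
    ((hψ.fderiv_right (by norm_num)).clm_apply contDiff_const)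

lemma hess_eq {ψ : ℝ × ℝ → ℝ} (hψ : ContDiff ℝ 2 ψ) (y w u : ℝ × ℝ) :
    fderiv ℝ (fun z => fderiv ℝ ψ z u) y w = dot2 (fderiv ℝ (grad2 ψ) y w) u := by
  have hΦ : Differentiable ℝ (fderiv ℝ ψ) :=
    (hψ.fderiv_right (le_refl _)).differentiable one_ne_zero
  have h1 : fderiv ℝ (fun z => fderiv ℝ ψ z u) y = (fderiv ℝ (fderiv ℝ ψ) y).flip u := by
    have := fderiv_clm_apply (c := fderiv ℝ ψ) (u := fun _ => u) (hΦ y)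
      (differentiableAt_const u)
    simpa using this
  have hD1 : DifferentiableAt ℝ (fun z => fderiv ℝ ψ z (1, 0)) y :=
    (hΦ y).clm_apply (differentiableAt_const _)
  have hD2 : DifferentiableAt ℝ (fun z => fderiv ℝ ψ z (0, 1)) y :=
    (hΦ y).clm_apply (differentiableAt_const _)
  have h2 : fderiv ℝ (grad2 ψ) y w =
      (fderiv ℝ (fun z => fderiv ℝ ψ z (1, 0)) y w, fderiv ℝ (fun z => fderiv ℝ ψ z (0, 1)) y w) := by
    have := (HasFDerivAt.prodMk hD1.hasFDerivAt hD2.hasFDerivAt).fderiv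
    rw [show grad2 ψ = fun z => (fderiv ℝ ψ z (1, 0), fderiv ℝ ψ z (0, 1)) from rfl, this]
    rfl
  have h3 : fderiv ℝ (fun z => fderiv ℝ ψ z (1, 0)) y = (fderiv ℝ (fderiv ℝ ψ) y).flip (1, 0) := by
    have := fderiv_clm_apply (c := fderiv ℝ ψ) (u := fun _ => ((1 : ℝ), (0 : ℝ))) (hΦ y)
      (differentiableAt_const _)
    simpa using this
  have h4 : fderiv ℝ (fun z => fderiv ℝ ψ z (0, 1)) y = (fderiv ℝ (fderiv ℝ ψ) y).flip (0, 1) := by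
    have := fderiv_clm_apply (c := fderiv ℝ ψ) (u := fun _ => ((0 : ℝ), (1 : ℝ))) (hΦ y)
      (differentiableAt_const _)
    simpa using this
  rw [h1, h2, h3, h4]
  simp only [ContinuousLinearMap.flip_apply, dot2]
  have h5 : u = (u.1, u.2) := rfl
  rw [h5, clm_pair (fderiv ℝ (fderiv ℝ ψ) y w)]
  simp
  ring

lemma final_algebra (D : ℝ × ℝ →L[ℝ] ℝ × ℝ) (G Tv FssV FtsV cd Fsd : ℝ × ℝ)
    (a0 a' b0 b' k0 rp : ℝ)
    (hPn : dot2 G (rot2 Tv) = 0)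
    (hrp : rp = -a0)
    (hFssV : FssV = k0 • rot2 Tv)
    (hFts : FtsV = a0 • FssV + a' • Tv + (b0 • rot2 FssV + b' • rot2 Tv))
    (hcd : cd = rp • Tv + (a0 • Tv + b0 • rot2 Tv))
    (hFsd : Fsd = rp • FssV + FtsV)
    (hgd : dot2 (D cd) (rot2 Tv) + dot2 G (rot2 Fsd) = 0) :
    b0 * dot2 (D (rot2 Tv)) (rot2 Tv) - b' * dot2 G Tv = 0 := by
  have hcd' : cd = b0 • rot2 Tv := by rw [hcd, hrp]; module
  rw [hcd', map_smul] at hgd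
  subst hFssV hFts hFsd hrp
  obtain ⟨g1, g2⟩ := G
  obtain ⟨t1, t2⟩ := Tv
  simp only [dot2, rot2, Prod.smul_fst, Prod.smul_snd, Prod.fst_add, Prod.snd_add,
    smul_eq_mul, Prod.fst_neg, Prod.snd_neg, neg_neg, neg_mul, mul_neg] at hgd hPn ⊢
  linear_combination hgd - (a' - b0 * k0) * hPn

theorem stmt13 (S T : ℝ) (hS : 0 < S) (hT : 0 < T)
    (X : ℝ → ℝ → ℝ × ℝ)
    (hX : ContDiff ℝ 3 (fun q : ℝ × ℝ => X q.1 q.2))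
    (Tg Nv : ℝ → ℝ → ℝ × ℝ) (κ V v : ℝ → ℝ → ℝ)
    (hTg : ∀ s t, Tg s t = deriv (fun σ => X σ t) s)
    -- ‖∂ₛX‖ = 1 (arc-length parameterization)
    (hunit : ∀ s ∈ Set.Icc (0 : ℝ) S, ∀ t ∈ Set.Icc (0 : ℝ) T, dot2 (Tg s t) (Tg s t) = 1)
    (hNv : ∀ s t, Nv s t = rot2 (Tg s t))
    (hκ : ∀ s t, κ s t = dot2 (deriv (fun σ => Tg σ t) s) (Nv s t))
    (hV : ∀ s t, V s t = dot2 (deriv (fun τ => X s τ) t) (Nv s t))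
    (hv : ∀ s t, v s t = dot2 (deriv (fun τ => X s τ) t) (Tg s t))
    -- the curvature flow equation V = κ
    (hflow : ∀ s ∈ Set.Icc (0 : ℝ) S, ∀ t ∈ Set.Icc (0 : ℝ) T, V s t = κ s t)
    (ψ : ℝ × ℝ → ℝ) (hψ : ContDiff ℝ 2 ψ)
    (r r' : ℝ → ℝ)
    (hr : ∀ t ∈ Set.Icc (0 : ℝ) T, HasDerivAt r (r' t) t)
    (hrange : ∀ t ∈ Set.Icc (0 : ℝ) T, r t ∈ Set.Ioo 0 S)
    -- the endpoint lies on {ψ = 0}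
    (hon : ∀ t ∈ Set.Icc (0 : ℝ) T, ψ (X (r t) t) = 0)
    -- ⟨∇ψ, N⟩ = 0 and ⟨∇ψ, T⟩ ≠ 0 at the endpoint
    (hperp : ∀ t ∈ Set.Icc (0 : ℝ) T, fderiv ℝ ψ (X (r t) t) (Nv (r t) t) = 0)
    (hnond : ∀ t ∈ Set.Icc (0 : ℝ) T, fderiv ℝ ψ (X (r t) t) (Tg (r t) t) ≠ 0)
    -- h(t) = −⟨D²ψ N, N⟩ / ⟨∇ψ, T⟩ at the contact point
    (h : ℝ → ℝ)
    (hdef : ∀ t ∈ Set.Icc (0 : ℝ) T,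
      h t = -(fderiv ℝ (fun y => fderiv ℝ ψ y (Nv (r t) t)) (X (r t) t) (Nv (r t) t))
              / fderiv ℝ ψ (X (r t) t) (Tg (r t) t)) :
    ∀ t ∈ Set.Icc (0 : ℝ) T,
      deriv (fun σ => κ σ t) (r t) + h t * κ (r t) t = 0 := by
  
  intro t0 ht0
  set F : ℝ × ℝ → ℝ × ℝ := fun q : ℝ × ℝ => X q.1 q.2 with hFdef
  have hXF : ∀ s t, X s t = F (s, t) := fun _ _ => rfl
  have hFd : Differentiable ℝ F := hX.differentiable (by norm_num)
  set Fs : ℝ × ℝ → ℝ × ℝ := fun q => fderiv ℝ F q (1, 0) with hFsdef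
  set Ft : ℝ × ℝ → ℝ × ℝ := fun q => fderiv ℝ F q (0, 1) with hFtdef
  have hFsC : ContDiff ℝ 2 Fs := (hX.fderiv_right (by norm_num)).clm_apply contDiff_const
  have hFtC : ContDiff ℝ 2 Ft := (hX.fderiv_right (by norm_num)).clm_apply contDiff_const
  have hFsd : Differentiable ℝ Fs := hFsC.differentiable (by norm_num)
  have hFtd : Differentiable ℝ Ft := hFtC.differentiable (by norm_num)
  have hTgFs : ∀ s t, Tg s t = Fs (s, t) := fun s t => by
    rw [hTg]; exact (hasDerivAt_horiz (hFd (s, t))).deriv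
  have hXtFt : ∀ s t, deriv (fun τ => X s τ) t = Ft (s, t) := fun s t =>
    (hasDerivAt_vert (G := F) (hFd (s, t))).deriv
  have hKd : ∀ s t, deriv (fun σ => Tg σ t) s = fderiv ℝ Fs (s, t) (1, 0) := fun s t => by
    have he : (fun σ => Tg σ t) = fun σ => Fs (σ, t) := funext fun σ => hTgFs σ t
    rw [he]; exact (hasDerivAt_horiz (hFsd (s, t))).deriv
  obtain ⟨hr0, hrS⟩ := hrange t0 ht0
  have hrmem : r t0 ∈ Set.Icc 0 S := Set.Ioo_subset_Icc_self (hrange t0 ht0)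
  have hrt : HasDerivAt r (r' t0) t0 := hr t0 ht0
  have hunit' : ∀ s ∈ Set.Icc (0 : ℝ) S, dot2 (Fs (s, t0)) (Fs (s, t0)) = 1 := fun s hs => by
    rw [← hTgFs]; exact hunit s hs t0 ht0
  -- point and basic curves
  have hu1 : HasDerivAt (fun s => Fs (s, t0)) (fderiv ℝ Fs (r t0, t0) (1, 0)) (r t0) :=
    hasDerivAt_horiz (hFsd (r t0, t0))
  have hFt1 : HasDerivAt (fun s => Ft (s, t0)) (fderiv ℝ Ft (r t0, t0) (1, 0)) (r t0) :=
    hasDerivAt_horiz (hFtd (r t0, t0))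
  -- ⟨∂ₛT, T⟩ = 0
  have hFss_T : dot2 (fderiv ℝ Fs (r t0, t0) (1, 0)) (Fs (r t0, t0))
      + dot2 (Fs (r t0, t0)) (fderiv ℝ Fs (r t0, t0) (1, 0)) = 0 := by
    have hd := hasDerivAt_dot2 hu1 hu1
    have hev : (fun s => dot2 (Fs (s, t0)) (Fs (s, t0))) =ᶠ[nhds (r t0)] fun _ => (1 : ℝ) :=
      Filter.eventuallyEq_of_mem (Ioo_mem_nhds hr0 hrS)
        (fun s hs => hunit' s (Set.Ioo_subset_Icc_self hs))
    have hd' : HasDerivAt (fun s => dot2 (Fs (s, t0)) (Fs (s, t0))) 0 (r t0) :=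
      (hasDerivAt_const (r t0) (1 : ℝ)).congr_of_eventuallyEq hev
    exact hd.unique hd'
  have hFss_T' : dot2 (fderiv ℝ Fs (r t0, t0) (1, 0)) (Fs (r t0, t0)) = 0 := by
    have hc : dot2 (fderiv ℝ Fs (r t0, t0) (1, 0)) (Fs (r t0, t0))
        = dot2 (Fs (r t0, t0)) (fderiv ℝ Fs (r t0, t0) (1, 0)) := by simp [dot2]; ring
    linarith [hFss_T, hc]
  -- κ₀
  have hκ0 : κ (r t0) t0 = dot2 (fderiv ℝ Fs (r t0, t0) (1, 0)) (rot2 (Fs (r t0, t0))) := by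
    rw [hκ, hKd, hNv, hTgFs]
  -- Frenet: ∂ₛT = κ N
  have hFssN : fderiv ℝ Fs (r t0, t0) (1, 0) = κ (r t0) t0 • rot2 (Fs (r t0, t0)) := by
    have hdec := decomp2 (u := Fs (r t0, t0)) (w := fderiv ℝ Fs (r t0, t0) (1, 0))
      (hunit' (r t0) hrmem)
    rw [hFss_T', ← hκ0, zero_smul, zero_add] at hdec
    exact hdec
  -- symmetry of second derivatives: Fst = Fts
  have hΦC : ContDiff ℝ 2 (fderiv ℝ F) := hX.fderiv_right (by norm_num)
  have hΦd : Differentiable ℝ (fderiv ℝ F) := hΦC.differentiable (by norm_num)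
  have hsymm : fderiv ℝ Fs (r t0, t0) (0, 1) = fderiv ℝ Ft (r t0, t0) (1, 0) := by
    have e1 : fderiv ℝ Fs (r t0, t0) = (fderiv ℝ (fderiv ℝ F) (r t0, t0)).flip (1, 0) := by
      have := fderiv_clm_apply (c := fderiv ℝ F) (u := fun _ => ((1 : ℝ), (0 : ℝ)))
        (hΦd (r t0, t0)) (differentiableAt_const _)
      simpa [hFsdef] using this
    have e2 : fderiv ℝ Ft (r t0, t0) = (fderiv ℝ (fderiv ℝ F) (r t0, t0)).flip (0, 1) := by
      have := fderiv_clm_apply (c := fderiv ℝ F) (u := fun _ => ((0 : ℝ), (1 : ℝ)))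
        (hΦd (r t0, t0)) (differentiableAt_const _)
      simpa [hFtdef] using this
    rw [e1, e2]
    simp only [ContinuousLinearMap.flip_apply]
    exact (hX.contDiffAt.isSymmSndFDerivAt (by norm_num)) (0, 1) (1, 0)
  -- decomposition of ∂ₜX along the curve at time t0
  have hdecFt : ∀ s ∈ Set.Icc (0 : ℝ) S, Ft (s, t0)
      = dot2 (Ft (s, t0)) (Fs (s, t0)) • Fs (s, t0)
        + dot2 (Ft (s, t0)) (rot2 (Fs (s, t0))) • rot2 (Fs (s, t0)) := fun s hs =>
    decomp2 (hunit' s hs)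
  -- derivative of the tangential/normal components in s
  have hAd : HasDerivAt (fun s => dot2 (Ft (s, t0)) (Fs (s, t0)))
      (dot2 (fderiv ℝ Ft (r t0, t0) (1, 0)) (Fs (r t0, t0))
        + dot2 (Ft (r t0, t0)) (fderiv ℝ Fs (r t0, t0) (1, 0))) (r t0) :=
    hasDerivAt_dot2 hFt1 hu1
  have hBd : HasDerivAt (fun s => dot2 (Ft (s, t0)) (rot2 (Fs (s, t0))))
      (dot2 (fderiv ℝ Ft (r t0, t0) (1, 0)) (rot2 (Fs (r t0, t0)))
        + dot2 (Ft (r t0, t0)) (rot2 (fderiv ℝ Fs (r t0, t0) (1, 0)))) (r t0) :=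
    hasDerivAt_dot2 hFt1 (hasDerivAt_rot2 hu1)
  -- ∂ₛ∂ₜX decomposition (the key Frenet-type identity)
  have hrhs := (hAd.smul hu1).add (hBd.smul (hasDerivAt_rot2 hu1))
  have hevFt : (fun s => Ft (s, t0)) =ᶠ[nhds (r t0)]
      (fun s => dot2 (Ft (s, t0)) (Fs (s, t0)) • Fs (s, t0)
        + dot2 (Ft (s, t0)) (rot2 (Fs (s, t0))) • rot2 (Fs (s, t0))) :=
    Filter.eventuallyEq_of_mem (Ioo_mem_nhds hr0 hrS)
      (fun s hs => hdecFt s (Set.Ioo_subset_Icc_self hs))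
  have hFt1' : HasDerivAt (fun s => Ft (s, t0))
      (dot2 (Ft (r t0, t0)) (Fs (r t0, t0)) • fderiv ℝ Fs (r t0, t0) (1, 0)
        + (dot2 (fderiv ℝ Ft (r t0, t0) (1, 0)) (Fs (r t0, t0))
          + dot2 (Ft (r t0, t0)) (fderiv ℝ Fs (r t0, t0) (1, 0))) • Fs (r t0, t0)
        + (dot2 (Ft (r t0, t0)) (rot2 (Fs (r t0, t0))) • rot2 (fderiv ℝ Fs (r t0, t0) (1, 0))
          + (dot2 (fderiv ℝ Ft (r t0, t0) (1, 0)) (rot2 (Fs (r t0, t0)))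
            + dot2 (Ft (r t0, t0)) (rot2 (fderiv ℝ Fs (r t0, t0) (1, 0)))) • rot2 (Fs (r t0, t0))))
      (r t0) :=
    hrhs.congr_of_eventuallyEq hevFt
  have hFtsEq := hFt1.unique hFt1'
  -- the moving contact point
  have hcF : HasDerivAt (fun τ => F (r τ, τ)) (fderiv ℝ F (r t0, t0) (r' t0, 1)) t0 :=
    hasDerivAt_diag hrt (hFd (r t0, t0))
  have hFsdiag : HasDerivAt (fun τ => Fs (r τ, τ)) (fderiv ℝ Fs (r t0, t0) (r' t0, 1)) t0 :=
    hasDerivAt_diag hrt (hFsd (r t0, t0))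
  -- normal and tangential ∇ψ components
  have hPn : dot2 (grad2 ψ (F (r t0, t0))) (rot2 (Fs (r t0, t0))) = 0 := by
    have hp := hperp t0 ht0
    rw [hNv, hTgFs, hXF, fderiv_eq_dot2_grad2] at hp
    exact hp
  have hPt : dot2 (grad2 ψ (F (r t0, t0))) (Fs (r t0, t0)) ≠ 0 := by
    have hp := hnond t0 ht0
    rw [hTgFs, hXF, fderiv_eq_dot2_grad2] at hp
    exact hp
  -- the contact point stays on the boundary: r' = -v
  have hcd0 : fderiv ℝ F (r t0, t0) (r' t0, 1)
      = r' t0 • Fs (r t0, t0) + (dot2 (Ft (r t0, t0)) (Fs (r t0, t0)) • Fs (r t0, t0)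
        + dot2 (Ft (r t0, t0)) (rot2 (Fs (r t0, t0))) • rot2 (Fs (r t0, t0))) := by
    have e1 : Fs (r t0, t0) = fderiv ℝ F (r t0, t0) (1, 0) := rfl
    have e2 : Ft (r t0, t0) = fderiv ℝ F (r t0, t0) (0, 1) := rfl
    rw [clm_pair (fderiv ℝ F (r t0, t0)) (r' t0) 1, one_smul, ← e1, ← e2]
    exact congrArg _ (hdecFt (r t0) hrmem)
  have hed : HasDerivAt (fun τ => ψ (F (r τ, τ)))
      (fderiv ℝ ψ (F (r t0, t0)) (fderiv ℝ F (r t0, t0) (r' t0, 1))) t0 :=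
    HasFDerivAt.comp_hasDerivAt (f := fun τ => F (r τ, τ)) t0
      ((hψ.differentiable two_ne_zero (F (r t0, t0))).hasFDerivAt) hcF
  have hed0 : fderiv ℝ ψ (F (r t0, t0)) (fderiv ℝ F (r t0, t0) (r' t0, 1)) = 0 :=
    deriv_zero_of_zero_on_Icc hT ht0 hed (fun u hu => hon u hu)
  have hr'eq : r' t0 = -(dot2 (Ft (r t0, t0)) (Fs (r t0, t0))) := by
    rw [fderiv_eq_dot2_grad2, hcd0] at hed0
    have hexp : dot2 (grad2 ψ (F (r t0, t0)))
        (r' t0 • Fs (r t0, t0) + (dot2 (Ft (r t0, t0)) (Fs (r t0, t0)) • Fs (r t0, t0)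
          + dot2 (Ft (r t0, t0)) (rot2 (Fs (r t0, t0))) • rot2 (Fs (r t0, t0))))
        = (r' t0 + dot2 (Ft (r t0, t0)) (Fs (r t0, t0))) * dot2 (grad2 ψ (F (r t0, t0))) (Fs (r t0, t0))
          + dot2 (Ft (r t0, t0)) (rot2 (Fs (r t0, t0))) * dot2 (grad2 ψ (F (r t0, t0))) (rot2 (Fs (r t0, t0))) := by
      simp only [dot2, rot2, Prod.smul_fst, Prod.smul_snd, Prod.fst_add, Prod.snd_add,
        smul_eq_mul, Prod.fst_neg, Prod.snd_neg]
      ring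
    rw [hexp, hPn, mul_zero, add_zero, mul_eq_zero] at hed0
    rcases hed0 with h1 | h1
    · linarith
    · exact absurd h1 hPt
  -- the perpendicularity persists: derivative of g is zero
  have hGc : HasDerivAt (fun τ => grad2 ψ (F (r τ, τ)))
      (fderiv ℝ (grad2 ψ) (F (r t0, t0)) (fderiv ℝ F (r t0, t0) (r' t0, 1))) t0 :=
    HasFDerivAt.comp_hasDerivAt (f := fun τ => F (r τ, τ)) t0
      (((grad2_contDiff hψ).differentiable one_ne_zero (F (r t0, t0))).hasFDerivAt) hcF
  have hgd : HasDerivAt (fun τ => dot2 (grad2 ψ (F (r τ, τ))) (rot2 (Fs (r τ, τ))))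
      (dot2 (fderiv ℝ (grad2 ψ) (F (r t0, t0)) (fderiv ℝ F (r t0, t0) (r' t0, 1)))
          (rot2 (Fs (r t0, t0)))
        + dot2 (grad2 ψ (F (r t0, t0))) (rot2 (fderiv ℝ Fs (r t0, t0) (r' t0, 1)))) t0 :=
    hasDerivAt_dot2 hGc (hasDerivAt_rot2 hFsdiag)
  have hgzero : ∀ u ∈ Set.Icc (0 : ℝ) T,
      dot2 (grad2 ψ (F (r u, u))) (rot2 (Fs (r u, u))) = 0 := fun u hu => by
    have hp := hperp u hu
    rw [hNv, hTgFs, hXF, fderiv_eq_dot2_grad2] at hp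
    exact hp
  have hgd0 := deriv_zero_of_zero_on_Icc hT ht0 hgd hgzero
  -- the derivative of Fs along the contact point, decomposed
  have hFsdEq : fderiv ℝ Fs (r t0, t0) (r' t0, 1)
      = r' t0 • fderiv ℝ Fs (r t0, t0) (1, 0) + fderiv ℝ Ft (r t0, t0) (1, 0) := by
    rw [clm_pair (fderiv ℝ Fs (r t0, t0)) (r' t0) 1, one_smul, hsymm]
  -- main identity from final_algebra
  have hcdEq : fderiv ℝ F (r t0, t0) (r' t0, 1)
      = r' t0 • Fs (r t0, t0) + (dot2 (Ft (r t0, t0)) (Fs (r t0, t0)) • Fs (r t0, t0)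
        + dot2 (Ft (r t0, t0)) (rot2 (Fs (r t0, t0))) • rot2 (Fs (r t0, t0))) := hcd0
  have hFtsEq' : fderiv ℝ Ft (r t0, t0) (1, 0)
      = dot2 (Ft (r t0, t0)) (Fs (r t0, t0)) • fderiv ℝ Fs (r t0, t0) (1, 0)
        + (dot2 (fderiv ℝ Ft (r t0, t0) (1, 0)) (Fs (r t0, t0))
          + dot2 (Ft (r t0, t0)) (fderiv ℝ Fs (r t0, t0) (1, 0))) • Fs (r t0, t0)
        + (dot2 (Ft (r t0, t0)) (rot2 (Fs (r t0, t0))) • rot2 (fderiv ℝ Fs (r t0, t0) (1, 0))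
          + (dot2 (fderiv ℝ Ft (r t0, t0) (1, 0)) (rot2 (Fs (r t0, t0)))
            + dot2 (Ft (r t0, t0)) (rot2 (fderiv ℝ Fs (r t0, t0) (1, 0)))) • rot2 (Fs (r t0, t0))) :=
    hFtsEq
  have key := final_algebra (fderiv ℝ (grad2 ψ) (F (r t0, t0)))
      (grad2 ψ (F (r t0, t0))) (Fs (r t0, t0))
      (fderiv ℝ Fs (r t0, t0) (1, 0)) (fderiv ℝ Ft (r t0, t0) (1, 0))
      (fderiv ℝ F (r t0, t0) (r' t0, 1)) (fderiv ℝ Fs (r t0, t0) (r' t0, 1))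
      (dot2 (Ft (r t0, t0)) (Fs (r t0, t0)))
      (dot2 (fderiv ℝ Ft (r t0, t0) (1, 0)) (Fs (r t0, t0))
        + dot2 (Ft (r t0, t0)) (fderiv ℝ Fs (r t0, t0) (1, 0)))
      (dot2 (Ft (r t0, t0)) (rot2 (Fs (r t0, t0))))
      (dot2 (fderiv ℝ Ft (r t0, t0) (1, 0)) (rot2 (Fs (r t0, t0)))
        + dot2 (Ft (r t0, t0)) (rot2 (fderiv ℝ Fs (r t0, t0) (1, 0))))
      (κ (r t0) t0) (r' t0)
      hPn hr'eq hFssN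
      hFtsEq'
      hcdEq hFsdEq hgd0
  -- identify the pieces
  have hb0 : dot2 (Ft (r t0, t0)) (rot2 (Fs (r t0, t0))) = κ (r t0) t0 := by
    have h1 : V (r t0) t0 = dot2 (Ft (r t0, t0)) (rot2 (Fs (r t0, t0))) := by
      rw [hV, hXtFt, hNv, hTgFs]
    rw [← h1]; exact hflow (r t0) hrmem t0 ht0
  have hκs : deriv (fun σ => κ σ t0) (r t0)
      = dot2 (fderiv ℝ Ft (r t0, t0) (1, 0)) (rot2 (Fs (r t0, t0)))
        + dot2 (Ft (r t0, t0)) (rot2 (fderiv ℝ Fs (r t0, t0) (1, 0))) := by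
    have hev : (fun σ => κ σ t0) =ᶠ[nhds (r t0)]
        (fun s => dot2 (Ft (s, t0)) (rot2 (Fs (s, t0)))) :=
      Filter.eventuallyEq_of_mem (Ioo_mem_nhds hr0 hrS) (fun s hs => by
        have h1 : V s t0 = dot2 (Ft (s, t0)) (rot2 (Fs (s, t0))) := by
          rw [hV, hXtFt, hNv, hTgFs]
        rw [← (hflow s (Set.Ioo_subset_Icc_self hs) t0 ht0), h1])
    rw [hev.deriv_eq]; exact hBd.deriv
  have hHnn : fderiv ℝ (fun y => fderiv ℝ ψ y (Nv (r t0) t0)) (X (r t0) t0) (Nv (r t0) t0)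
      = dot2 (fderiv ℝ (grad2 ψ) (F (r t0, t0)) (rot2 (Fs (r t0, t0)))) (rot2 (Fs (r t0, t0))) := by
    rw [hNv, hTgFs, hXF]
    exact hess_eq hψ _ _ _
  have hht : h t0 = -(dot2 (fderiv ℝ (grad2 ψ) (F (r t0, t0)) (rot2 (Fs (r t0, t0))))
        (rot2 (Fs (r t0, t0))))
      / dot2 (grad2 ψ (F (r t0, t0))) (Fs (r t0, t0)) := by
    rw [hdef t0 ht0, hHnn, hTgFs, hXF, fderiv_eq_dot2_grad2]
  rw [hκs, hht, ← hb0]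
  field_simp [hPt]
  linarith [key]
end

section
/- Let γ¹,γ²,γ³ > 0, S, T > 0, let rⁱ : [0,T] → (0,S) be C¹, and let κⁱ, vⁱ : [0,S] × [0,T] → ℝ be C¹ functions (i = 1,2,3) satisfying: ∂_s vⁱ = (κⁱ)² on [0,S] × [0,T]; vⁱ(rⁱ(t),t) = −(rⁱ)′(t) for all t; and Σᵢ₌₁³ γⁱ vⁱ(0,t) = 0 for all t. Then d/dt [ Σᵢ₌₁³ γⁱ rⁱ(t) ] = − Σᵢ₌₁³ γⁱ ∫₀^{rⁱ(t)} κⁱ(s,t)² ds for all t. -/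
theorem stmt14 (γ : Fin 3 → ℝ) (hγ : ∀ i, 0 < γ i) (S T : ℝ) (hS : 0 < S) (hT : 0 < T)
    (r : Fin 3 → ℝ → ℝ) (hr : ∀ i, ContDiff ℝ 1 (r i))
    (hrange : ∀ i, ∀ t ∈ Set.Icc (0 : ℝ) T, r i t ∈ Set.Ioo 0 S)
    (κ v : Fin 3 → ℝ → ℝ → ℝ)
    (hκ : ∀ i, ContDiff ℝ 1 (fun q : ℝ × ℝ => κ i q.1 q.2))
    (hv : ∀ i, ContDiff ℝ 1 (fun q : ℝ × ℝ => v i q.1 q.2))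
    -- ∂ₛvⁱ = (κⁱ)²
    (hvs : ∀ i, ∀ s ∈ Set.Icc (0 : ℝ) S, ∀ t ∈ Set.Icc (0 : ℝ) T,
      deriv (fun σ => v i σ t) s = (κ i s t) ^ 2)
    -- perpendicular contact with the outer boundary
    (hbc : ∀ i, ∀ t ∈ Set.Icc (0 : ℝ) T, v i (r i t) t = -(deriv (r i) t))
    -- Young's law at the triple junction
    (hjunc : ∀ t ∈ Set.Icc (0 : ℝ) T, ∑ i, γ i * v i 0 t = 0) :
    ∀ t ∈ Set.Icc (0 : ℝ) T,
      HasDerivAt (fun τ => ∑ i, γ i * r i τ)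
        (-∑ i, γ i * ∫ s in (0 : ℝ)..(r i t), (κ i s t) ^ 2) t := by
  intro t ht
  have hmem : ∀ i, r i t ∈ Set.Ioo (0:ℝ) S := fun i => hrange i t ht
  have hftc : ∀ i, (∫ s in (0:ℝ)..(r i t), (κ i s t)^2)
      = -(deriv (r i) t) - v i 0 t := by
    intro i
    have hC : ContDiff ℝ 1 (fun σ => v i σ t) :=
      (hv i).comp (ContDiff.prodMk contDiff_id contDiff_const)
    have hint : IntervalIntegrable (fun s => (κ i s t)^2) MeasureTheory.volume 0 (r i t) :=
      (((hκ i).continuous.comp (continuous_id.prodMk continuous_const)).pow 2).intervalIntegrable _ _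
    have key := intervalIntegral.integral_eq_sub_of_hasDerivAt
      (f := fun σ => v i σ t) (f' := fun s => (κ i s t)^2) ?_ hint
    · rw [key]
      show v i (r i t) t - v i 0 t = _
      rw [hbc i t ht]
    · intro s hs
      have hsI : s ∈ Set.Icc (0:ℝ) S := by
        rcases hmem i with ⟨h1, h2⟩
        rw [Set.uIcc_of_le (le_of_lt h1)] at hs
        exact ⟨hs.1, hs.2.trans h2.le⟩
      have hd := (hC.differentiable one_ne_zero s).hasDerivAt
      rwa [hvs i s hsI t ht] at hd
  have hderiv : HasDerivAt (fun τ => ∑ i, γ i * r i τ) (∑ i, γ i * deriv (r i) t) t := by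
    apply HasDerivAt.fun_sum
    intro i _
    exact ((((hr i).differentiable one_ne_zero) t).hasDerivAt).const_mul (γ i)
  convert hderiv using 1
  have h1 : (∑ i, γ i * ∫ s in (0:ℝ)..(r i t), (κ i s t)^2)
      = ∑ i, γ i * (-(deriv (r i) t) - v i 0 t) :=
    Finset.sum_congr rfl fun i _ => by rw [hftc i]
  rw [h1]
  have hj := hjunc t ht
  have h2 : (∑ i, γ i * (-(deriv (r i) t) - v i 0 t))
      = -((∑ i, γ i * deriv (r i) t) + ∑ i, γ i * v i 0 t) := by
    rw [← Finset.sum_add_distrib, ← Finset.sum_neg_distrib]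
    exact Finset.sum_congr rfl fun i _ => by ring
  rw [h2, hj, add_zero, neg_neg]
end

section
/- Let L > 0 and let f : [0,L] → ℝ be C¹. Then ∫₀ᴸ f(s)⁴ ds ≤ 2 ( L ∫₀ᴸ f′(s)² ds + (1/L) ∫₀ᴸ f(s)² ds ) · ∫₀ᴸ f(s)² ds. -/
open Set MeasureTheory intervalIntegral

theorem stmt16 (L : ℝ) (hL : 0 < L) (f f' : ℝ → ℝ)
    -- f is C¹ on [0, L] with derivative f'
    (hf : ∀ s ∈ Set.Icc (0 : ℝ) L, HasDerivWithinAt f (f' s) (Set.Icc 0 L) s)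
    (hf' : ContinuousOn f' (Set.Icc 0 L)) :
    (∫ u in (0 : ℝ)..L, (f u) ^ 4)
      ≤ 2 * (L * (∫ u in (0 : ℝ)..L, (f' u) ^ 2) + (1 / L) * ∫ u in (0 : ℝ)..L, (f u) ^ 2)
          * ∫ u in (0 : ℝ)..L, (f u) ^ 2 := by
  have hc : ContinuousOn f (Set.Icc 0 L) := fun s hs => (hf s hs).continuousWithinAt
  have huIcc : Set.uIcc (0 : ℝ) L = Set.Icc 0 L := Set.uIcc_of_le hL.le
  have hsub : Set.uIcc (0 : ℝ) L ⊆ Set.Icc 0 L := huIcc.le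
  -- integrabilities
  have int2 : IntervalIntegrable (fun u => f u ^ 2) volume 0 L :=
    ((hc.pow 2).mono hsub).intervalIntegrable
  have int4 : IntervalIntegrable (fun u => f u ^ 4) volume 0 L :=
    ((hc.pow 4).mono hsub).intervalIntegrable
  have int2' : IntervalIntegrable (fun u => f' u ^ 2) volume 0 L :=
    ((hf'.pow 2).mono hsub).intervalIntegrable
  have hcd : ContinuousOn (fun u => 2 * (f u * f' u)) (Set.Icc 0 L) :=
    (continuousOn_const.mul (hc.mul hf'))
  have intd : IntervalIntegrable (fun u => 2 * (f u * f' u)) volume 0 L :=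
    (hcd.mono hsub).intervalIntegrable
  have inta : IntervalIntegrable (fun u => 2 * |f u * f' u|) volume 0 L :=
    ((continuousOn_const.mul (hc.mul hf').abs).mono hsub).intervalIntegrable
  set A := ∫ u in (0:ℝ)..L, f' u ^ 2 with hA
  set B := ∫ u in (0:ℝ)..L, f u ^ 2 with hB
  have hA0 : 0 ≤ A := intervalIntegral.integral_nonneg hL.le fun u _ => sq_nonneg _
  have hB0 : 0 ≤ B := intervalIntegral.integral_nonneg hL.le fun u _ => sq_nonneg _
  -- FTC for f² on subintervals of [0, L]
  have ftc : ∀ a ∈ Set.Icc (0:ℝ) L, ∀ b ∈ Set.Icc (0:ℝ) L, a ≤ b →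
      (∫ u in a..b, 2 * (f u * f' u)) = f b ^ 2 - f a ^ 2 := by
    intro a ha b hb hab
    apply intervalIntegral.integral_eq_sub_of_hasDeriv_right_of_le hab
    · exact (hc.pow 2).mono (Set.Icc_subset_Icc ha.1 hb.2)
    · intro x hx
      have hx' : x ∈ Set.Ioo (0:ℝ) L := ⟨lt_of_le_of_lt ha.1 hx.1, lt_of_lt_of_le hx.2 hb.2⟩
      have hmem : Set.Icc (0:ℝ) L ∈ nhds x := Icc_mem_nhds hx'.1 hx'.2
      have hxI : x ∈ Set.Icc (0:ℝ) L := Set.Ioo_subset_Icc_self hx'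
      have hd : HasDerivAt (fun u => f u ^ 2) (2 * (f x * f' x)) x := by
        have := ((hf x hxI).hasDerivAt hmem).fun_pow 2
        simpa [pow_one, mul_assoc] using this
      exact hd.hasDerivWithinAt
    · exact intd.mono_set (by rw [huIcc]; exact Set.uIcc_subset_Icc ha hb)
  -- pointwise AM-GM bound
  have ptw : ∀ u ∈ Set.Icc (0:ℝ) L, 2 * |f u * f' u| ≤ L * f' u ^ 2 + (1/L) * f u ^ 2 := by
    intro u _
    have h1 : |f u * f' u| = |f u| * |f' u| := abs_mul _ _
    have h2 : (0:ℝ) ≤ (|f u| - L * |f' u|)^2 := sq_nonneg _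
    have h3 : |f u|^2 = f u ^ 2 := sq_abs _
    have h4 : |f' u|^2 = f' u ^ 2 := sq_abs _
    rw [h1]
    have key : 2 * (|f u| * |f' u|) * L ≤ L^2 * f' u ^ 2 + f u ^ 2 := by
      nlinarith [sq_nonneg (|f u| - L * |f' u|), sq_abs (f u), sq_abs (f' u),
        abs_nonneg (f u), abs_nonneg (f' u), hL.le]
    rw [show L * f' u ^ 2 + 1/L * f u ^ 2 = (L^2 * f' u ^ 2 + f u ^ 2)/L by
      field_simp, le_div_iff₀ hL]
    linarith
  -- bound on ∫ 2|f f'|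
  have habs : (∫ u in (0:ℝ)..L, 2 * |f u * f' u|) ≤ L * A + (1/L) * B := by
    calc (∫ u in (0:ℝ)..L, 2 * |f u * f' u|)
        ≤ ∫ u in (0:ℝ)..L, (L * f' u ^ 2 + (1/L) * f u ^ 2) :=
          intervalIntegral.integral_mono_on hL.le inta
            ((int2'.const_mul L).add (int2.const_mul (1/L))) ptw
      _ = L * A + (1/L) * B := by
          rw [intervalIntegral.integral_add (int2'.const_mul L) (int2.const_mul (1/L)),
            intervalIntegral.integral_const_mul, intervalIntegral.integral_const_mul]
  -- minimum point
  obtain ⟨t, ht, htmin⟩ := isCompact_Icc.exists_isMinOn (⟨0, Set.left_mem_Icc.2 hL.le⟩ :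
    (Set.Icc (0:ℝ) L).Nonempty) (hc.pow 2)
  have htB : f t ^ 2 ≤ (1/L) * B := by
    have h0 : L * f t ^ 2 ≤ B := by
      have h := intervalIntegral.integral_mono_on (μ := volume) hL.le
        (_root_.intervalIntegrable_const) int2 (fun x hx => htmin hx)
      simpa using h
    have h1 : f t ^ 2 ≤ B / L := (le_div_iff₀' hL).2 h0
    have e : (1:ℝ)/L * B = B / L := by ring
    linarith
  -- uniform bound on f²
  have hsup : ∀ s ∈ Set.Icc (0:ℝ) L, f s ^ 2 ≤ 2 * (L * A + (1/L) * B) := by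
    intro s hs
    have key : f s ^ 2 ≤ f t ^ 2 + ∫ u in (0:ℝ)..L, 2 * |f u * f' u| := by
      rcases le_total t s with hts | hst
      · have := ftc t ht s hs hts
        have hle : (∫ u in t..s, 2 * (f u * f' u)) ≤ ∫ u in (0:ℝ)..L, 2 * |f u * f' u| := by
          calc (∫ u in t..s, 2 * (f u * f' u)) ≤ ∫ u in t..s, 2 * |f u * f' u| := by
                apply intervalIntegral.integral_mono_on hts
                  (intd.mono_set (by rw [huIcc]; exact Set.uIcc_subset_Icc ht hs))
                  (inta.mono_set (by rw [huIcc]; exact Set.uIcc_subset_Icc ht hs))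
                intro x _
                have := le_abs_self (f x * f' x)
                linarith
            _ ≤ ∫ u in (0:ℝ)..L, 2 * |f u * f' u| :=
                intervalIntegral.integral_mono_interval ht.1 hts hs.2
                  (Filter.Eventually.of_forall fun x => by positivity) inta
        linarith
      · have := ftc s hs t ht hst
        have hle : -(∫ u in s..t, 2 * (f u * f' u)) ≤ ∫ u in (0:ℝ)..L, 2 * |f u * f' u| := by
          have h1 : -(∫ u in s..t, 2 * (f u * f' u)) ≤ ∫ u in s..t, 2 * |f u * f' u| := by
            rw [← intervalIntegral.integral_neg]
            apply intervalIntegral.integral_mono_on hst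
              ((intd.mono_set (by rw [huIcc]; exact Set.uIcc_subset_Icc hs ht)).neg)
              (inta.mono_set (by rw [huIcc]; exact Set.uIcc_subset_Icc hs ht))
            intro x _
            have := neg_abs_le (f x * f' x)
            simp only [Pi.neg_apply]
            linarith
          have h2 : (∫ u in s..t, 2 * |f u * f' u|) ≤ ∫ u in (0:ℝ)..L, 2 * |f u * f' u| :=
            intervalIntegral.integral_mono_interval hs.1 hst ht.2
              (Filter.Eventually.of_forall fun x => by positivity) inta
          linarith
        linarith
    linarith [mul_nonneg hL.le hA0, habs, htB]
  -- conclude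
  calc (∫ u in (0:ℝ)..L, f u ^ 4)
      ≤ ∫ u in (0:ℝ)..L, 2 * (L * A + (1/L) * B) * f u ^ 2 := by
        apply intervalIntegral.integral_mono_on hL.le int4 (int2.const_mul _)
        intro x hx
        have h1 := hsup x hx
        have h2 : f x ^ 4 = f x ^ 2 * f x ^ 2 := by ring
        nlinarith [sq_nonneg (f x)]
    _ = 2 * (L * A + (1/L) * B) * B := by
        rw [intervalIntegral.integral_const_mul]
end

section
/- Let L > 0 and let f : [0,L] → ℝ be C¹. Then |f(0)|³ ≤ (9 L^{1/2} + 3/2) · ‖f‖_{L²} ‖f′‖_{L²}² + ( 3/(2L) + L^{−3/2} ) · ‖f‖_{L²}³, where ‖g‖_{L²} = (∫₀ᴸ g(s)² ds)^{1/2}. -/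
open MeasureTheory Set intervalIntegral

lemma stmt17_poly (X Y l : ℝ) (hX : 0 ≤ X) (hY : 0 ≤ Y) (hl : 0 ≤ l) :
    (X^2 + 2*X*Y*l^2)^3
      ≤ (X^3 + 3/2*X^3*l + 3/2*X*Y^2*l^3 + 9*X*Y^2*l^4)^2 := by
  have h1 : 0 ≤ 3*X^4*l*(X - Y*l)^2 :=
    mul_nonneg (mul_nonneg (by positivity) hl) (sq_nonneg _)
  have h2 : 0 ≤ X^2*Y^2*l^5*(X - 4*Y*l)^2 :=
    mul_nonneg (mul_nonneg (by positivity) (pow_nonneg hl 5)) (sq_nonneg _)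
  have h3 : 0 ≤ 9/4*X^6*l^2 := by positivity
  have h4 : 0 ≤ 21/2*X^4*Y^2*l^4 := by positivity
  have h5 : 0 ≤ 26*X^4*Y^2*l^5 := mul_nonneg (by positivity) (pow_nonneg hl 5)
  have h6 : 0 ≤ 9/4*X^2*Y^4*l^6 := by positivity
  have h7 : 0 ≤ 11*X^2*Y^4*l^7 := mul_nonneg (by positivity) (pow_nonneg hl 7)
  have h8 : 0 ≤ 81*X^2*Y^4*l^8 := by positivity
  have hid : (X^3 + 3/2*X^3*l + 3/2*X*Y^2*l^3 + 9*X*Y^2*l^4)^2 - (X^2 + 2*X*Y*l^2)^3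
      = 3*X^4*l*(X - Y*l)^2 + X^2*Y^2*l^5*(X - 4*Y*l)^2 + 9/4*X^6*l^2 + 21/2*X^4*Y^2*l^4
        + 26*X^4*Y^2*l^5 + 9/4*X^2*Y^4*l^6 + 11*X^2*Y^4*l^7 + 81*X^2*Y^4*l^8 := by ring
  linarith

lemma stmt17_div (X Y l : ℝ) (hl : l ≠ 0) :
    (X^3 + 3/2*X^3*l + 3/2*X*Y^2*l^3 + 9*X*Y^2*l^4) / l^3
      = (9*l + 3/2)*X*Y^2 + (3/(2*l^2) + 1/(l^2*l))*X^3 := by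
  field_simp
  ring

lemma stmt17_amgm (ε a b : ℝ) (hε : 0 < ε) : -(ε*a^2 + b^2/ε) ≤ 2*(a*b) := by
  have h := div_nonneg (sq_nonneg (ε*a + b)) hε.le
  have heq : (ε*a + b)^2/ε = ε*a^2 + 2*(a*b) + b^2/ε := by
    field_simp; ring
  rw [heq] at h
  linarith

theorem stmt17 (L : ℝ) (hL : 0 < L) (f f' : ℝ → ℝ)
    -- f is C¹ on [0, L] with derivative f'
    (hf : ∀ s ∈ Set.Icc (0 : ℝ) L, HasDerivWithinAt f (f' s) (Set.Icc 0 L) s)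
    (hf' : ContinuousOn f' (Set.Icc 0 L)) :
    |f 0| ^ 3
      ≤ (9 * Real.sqrt L + 3 / 2)
            * Real.sqrt (∫ u in (0 : ℝ)..L, (f u) ^ 2) * (∫ u in (0 : ℝ)..L, (f' u) ^ 2)
        + (3 / (2 * L) + 1 / (L * Real.sqrt L))
            * Real.sqrt (∫ u in (0 : ℝ)..L, (f u) ^ 2) ^ 3 := by
  have hL0 : (0:ℝ) ≤ L := hL.le
  have hcf : ContinuousOn f (Set.Icc 0 L) := fun s hs => (hf s hs).continuousWithinAt
  set I := ∫ u in (0:ℝ)..L, (f u)^2 with hIdef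
  set J := ∫ u in (0:ℝ)..L, (f' u)^2 with hJdef
  have huIcc : Set.uIcc (0:ℝ) L = Set.Icc 0 L := Set.uIcc_of_le hL0
  have hIf2 : IntervalIntegrable (fun u => (f u)^2) volume 0 L :=
    ((hcf.pow 2).mono (by rw [huIcc])).intervalIntegrable
  have hIf'2 : IntervalIntegrable (fun u => (f' u)^2) volume 0 L :=
    ((hf'.pow 2).mono (by rw [huIcc])).intervalIntegrable
  have hI0 : 0 ≤ I := intervalIntegral.integral_nonneg hL0 (fun u _ => sq_nonneg _)
  have hJ0 : 0 ≤ J := intervalIntegral.integral_nonneg hL0 (fun u _ => sq_nonneg _)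
  -- FTC: ∫₀ˢ 2 f f' = f s ^ 2 - f 0 ^ 2
  have key : ∀ s ∈ Set.Icc (0:ℝ) L,
      (∫ u in (0:ℝ)..s, 2 * f u * f' u) = f s ^ 2 - f 0 ^ 2 := by
    intro s hs
    have hsub : Set.Icc (0:ℝ) s ⊆ Set.Icc 0 L := Set.Icc_subset_Icc le_rfl hs.2
    apply intervalIntegral.integral_eq_sub_of_hasDeriv_right_of_le hs.1
    · exact (hcf.pow 2).mono hsub
    · intro x hx
      have hxI : x ∈ Set.Icc (0:ℝ) L := ⟨hx.1.le, hx.2.le.trans hs.2⟩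
      have h1 : HasDerivWithinAt (fun u => f u ^ 2) (2 * f x * f' x) (Set.Icc 0 L) x := by
        have h0 := (hf x hxI).mul (hf x hxI)
        have h2 : HasDerivWithinAt (fun u => f u * f u) (2 * f x * f' x) (Set.Icc 0 L) x := by
          convert h0 using 1 <;> (try rfl) <;> ring
        simpa only [pow_two] using h2
      exact h1.mono_of_mem_nhdsWithin
        (Icc_mem_nhdsGT_of_mem ⟨hxI.1, lt_of_lt_of_le hx.2 hs.2⟩)
    · apply ContinuousOn.intervalIntegrable
      rw [Set.uIcc_of_le hs.1]
      exact (continuousOn_const.mul (hcf.mono hsub)).mul (hf'.mono hsub)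
  -- the ε-family bound
  have hfam : ∀ ε : ℝ, 0 < ε → f 0 ^ 2 ≤ I / L + (ε * I + J / ε) := by
    intro ε hε
    have hgint : IntervalIntegrable (fun u => ε * (f u)^2 + (f' u)^2 / ε) volume 0 L :=
      ((hIf2.const_mul ε).add (hIf'2.div_const ε))
    have hptw : ∀ s ∈ Set.Icc (0:ℝ) L, f 0 ^ 2 ≤ f s ^ 2 + (ε * I + J / ε) := by
      intro s hs
      have hk := key s hs
      have hlow : -(ε * I + J / ε) ≤ ∫ u in (0:ℝ)..s, 2 * f u * f' u := by
        have hsub : Set.Icc (0:ℝ) s ⊆ Set.Icc 0 L := Set.Icc_subset_Icc le_rfl hs.2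
        have hgints : IntervalIntegrable (fun u => ε * (f u)^2 + (f' u)^2 / ε) volume 0 s :=
          hgint.mono_set (by rw [huIcc, Set.uIcc_of_le hs.1]; exact hsub)
        have hmint : IntervalIntegrable (fun u => 2 * f u * f' u) volume 0 s := by
          apply ContinuousOn.intervalIntegrable
          rw [Set.uIcc_of_le hs.1]
          exact (continuousOn_const.mul (hcf.mono hsub)).mul (hf'.mono hsub)
        have step1 : (∫ u in (0:ℝ)..s, -(ε * (f u)^2 + (f' u)^2 / ε))
            ≤ ∫ u in (0:ℝ)..s, 2 * f u * f' u := by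
          apply intervalIntegral.integral_mono_on hs.1 hgints.neg hmint
          intro x _
          simp only [Pi.neg_apply]
          have hq := stmt17_amgm ε (f x) (f' x) hε
          linarith
        have step2 : (∫ u in (0:ℝ)..s, ε * (f u)^2 + (f' u)^2 / ε)
            ≤ ∫ u in (0:ℝ)..L, ε * (f u)^2 + (f' u)^2 / ε := by
          apply intervalIntegral.integral_mono_interval le_rfl hs.1 hs.2
          · filter_upwards with x
            positivity
          · exact hgint
        have step3 : (∫ u in (0:ℝ)..L, ε * (f u)^2 + (f' u)^2 / ε) = ε * I + J / ε := by
          rw [intervalIntegral.integral_add (hIf2.const_mul ε) (hIf'2.div_const ε),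
            intervalIntegral.integral_const_mul, intervalIntegral.integral_div]
        rw [intervalIntegral.integral_neg] at step1
        linarith
      nlinarith [hk, hlow]
    have hint1 : IntervalIntegrable (fun _ : ℝ => f 0 ^ 2) volume 0 L :=
      intervalIntegrable_const
    have hint2 : IntervalIntegrable (fun s => f s ^ 2 + (ε * I + J / ε)) volume 0 L :=
      hIf2.add intervalIntegrable_const
    have hmono := intervalIntegral.integral_mono_on hL0 hint1 hint2 hptw
    rw [intervalIntegral.integral_const,
      intervalIntegral.integral_add hIf2 intervalIntegrable_const,
      intervalIntegral.integral_const] at hmono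
    simp only [smul_eq_mul, sub_zero] at hmono
    rw [div_add' _ _ _ (ne_of_gt hL), le_div_iff₀ hL]
    linarith
  -- pass to X, Y
  set X := Real.sqrt I with hXdef
  set Y := Real.sqrt J with hYdef
  have hX0 : 0 ≤ X := Real.sqrt_nonneg _
  have hY0 : 0 ≤ Y := Real.sqrt_nonneg _
  have hXI : X ^ 2 = I := Real.sq_sqrt hI0
  have hYJ : Y ^ 2 = J := Real.sq_sqrt hJ0
  have hA : f 0 ^ 2 ≤ X ^ 2 / L + 2 * X * Y := by
    apply le_of_forall_pos_le_add
    intro δ hδ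
    set c : ℝ := δ / (X + Y + 1) with hcdef
    have hc : 0 < c := div_pos hδ (by linarith)
    have hε : 0 < (Y + c) / (X + c) := div_pos (by linarith) (by linarith)
    have h := hfam _ hε
    rw [← hXI, ← hYJ] at h
    have e1 : (Y + c) / (X + c) * X ^ 2 ≤ X * (Y + c) := by
      rw [div_mul_eq_mul_div, div_le_iff₀ (by linarith)]
      nlinarith [mul_nonneg (mul_nonneg hX0 hc.le) (show (0:ℝ) ≤ Y + c by linarith)]
    have e2 : Y ^ 2 / ((Y + c) / (X + c)) ≤ Y * (X + c) := by
      rw [div_div_eq_mul_div, div_le_iff₀ (by linarith)]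
      nlinarith [mul_nonneg (mul_nonneg hY0 hc.le) (show (0:ℝ) ≤ X + c by linarith)]
    have e3 : c * (X + Y) ≤ δ := by
      rw [hcdef, div_mul_eq_mul_div, div_le_iff₀ (by linarith)]
      nlinarith
    nlinarith
  -- cube step
  have hA0 : 0 ≤ X ^ 2 / L + 2 * X * Y := by positivity
  set A := X ^ 2 / L + 2 * X * Y with hAdef
  have habs : |f 0| ≤ Real.sqrt A := by
    rw [← Real.sqrt_sq_eq_abs]
    exact Real.sqrt_le_sqrt hA
  have hcube : |f 0| ^ 3 ≤ A * Real.sqrt A := by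
    have h1 : |f 0| ^ 3 = f 0 ^ 2 * |f 0| := by
      rw [← sq_abs]; ring
    rw [h1]
    exact mul_le_mul hA habs (abs_nonneg _) hA0
  -- algebra: A * √A ≤ RHS
  set l := Real.sqrt L with hldef
  have hl : 0 < l := Real.sqrt_pos.mpr hL
  have hlL : l ^ 2 = L := Real.sq_sqrt hL0
  set B := X ^ 2 + 2 * X * Y * l ^ 2 with hBdef
  have hB0 : 0 ≤ B := by rw [hBdef, hlL]; positivity
  set R := X^3 + 3/2*X^3*l + 3/2*X*Y^2*l^3 + 9*X*Y^2*l^4 with hRdef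
  have hR0 : 0 ≤ R := by
    have r1 : 0 ≤ 3/2*X*Y^2*l^3 := by positivity
    have r2 : 0 ≤ 9*X*Y^2*l^4 := by positivity
    have r3 : 0 ≤ 3/2*X^3*l := by positivity
    have r4 : 0 ≤ X^3 := by positivity
    rw [hRdef]; linarith
  have hBR : B * Real.sqrt B ≤ R := by
    have h1 : B * Real.sqrt B = Real.sqrt (B ^ 3) := by
      rw [show B ^ 3 = B ^ 2 * B by ring, Real.sqrt_mul (sq_nonneg B),
        Real.sqrt_sq hB0]
    have h2 : Real.sqrt (B ^ 3) ≤ Real.sqrt (R ^ 2) := by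
      apply Real.sqrt_le_sqrt
      rw [hBdef, hRdef]
      exact stmt17_poly X Y l hX0 hY0 hl.le
    rw [h1]
    calc Real.sqrt (B ^ 3) ≤ Real.sqrt (R ^ 2) := h2
      _ = R := Real.sqrt_sq hR0
  have hAB : A = B / l ^ 2 := by
    rw [hAdef, hBdef, hlL]
    field_simp
  have hsqrtA : Real.sqrt A = Real.sqrt B / l := by
    rw [hAB, Real.sqrt_div hB0, Real.sqrt_sq hl.le]
  have hfin : A * Real.sqrt A ≤ R / l ^ 3 := by
    have heq : A * Real.sqrt A = B * Real.sqrt B / l ^ 3 := by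
      rw [hAB, Real.sqrt_div hB0, Real.sqrt_sq hl.le, div_mul_div_comm,
        show l^2*l = l^3 by ring]
    rw [heq]
    gcongr
  calc |f 0| ^ 3 ≤ A * Real.sqrt A := hcube
    _ ≤ R / l ^ 3 := hfin
    _ = (9 * l + 3 / 2) * X * J + (3 / (2 * L) + 1 / (L * l)) * X ^ 3 := by
        rw [← hYJ, ← hlL, hRdef, stmt17_div X Y l (ne_of_gt hl)]
end

section
/- Let θ¹,θ²,θ³ ∈ (0,π) satisfy θ¹+θ²+θ³ = 2π, and let T¹,T²,T³ be unit vectors in ℝ² with Nⁱ = R Tⁱ, such that ⟨Tⁱ,Tʲ⟩ = cos θᵏ and ⟨Tⁱ,Nʲ⟩ = −sin θᵏ for (i,j,k) = (1,2,3), (2,3,1), (3,1,2). Suppose w ∈ ℝ² and real numbers vⁱ, Vⁱ (i = 1,2,3) satisfy w = vⁱ Tⁱ + Vⁱ Nⁱ for each i = 1,2,3. Then (v¹,v²,v³)ᵀ = Q (V¹,V²,V³)ᵀ. -/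
/-- The matrix `Q` relating tangential and normal components at the triple junction. -/
noncomputable def Qmat (θ : Fin 3 → ℝ) : Matrix (Fin 3) (Fin 3) ℝ :=
  (-(1 - Real.cos (θ 0) * Real.cos (θ 1) * Real.cos (θ 2))⁻¹) •
    !![Real.cos (θ 2) * Real.cos (θ 0) * Real.sin (θ 1), Real.sin (θ 2),
         Real.cos (θ 2) * Real.sin (θ 0);
       Real.cos (θ 0) * Real.sin (θ 1), Real.cos (θ 0) * Real.cos (θ 1) * Real.sin (θ 2),
         Real.sin (θ 0);
       Real.sin (θ 1), Real.cos (θ 1) * Real.sin (θ 2),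
         Real.cos (θ 1) * Real.cos (θ 2) * Real.sin (θ 0)]

theorem stmt18 (θ : Fin 3 → ℝ) (hθ : ∀ i, θ i ∈ Set.Ioo 0 Real.pi)
    (hsum : θ 0 + θ 1 + θ 2 = 2 * Real.pi)
    (T N : Fin 3 → ℝ × ℝ)
    (hTunit : ∀ i, dot2 (T i) (T i) = 1)
    (hN : ∀ i, N i = rot2 (T i))
    (hang1 : ∀ i : Fin 3, dot2 (T i) (T (i + 1)) = Real.cos (θ (i + 2)))
    (hang2 : ∀ i : Fin 3, dot2 (T i) (N (i + 1)) = -Real.sin (θ (i + 2)))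
    (w : ℝ × ℝ) (v V : Fin 3 → ℝ)
    (hw : ∀ i, w = v i • T i + V i • N i) :
    v = (Qmat θ).mulVec V := by
  have lin : ∀ (u x y : ℝ × ℝ) (a b : ℝ),
      dot2 u (a • x + b • y) = a * dot2 u x + b * dot2 u y := by
    intro u x y a b
    simp only [dot2, Prod.fst_add, Prod.snd_add, Prod.smul_fst, Prod.smul_snd, smul_eq_mul]
    ring
  have key : ∀ i : Fin 3,
      v i = Real.cos (θ (i + 2)) * v (i + 1) - Real.sin (θ (i + 2)) * V (i + 1) := by
    intro i
    have horth : dot2 (T i) (N i) = 0 := by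
      rw [hN i]; simp [dot2, rot2]; ring
    have e : dot2 (T i) (v i • T i + V i • N i)
        = dot2 (T i) (v (i+1) • T (i+1) + V (i+1) • N (i+1)) := by
      rw [← hw i, ← hw (i+1)]
    rw [lin, lin, hTunit i, horth, hang1 i, hang2 i] at e
    linarith
  have e0 : v 0 = Real.cos (θ 2) * v 1 - Real.sin (θ 2) * V 1 := by
    have := key 0; simpa using this
  have e1 : v 1 = Real.cos (θ 0) * v 2 - Real.sin (θ 0) * V 2 := by
    have := key 1; simpa using this
  have e2 : v 2 = Real.cos (θ 1) * v 0 - Real.sin (θ 1) * V 0 := by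
    have := key 2; simpa using this
  have hs : ∀ i, 0 < Real.sin (θ i) := fun i =>
    Real.sin_pos_of_pos_of_lt_pi (hθ i).1 (hθ i).2
  have hc : ∀ i, Real.cos (θ i) ^ 2 < 1 := by
    intro i
    nlinarith [Real.sin_sq_add_cos_sq (θ i), hs i]
  have hne : 1 - Real.cos (θ 0) * Real.cos (θ 1) * Real.cos (θ 2) ≠ 0 := by
    nlinarith [hc 0, hc 1, hc 2, sq_nonneg (Real.cos (θ 0) * Real.cos (θ 1)),
      sq_nonneg (Real.cos (θ 0)), sq_nonneg (Real.cos (θ 1)), sq_nonneg (Real.cos (θ 2)),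
      sq_nonneg (Real.cos (θ 0) * Real.cos (θ 1) * Real.cos (θ 2))]
  funext i
  fin_cases i <;>
    simp only [Qmat, Matrix.mulVec, dotProduct, Fin.sum_univ_three, Matrix.smul_apply,
      Matrix.cons_val_zero, Matrix.cons_val_one, Matrix.head_cons,
      Matrix.empty_val', Matrix.cons_val_fin_one, Matrix.head_fin_const, Matrix.cons_val_two,
      Matrix.tail_cons, smul_eq_mul, Fin.isValue, Matrix.of_apply] <;>
    simp only [show (⟨2, by omega⟩ : Fin 3) = (2 : Fin 3) from rfl,
      show (⟨1, by omega⟩ : Fin 3) = (1 : Fin 3) from rfl,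
      show (⟨0, by omega⟩ : Fin 3) = (0 : Fin 3) from rfl, Matrix.cons_val_zero, Matrix.cons_val_one,
      Matrix.cons_val_two, Matrix.head_cons, Matrix.tail_cons, Matrix.cons_val] <;>
    field_simp
  · linear_combination
      (e0 + Real.cos (θ 2) * e1 + Real.cos (θ 2) * Real.cos (θ 0) * e2)
  · linear_combination
      (e1 + Real.cos (θ 0) * e2 + Real.cos (θ 0) * Real.cos (θ 1) * e0)
  · linear_combination
      (e2 + Real.cos (θ 1) * e0 + Real.cos (θ 1) * Real.cos (θ 2) * e1)
end
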